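/- arXiv:2409.07666 — 6 statements merged into one kernel-verified Lean document; each statement's English description precedes it below -/
import Mathlib

section
/- (Lemma 1, second inclusion) Every element of 𝒦_ext is a stabilizing distributed gain: if Z ∈ 𝒮, Q ≻ 0, and G = blkdiag(G_1,…,G_N) is invertible and satisfies [[G+Gᵀ−Q, (AG+BZ)ᵀ], [AG+BZ, Q]] ≻ 0, then K = ZG⁻¹ satisfies K ∈ 𝒮 and there exists a positive definite matrix P with (A+BK)ᵀP(A+BK) − P ≺ 0. -/
open Matrix

/-- Block index set: `Idx dims` indexes the rows/columns of an `n × n` matrix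
partitioned into blocks of sizes `dims 0, …, dims (N-1)`. -/
abbrev Idx {N : ℕ} (dims : Fin N → ℕ) : Type := Σ i : Fin N, Fin (dims i)

/-- The sparsity set `𝒮`: the `(i,j)` block vanishes whenever `i ≠ j` and `(i,j) ∉ ℰ`. -/
def Sparse {N : ℕ} (Gr : SimpleGraph (Fin N)) (dims : Fin N → ℕ)
    (K : Matrix (Idx dims) (Idx dims) ℝ) : Prop :=
  ∀ i j : Fin N, i ≠ j → ¬ Gr.Adj i j →
    ∀ (a : Fin (dims i)) (b : Fin (dims j)), K ⟨i, a⟩ ⟨j, b⟩ = 0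

/-- Block-diagonal (w.r.t. the partition `dims`): off-diagonal blocks vanish. -/
def BlkDiag {N : ℕ} (dims : Fin N → ℕ) (K : Matrix (Idx dims) (Idx dims) ℝ) : Prop :=
  ∀ p r : Idx dims, p.1 ≠ r.1 → K p r = 0

/-- `X ≺ 0`: negative definiteness. -/
def NegDef {m : Type*} [Fintype m] (X : Matrix m m ℝ) : Prop := (-X).PosDef

/-- Conjugation by an invertible matrix preserves positive definiteness. -/
lemma posDef_conj_tmm {n : Type*} [Fintype n] [DecidableEq n] {M Nm : Matrix n n ℝ}
    (hM : M.PosDef) (hN : IsUnit Nm) : (Nmᵀ * M * Nm).PosDef := by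
  have h1 : (Nmᵀ * M * Nm).IsHermitian := by
    have := (hM.posSemidef.conjTranspose_mul_mul_same Nm).1
    rwa [conjTranspose_eq_transpose_of_trivial] at this
  refine Matrix.PosDef.of_dotProduct_mulVec_pos h1 (fun x hx => ?_)
  have hinj : Function.Injective Nm.mulVec := mulVec_injective_iff_isUnit.mpr hN
  have hx' : Nm *ᵥ x ≠ 0 := by
    intro h
    exact hx (hinj (by simpa using h))
  have h2 := hM.dotProduct_mulVec_pos hx'
  calc (0:ℝ) < star (Nm *ᵥ x) ⬝ᵥ M *ᵥ (Nm *ᵥ x) := h2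
    _ = star x ⬝ᵥ (Nmᵀ * M * Nm) *ᵥ x := by
        rw [star_trivial, star_trivial, Matrix.mul_assoc, ← mulVec_mulVec,
          dotProduct_mulVec x, vecMul_transpose, mulVec_mulVec]

/-- The inverse of an invertible block-diagonal matrix is block-diagonal. -/
lemma blkDiag_inv {N : ℕ} {dims : Fin N → ℕ} {Gm : Matrix (Idx dims) (Idx dims) ℝ}
    (hGbd : BlkDiag dims Gm) (hGu : IsUnit Gm) : BlkDiag dims Gm⁻¹ := by
  classical
  have hdet : IsUnit Gm.det := (Matrix.isUnit_iff_isUnit_det Gm).mp hGu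
  have hinv : Gm⁻¹ * Gm = 1 := Matrix.nonsing_inv_mul Gm hdet
  set d : ∀ i : Fin N, Matrix (Fin (dims i)) (Fin (dims i)) ℝ :=
    fun i => fun a b => Gm ⟨i, a⟩ ⟨i, b⟩ with hd
  set e : ∀ i : Fin N, Matrix (Fin (dims i)) (Fin (dims i)) ℝ :=
    fun i => fun a b => Gm⁻¹ ⟨i, a⟩ ⟨i, b⟩ with he
  have hGm : Gm = blockDiagonal' d := by
    ext ⟨i, a⟩ ⟨j, b⟩
    by_cases h : i = j
    · subst h; rw [blockDiagonal'_apply_eq]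
    · rw [blockDiagonal'_apply_ne _ _ _ h]
      exact hGbd ⟨i, a⟩ ⟨j, b⟩ h
  have hed : ∀ i, e i * d i = 1 := by
    intro i
    ext a b
    have key : (Gm⁻¹ * Gm) ⟨i, a⟩ ⟨i, b⟩ = (1 : Matrix (Idx dims) (Idx dims) ℝ) ⟨i, a⟩ ⟨i, b⟩ := by
      rw [hinv]
    rw [Matrix.mul_apply] at key
    rw [Matrix.mul_apply]
    have hsum : ∑ p : Idx dims, Gm⁻¹ ⟨i, a⟩ p * Gm p ⟨i, b⟩
        = ∑ c : Fin (dims i), Gm⁻¹ ⟨i, a⟩ ⟨i, c⟩ * Gm ⟨i, c⟩ ⟨i, b⟩ := by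
      rw [← Finset.univ_sigma_univ, Finset.sum_sigma]
      rw [Finset.sum_eq_single i]
      · intro k _ hk
        apply Finset.sum_eq_zero
        intro c _
        rw [hGbd ⟨k, c⟩ ⟨i, b⟩ hk, mul_zero]
      · intro h; exact absurd (Finset.mem_univ i) h
    rw [hsum] at key
    rw [key]
    by_cases hab : a = b
    · subst hab; simp [Matrix.one_apply]
    · rw [Matrix.one_apply_ne hab, Matrix.one_apply_ne]
      simp [hab]
  have hGinv : Gm⁻¹ = blockDiagonal' e := by
    apply Matrix.inv_eq_left_inv
    rw [hGm, ← blockDiagonal'_mul]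
    have : (fun k => e k * d k) = fun _ => 1 := funext hed
    rw [this]
    exact blockDiagonal'_one
  intro p r h
  obtain ⟨i, a⟩ := p
  obtain ⟨j, b⟩ := r
  rw [hGinv]
  exact blockDiagonal'_apply_ne e a b h

set_option maxHeartbeats 2000000 in
/-- Lemma 1, second inclusion: `𝒦_ext ⊆ 𝒦_all`. -/
theorem stmt1 {N : ℕ} (Gr : SimpleGraph (Fin N)) (dims : Fin N → ℕ)
    (A B Z Qm Gm : Matrix (Idx dims) (Idx dims) ℝ)
    (hZ : Sparse Gr dims Z) (hQpd : Qm.PosDef) (hGbd : BlkDiag dims Gm) (hGu : IsUnit Gm)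
    (hLMI : (fromBlocks (Gm + Gmᵀ - Qm) (A * Gm + B * Z)ᵀ (A * Gm + B * Z) Qm).PosDef) :
    Sparse Gr dims (Z * Gm⁻¹) ∧
      ∃ P : Matrix (Idx dims) (Idx dims) ℝ, P.PosDef ∧
        NegDef ((A + B * (Z * Gm⁻¹))ᵀ * P * (A + B * (Z * Gm⁻¹)) - P) := by
  classical
  have hGibd : BlkDiag dims Gm⁻¹ := blkDiag_inv hGbd hGu
  constructor
  · -- sparsity
    intro i j hij hadj a b
    rw [Matrix.mul_apply]
    apply Finset.sum_eq_zero
    intro p _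
    obtain ⟨k, c⟩ := p
    by_cases hk : k = j
    · subst hk
      rw [hZ i k hij hadj a c, zero_mul]
    · rw [hGibd ⟨k, c⟩ ⟨j, b⟩ hk, mul_zero]
  · -- stabilizing
    set M : Matrix (Idx dims) (Idx dims) ℝ := A * Gm + B * Z with hM
    haveI : Invertible Qm := hQpd.isUnit.invertible
    have hQdet : IsUnit Qm.det := (Matrix.isUnit_iff_isUnit_det Qm).mp hQpd.isUnit
    have hGdet : IsUnit Gm.det := (Matrix.isUnit_iff_isUnit_det Gm).mp hGu
    have hMH : (Mᵀ)ᴴ = M := by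
      rw [conjTranspose_eq_transpose_of_trivial, transpose_transpose]
    -- Schur complement, semidefinite version
    have hSpsd : ((Gm + Gmᵀ - Qm) - Mᵀ * Qm⁻¹ * M).PosSemidef := by
      have hblk : fromBlocks (Gm + Gmᵀ - Qm) Mᵀ M Qm
          = fromBlocks (Gm + Gmᵀ - Qm) Mᵀ (Mᵀ)ᴴ Qm := by rw [hMH]
      have h0 := hLMI.posSemidef
      rw [hblk] at h0
      have := (Matrix.PosDef.fromBlocks₂₂ (Gm + Gmᵀ - Qm) Mᵀ hQpd).mp h0
      rwa [hMH] at this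
    -- Schur complement, strict version
    have hS : ((Gm + Gmᵀ - Qm) - Mᵀ * Qm⁻¹ * M).PosDef := by
      refine Matrix.PosDef.of_dotProduct_mulVec_pos hSpsd.1 (fun x hx => ?_)
      set y : Idx dims → ℝ := -((Qm⁻¹ * (Mᵀ)ᴴ) *ᵥ x) with hy
      have key := Matrix.schur_complement_eq₂₂ (Gm + Gmᵀ - Qm) Mᵀ x y hQpd.1
      have hy0 : (Qm⁻¹ * (Mᵀ)ᴴ) *ᵥ x + y = 0 := by simp [hy]
      rw [hy0] at key
      simp only [star_zero, zero_vecMul, zero_dotProduct, zero_add] at key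
      have hv : (Sum.elim x y) ≠ 0 := by
        intro h
        apply hx
        funext a
        exact congrFun h (Sum.inl a)
      have hpos := hLMI.dotProduct_mulVec_pos hv
      rw [dotProduct_mulVec] at hpos
      rw [show fromBlocks (Gm + Gmᵀ - Qm) Mᵀ M Qm
          = fromBlocks (Gm + Gmᵀ - Qm) Mᵀ (Mᵀ)ᴴ Qm from by rw [hMH]] at hpos
      rw [key, hMH] at hpos
      rwa [dotProduct_mulVec]
    -- completing the square: Gᵀ Q⁻¹ G - (G + Gᵀ - Q) ⪰ 0
    have hQT : Qmᵀ = Qm := by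
      rw [← conjTranspose_eq_transpose_of_trivial]
      exact hQpd.1
    have hQiQ : Qm⁻¹ * Qm = 1 := Matrix.nonsing_inv_mul Qm hQdet
    have hQQi : Qm * Qm⁻¹ = 1 := Matrix.mul_nonsing_inv Qm hQdet
    have hTpsd : (Gmᵀ * Qm⁻¹ * Gm - (Gm + Gmᵀ - Qm)).PosSemidef := by
      have h1 := (hQpd.inv.posSemidef).conjTranspose_mul_mul_same (Gm - Qm)
      rw [conjTranspose_eq_transpose_of_trivial] at h1
      have h2 : (Gm - Qm)ᵀ * Qm⁻¹ * (Gm - Qm) = Gmᵀ * Qm⁻¹ * Gm - (Gm + Gmᵀ - Qm) := by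
        rw [transpose_sub, hQT, Matrix.sub_mul, Matrix.sub_mul, Matrix.mul_sub, Matrix.mul_sub,
          hQQi, Matrix.mul_assoc Gmᵀ Qm⁻¹ Qm, hQiQ]
        simp only [Matrix.mul_one, Matrix.one_mul]
        abel
      rwa [h2] at h1
    -- sum: Gᵀ Q⁻¹ G - Mᵀ Q⁻¹ M ≻ 0
    have hU : (Gmᵀ * Qm⁻¹ * Gm - Mᵀ * Qm⁻¹ * M).PosDef := by
      have := Matrix.PosDef.posSemidef_add hTpsd hS
      rwa [sub_add_sub_cancel] at this
    -- conjugate by G⁻¹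
    have hGiu : IsUnit Gm⁻¹ := Matrix.isUnit_nonsing_inv_iff.mpr hGu
    have hV := posDef_conj_tmm hU hGiu
    have hGG : (Gm⁻¹)ᵀ * Gmᵀ = 1 := by
      rw [← transpose_mul, Matrix.mul_nonsing_inv Gm hGdet, transpose_one]
    have hMG : M * Gm⁻¹ = A + B * (Z * Gm⁻¹) := by
      rw [hM, Matrix.add_mul, Matrix.mul_assoc A Gm Gm⁻¹, Matrix.mul_nonsing_inv Gm hGdet,
        Matrix.mul_one, Matrix.mul_assoc]
    have hVeq : (Gm⁻¹)ᵀ * (Gmᵀ * Qm⁻¹ * Gm - Mᵀ * Qm⁻¹ * M) * Gm⁻¹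
        = Qm⁻¹ - (A + B * (Z * Gm⁻¹))ᵀ * Qm⁻¹ * (A + B * (Z * Gm⁻¹)) := by
      rw [Matrix.mul_sub, Matrix.sub_mul, ← hMG]
      congr 1
      · rw [← Matrix.mul_assoc, ← Matrix.mul_assoc, hGG, Matrix.one_mul,
          Matrix.mul_assoc, Matrix.mul_nonsing_inv Gm hGdet, Matrix.mul_one]
      · rw [transpose_mul]
        rw [← Matrix.mul_assoc, ← Matrix.mul_assoc, ← Matrix.mul_assoc]
    rw [hVeq] at hV
    refine ⟨Qm⁻¹, hQpd.inv, ?_⟩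
    rw [NegDef, neg_sub]
    exact hV
end

section
/- (Lemma 2, chordal converse; Agler decomposition) Suppose 𝒢 is chordal (every cycle of length four or more has a chord) and C_1,…,C_q is the list of all maximal cliques of 𝒢. Then a symmetric matrix P satisfies P ∈ 𝒮 and P ≻ 0 if and only if there exists P̃ = blkdiag(P̃_1,…,P̃_q) ≻ 0 with P̃_k ∈ ℝ^{n_{C_k}×n_{C_k}} such that P = EᵀP̃E = Σ_{k=1}^q E_{C_k}ᵀ P̃_k E_{C_k}. -/
open Matrix

/-- Row index set of the stacked clique selector matrix `E`. -/
abbrev CIdx {N q : ℕ} (dims : Fin N → ℕ) (C : Fin q → Finset (Fin N)) : Type :=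
  Σ k : Fin q, Σ j : {x : Fin N // x ∈ C k}, Fin (dims j.1)

/-- The stacked selector matrix `E = [E_{C_1}ᵀ, …, E_{C_q}ᵀ]ᵀ`. -/
def Emat {N q : ℕ} (dims : Fin N → ℕ) (C : Fin q → Finset (Fin N)) :
    Matrix (CIdx dims C) (Idx dims) ℝ :=
  fun p i => if (⟨p.2.1.1, p.2.2⟩ : Idx dims) = i then 1 else 0

/-- Clique-block-diagonal matrices `blkdiag(X_1, …, X_q)` with `X_k ∈ ℝ^{n_{C_k} × n_{C_k}}`. -/
def CliqueBlkDiag {N q : ℕ} (dims : Fin N → ℕ) (C : Fin q → Finset (Fin N))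
    (X : Matrix (CIdx dims C) (CIdx dims C) ℝ) : Prop :=
  ∀ p r : CIdx dims C, p.1 ≠ r.1 → X p r = 0

/-- `C_1, …, C_q` are cliques of the graph. -/
def IsCliques {N q : ℕ} (Gr : SimpleGraph (Fin N)) (C : Fin q → Finset (Fin N)) : Prop :=
  ∀ k : Fin q, ∀ i ∈ C k, ∀ j ∈ C k, i ≠ j → Gr.Adj i j

/-- Assumption 1: every node is covered, and two distinct nodes share a clique iff adjacent. -/
def Assumption1 {N q : ℕ} (Gr : SimpleGraph (Fin N)) (C : Fin q → Finset (Fin N)) : Prop :=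
  (∀ i : Fin N, ∃ k, i ∈ C k) ∧
    ∀ i j : Fin N, i ≠ j → ((∃ k, i ∈ C k ∧ j ∈ C k) ↔ Gr.Adj i j)

/-- `N₀ = I − E (EᵀE)⁻¹ Eᵀ`. -/
noncomputable def N0 {N q : ℕ} (dims : Fin N → ℕ) (C : Fin q → Finset (Fin N)) :
    Matrix (CIdx dims C) (CIdx dims C) ℝ :=
  1 - Emat dims C * ((Emat dims C)ᵀ * Emat dims C)⁻¹ * (Emat dims C)ᵀ

/-- `M = blkdiag(N₀, N₀)`. -/
noncomputable def Mmat {N q : ℕ} (dims : Fin N → ℕ) (C : Fin q → Finset (Fin N)) :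
    Matrix (CIdx dims C ⊕ CIdx dims C) (CIdx dims C ⊕ CIdx dims C) ℝ :=
  fromBlocks (N0 dims C) 0 0 (N0 dims C)

/-- Dilation `X̃ = E X (EᵀE)⁻¹ Eᵀ`. -/
noncomputable def tilde {N q : ℕ} (dims : Fin N → ℕ) (C : Fin q → Finset (Fin N))
    (X : Matrix (Idx dims) (Idx dims) ℝ) : Matrix (CIdx dims C) (CIdx dims C) ℝ :=
  Emat dims C * X * ((Emat dims C)ᵀ * Emat dims C)⁻¹ * (Emat dims C)ᵀ

/-- The gain `(EᵀE)⁻¹ Eᵀ Z̃ G̃⁻¹ E`. -/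
noncomputable def gainCl {N q : ℕ} (dims : Fin N → ℕ) (C : Fin q → Finset (Fin N))
    (Zt Gt : Matrix (CIdx dims C) (CIdx dims C) ℝ) : Matrix (Idx dims) (Idx dims) ℝ :=
  ((Emat dims C)ᵀ * Emat dims C)⁻¹ * (Emat dims C)ᵀ * Zt * Gt⁻¹ * Emat dims C

/-- Chordality: every cycle of length at least four has a chord. -/
def IsChordal {N : ℕ} (Gr : SimpleGraph (Fin N)) : Prop :=
  ∀ (v : Fin N) (w : Gr.Walk v v), w.IsCycle → 4 ≤ w.length →
    ∃ a b : Fin N, a ∈ w.support ∧ b ∈ w.support ∧ Gr.Adj a b ∧ s(a, b) ∉ w.edges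

/-- `C_1, …, C_q` is the list of all maximal cliques of the graph. -/
def ListsMaximalCliques {N q : ℕ} (Gr : SimpleGraph (Fin N))
    (C : Fin q → Finset (Fin N)) : Prop :=
  (∀ k : Fin q, Gr.IsClique (C k : Set (Fin N)) ∧
    ∀ s : Finset (Fin N), Gr.IsClique (s : Set (Fin N)) → C k ⊆ s → s = C k) ∧
  ∀ s : Finset (Fin N), Gr.IsClique (s : Set (Fin N)) →
    (∀ t : Finset (Fin N), Gr.IsClique (t : Set (Fin N)) → s ⊆ t → t = s) →
    ∃ k : Fin q, C k = s


open SimpleGraph Finset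
set_option linter.unusedSectionVars false
set_option linter.unusedVariables false

section Graph
variable {V : Type*} [Fintype V] [DecidableEq V] {G : SimpleGraph V}

/-- Reachability within a vertex set `S`. -/
def Rch (G : SimpleGraph V) (S : Finset V) (x y : V) : Prop :=
  Relation.ReflTransGen (fun a b => a ∈ S ∧ b ∈ S ∧ G.Adj a b) x y

lemma rch_refl {S : Finset V} {x : V} : Rch G S x x := Relation.ReflTransGen.refl

lemma rch_symm {S : Finset V} {x y : V} (h : Rch G S x y) : Rch G S y x :=
  by
    induction h with
    | refl => exact Relation.ReflTransGen.refl
    | tail _ hs ih => exact Relation.ReflTransGen.head ⟨hs.2.1, hs.1, hs.2.2.symm⟩ ih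

lemma rch_trans {S : Finset V} {x y z : V} (h : Rch G S x y) (h' : Rch G S y z) :
    Rch G S x z := h.trans h'

lemma rch_mem {S : Finset V} {x y : V} (h : Rch G S x y) : x = y ∨ (x ∈ S ∧ y ∈ S) := by
  induction h using Relation.ReflTransGen.head_induction_on with
  | refl => exact Or.inl rfl
  | head hac _ ih =>
    refine Or.inr ⟨hac.1, ?_⟩
    rcases ih with rfl | h
    · exact hac.2.1
    · exact h.2

lemma rch_cases_head {S : Finset V} {x y : V} (h : Rch G S x y) :
    x = y ∨ ∃ c, (x ∈ S ∧ c ∈ S ∧ G.Adj x c) ∧ Rch G S c y :=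
  Relation.ReflTransGen.cases_head h

lemma rch_insert {t : V} {U : Finset V} (ht : t ∉ U) {x y : V} (hx : x ≠ t)
    (h : Rch G (insert t U) x y) :
    (Rch G U x y) ∨ ∃ u, u ∈ U ∧ Rch G U x u ∧ G.Adj u t := by
  induction h with
  | refl => exact Or.inl rch_refl
  | @tail b c hxb hstep ih =>
    rcases ih with hub | found
    · have hbt : b ≠ t := by
        rintro rfl
        rcases rch_mem hub with rfl | hm
        · exact hx rfl
        · exact ht hm.2
      have hbU : b ∈ U := (Finset.mem_insert.mp hstep.1).resolve_left hbt
      by_cases hyt : c = t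
      · exact Or.inr ⟨b, hbU, hub, hyt ▸ hstep.2.2⟩
      · have hcU : c ∈ U := (Finset.mem_insert.mp hstep.2.1).resolve_left hyt
        exact Or.inl (hub.tail ⟨hbU, hcU, hstep.2.2⟩)
    · exact Or.inr found

lemma rch_of_walk {S : Finset V} {x y : V} (w : G.Walk x y)
    (hw : ∀ z ∈ w.support, z ∈ S) : Rch G S x y := by
  induction w with
  | nil => exact rch_refl
  | cons h p ih =>
    refine Relation.ReflTransGen.head ⟨hw _ (Walk.start_mem_support _), hw _ ?_, h⟩
      (ih fun z hz => hw z ?_)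
    · rw [Walk.support_cons]
      exact List.mem_cons_of_mem _ (Walk.start_mem_support _)
    · rw [Walk.support_cons]
      exact List.mem_cons_of_mem _ hz

lemma walk_of_rch {S : Finset V} {x y : V} (h : Rch G S x y) (hx : x ∈ S) :
    ∃ w : G.Walk x y, ∀ z ∈ w.support, z ∈ S := by
  induction h with
  | refl => exact ⟨Walk.nil, by simpa using hx⟩
  | @tail b c _ hstep ih =>
    obtain ⟨w, hw⟩ := ih
    refine ⟨w.concat hstep.2.2, fun z hz => ?_⟩
    rw [Walk.support_concat, List.mem_append] at hz
    rcases hz with hz | hz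
    · exact hw z hz
    · exact (List.mem_singleton.mp hz) ▸ hstep.2.1

lemma two_le_length {x y : V} (w : G.Walk x y) (hxy : x ≠ y) (h1 : s(x, y) ∉ w.edges) :
    2 ≤ w.length := by
  cases w with
  | nil => exact absurd rfl hxy
  | cons h p =>
    cases p with
    | nil => simp at h1
    | cons h2 p2 => simp [Walk.length_cons]

lemma shortcut {x y u v : V} (w : G.Walk x y) (hu : u ∈ w.support) (hv : v ∈ w.support)
    (hadj : G.Adj u v) (he : s(u, v) ∉ w.edges) :
    ∃ w' : G.Walk x y, w'.length < w.length ∧ ∀ z ∈ w'.support, z ∈ w.support := by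
  have hsplit := w.take_spec hu
  have hv' : v ∈ (w.takeUntil u hu).support ∨ v ∈ (w.dropUntil u hu).support := by
    rw [← Walk.mem_support_append_iff, hsplit]; exact hv
  have hlw : w.length = (w.takeUntil u hu).length + (w.dropUntil u hu).length := by
    conv_lhs => rw [← hsplit]
    rw [Walk.length_append]
  rcases hv' with hvt | hvd
  · refine ⟨((w.takeUntil u hu).takeUntil v hvt).append
      (Walk.cons hadj.symm (w.dropUntil u hu)), ?_, ?_⟩
    · have h2 : 2 ≤ ((w.takeUntil u hu).dropUntil v hvt).length := by
        refine two_le_length _ (fun h => G.irrefl (h ▸ hadj)) (fun hmem => he ?_)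
        rw [Sym2.eq_swap]
        exact (w.edges_takeUntil_subset hu) ((w.takeUntil u hu).edges_dropUntil_subset hvt hmem)
      have hlt : (w.takeUntil u hu).length
          = ((w.takeUntil u hu).takeUntil v hvt).length
            + ((w.takeUntil u hu).dropUntil v hvt).length := by
        conv_lhs => rw [← (w.takeUntil u hu).take_spec hvt]
        rw [Walk.length_append]
      rw [Walk.length_append, Walk.length_cons]
      omega
    · intro z hz
      rw [Walk.mem_support_append_iff] at hz
      rcases hz with hz | hz
      · exact w.support_takeUntil_subset hu
          ((w.takeUntil u hu).support_takeUntil_subset hvt hz)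
      · rw [Walk.support_cons] at hz
        rcases List.mem_cons.mp hz with rfl | hz
        · exact hv
        · exact w.support_dropUntil_subset hu hz
  · refine ⟨(w.takeUntil u hu).append
      (Walk.cons hadj ((w.dropUntil u hu).dropUntil v hvd)), ?_, ?_⟩
    · have h2 : 2 ≤ ((w.dropUntil u hu).takeUntil v hvd).length := by
        refine two_le_length _ hadj.ne (fun hmem => he ?_)
        exact (w.edges_dropUntil_subset hu) ((w.dropUntil u hu).edges_takeUntil_subset hvd hmem)
      have hld : (w.dropUntil u hu).length
          = ((w.dropUntil u hu).takeUntil v hvd).length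
            + ((w.dropUntil u hu).dropUntil v hvd).length := by
        conv_lhs => rw [← (w.dropUntil u hu).take_spec hvd]
        rw [Walk.length_append]
      rw [Walk.length_append, Walk.length_cons]
      omega
    · intro z hz
      rw [Walk.mem_support_append_iff] at hz
      rcases hz with hz | hz
      · exact w.support_takeUntil_subset hu hz
      · rw [Walk.support_cons] at hz
        rcases List.mem_cons.mp hz with rfl | hz
        · exact hu
        · exact w.support_dropUntil_subset hu
            ((w.dropUntil u hu).support_dropUntil_subset hvd hz)

lemma exists_min_walk {x y : V} (Pr : G.Walk x y → Prop) (h : ∃ w, Pr w) :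
    ∃ w, Pr w ∧ ∀ w', Pr w' → w.length ≤ w'.length := by
  classical
  have hex : ∃ n, ∃ w : G.Walk x y, Pr w ∧ w.length = n := by
    obtain ⟨w0, h0⟩ := h; exact ⟨w0.length, w0, h0, rfl⟩
  obtain ⟨w, hw, hlen⟩ := Nat.find_spec hex
  exact ⟨w, hw, fun w' hw' => hlen ▸ Nat.find_min' hex ⟨w', hw', rfl⟩⟩

lemma min_path_chord {x y : V} {A : Set V} {w : G.Walk x y}
    (hval : ∀ z ∈ w.support, z ∈ A) (hpath : w.IsPath)
    (hmin : ∀ w' : G.Walk x y, ((∀ z ∈ w'.support, z ∈ A) ∧ w'.IsPath) → w.length ≤ w'.length)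
    {u v : V} (hu : u ∈ w.support) (hv : v ∈ w.support) (hadj : G.Adj u v) :
    s(u, v) ∈ w.edges := by
  by_contra he
  obtain ⟨w', hlt, hsub⟩ := shortcut w hu hv hadj he
  have h1 := hmin w'.bypass
    ⟨fun z hz => hval z (hsub z (w'.support_bypass_subset hz)), w'.bypass_isPath⟩
  have h2 := w'.length_bypass_le
  omega

end Graph

open SimpleGraph Finset
set_option linter.unusedSectionVars false

section Graph2
variable {V : Type*} [Fintype V] [DecidableEq V] {G : SimpleGraph V}

lemma minsep_clique
    (hch : ∀ (v : V) (w : G.Walk v v), w.IsCycle → 4 ≤ w.length →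
      ∃ a b : V, a ∈ w.support ∧ b ∈ w.support ∧ G.Adj a b ∧ s(a, b) ∉ w.edges)
    {S T : Finset V} {a b x y : V}
    (hsep : ¬ Rch G (S \ T) a b)
    (hnbrA : ∀ t ∈ T, ∃ u, u ∈ S \ T ∧ Rch G (S \ T) a u ∧ G.Adj u t)
    (hnbrB : ∀ t ∈ T, ∃ u, u ∈ S \ T ∧ Rch G (S \ T) b u ∧ G.Adj u t)
    (hx : x ∈ T) (hy : y ∈ T) (hxy : x ≠ y) : G.Adj x y := by
  by_contra hnadj
  set U := S \ T with hU
  have hdisj : ∀ z, Rch G U a z → Rch G U b z → False :=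
    fun z h1 h2 => hsep (rch_trans h1 (rch_symm h2))
  have side : ∀ c : V, (∀ t ∈ T, ∃ u, u ∈ U ∧ Rch G U c u ∧ G.Adj u t) →
      ∃ p : G.Walk x y, (∀ z ∈ p.support, z = x ∨ z = y ∨ (z ∈ U ∧ Rch G U c z)) ∧ p.IsPath ∧
        ∀ p' : G.Walk x y,
          ((∀ z ∈ p'.support, z = x ∨ z = y ∨ (z ∈ U ∧ Rch G U c z)) ∧ p'.IsPath) →
          p.length ≤ p'.length := by
    intro c hnbr
    obtain ⟨ux, huxU, huxR, huxA⟩ := hnbr x hx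
    obtain ⟨uy, huyU, huyR, huyA⟩ := hnbr y hy
    obtain ⟨m, hm⟩ := walk_of_rch ((rch_symm huxR).trans huyR) huxU
    have hval0 : ∀ z ∈ (Walk.cons huxA.symm (m.concat huyA)).support,
        z = x ∨ z = y ∨ (z ∈ U ∧ Rch G U c z) := by
      intro z hz
      rw [Walk.support_cons] at hz
      rcases List.mem_cons.mp hz with rfl | hz
      · exact Or.inl rfl
      · rw [Walk.support_concat, List.mem_append] at hz
        rcases hz with hz | hz
        · exact Or.inr (Or.inr ⟨hm z hz, rch_trans huxR (rch_of_walk (m.takeUntil z hz)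
            (fun w hw => hm w (m.support_takeUntil_subset hz hw)))⟩)
        · exact Or.inr (Or.inl (List.mem_singleton.mp hz))
    obtain ⟨p, hp, hmin⟩ := exists_min_walk
      (fun p : G.Walk x y =>
        (∀ z ∈ p.support, z = x ∨ z = y ∨ (z ∈ U ∧ Rch G U c z)) ∧ p.IsPath)
      ⟨(Walk.cons huxA.symm (m.concat huyA)).bypass,
        fun z hz => hval0 z (Walk.support_bypass_subset _ hz), Walk.bypass_isPath _⟩
    exact ⟨p, hp.1, hp.2, hmin⟩
  obtain ⟨pA, hvalA, hpathA, hminA⟩ := side a hnbrA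
  obtain ⟨pB0, hvalB0, hpathB0, hminB0⟩ := side b hnbrB
  have hAne : 2 ≤ pA.length := two_le_length pA hxy (fun hmem => hnadj (pA.adj_of_mem_edges hmem))
  have hBne : 2 ≤ pB0.length :=
    two_le_length pB0 hxy (fun hmem => hnadj (pB0.adj_of_mem_edges hmem))
  set pB := pB0.reverse with hpB
  have hsuppB : ∀ z, z ∈ pB.support ↔ z ∈ pB0.support := by
    intro z; rw [hpB, Walk.support_reverse]; exact List.mem_reverse
  have hedgeB : ∀ e, e ∈ pB.edges ↔ e ∈ pB0.edges := by
    intro e; rw [hpB, Walk.edges_reverse]; exact List.mem_reverse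
  have hlen : 4 ≤ (pA.append pB).length := by
    rw [Walk.length_append, hpB, Walk.length_reverse]; omega
  have hdisjE : ∀ e ∈ pA.edges, e ∉ pB.edges := by
    intro e heA heB
    revert heA heB
    induction e using Sym2.ind with
    | _ p1 p2 =>
      intro heA heB
      have h1A : p1 ∈ pA.support := pA.fst_mem_support_of_mem_edges heA
      have h2A : p2 ∈ pA.support := pA.snd_mem_support_of_mem_edges heA
      have h1B : p1 ∈ pB0.support := pB0.fst_mem_support_of_mem_edges ((hedgeB _).mp heB)
      have h2B : p2 ∈ pB0.support := pB0.snd_mem_support_of_mem_edges ((hedgeB _).mp heB)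
      have hadj12 : G.Adj p1 p2 := pA.adj_of_mem_edges heA
      have key : ∀ z, z ∈ pA.support → z ∈ pB0.support → z = x ∨ z = y := by
        intro z hz1 hz2
        rcases hvalA z hz1 with rfl | rfl | ⟨hzU, hza⟩
        · exact Or.inl rfl
        · exact Or.inr rfl
        · rcases hvalB0 z hz2 with rfl | rfl | ⟨_, hzb⟩
          · exact Or.inl rfl
          · exact Or.inr rfl
          · exact (hdisj z hza hzb).elim
      rcases key p1 h1A h1B with rfl | rfl <;> rcases key p2 h2A h2B with rfl | rfl
      · exact G.irrefl hadj12
      · exact hnadj hadj12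
      · exact hnadj hadj12.symm
      · exact G.irrefl hadj12
  have htrail : (pA.append pB).IsTrail := by
    rw [Walk.isTrail_def, Walk.edges_append]
    refine List.Nodup.append hpathA.isTrail.edges_nodup ?_ hdisjE
    rw [hpB, Walk.edges_reverse]
    exact List.nodup_reverse.mpr hpathB0.isTrail.edges_nodup
  have hne_nil : pA.append pB ≠ Walk.nil := by
    intro h
    rw [h] at hlen
    simp at hlen
  have hnodB : pB.support.Nodup := by
    rw [hpB, Walk.support_reverse]; exact List.nodup_reverse.mpr hpathB0.support_nodup
  have hxtA : x ∉ pA.support.tail := by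
    have h := hpathA.support_nodup
    rw [pA.support_eq_cons] at h
    exact (List.nodup_cons.mp h).1
  have hytB : y ∉ pB.support.tail := by
    have h := hnodB
    rw [pB.support_eq_cons] at h
    exact (List.nodup_cons.mp h).1
  have htail : (pA.append pB).support.tail.Nodup := by
    rw [Walk.support_append, pA.support_eq_cons, List.cons_append, List.tail_cons]
    refine List.Nodup.append hpathA.support_nodup.tail hnodB.tail ?_
    intro z hz1 hz2
    have hzA : z ∈ pA.support := List.mem_of_mem_tail hz1
    have hzB : z ∈ pB0.support := (hsuppB z).mp (List.mem_of_mem_tail hz2)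
    have hzx : z ≠ x := fun h => hxtA (h ▸ hz1)
    have hzy : z ≠ y := fun h => hytB (h ▸ hz2)
    have hA := ((hvalA z hzA).resolve_left hzx).resolve_left hzy
    have hB := ((hvalB0 z hzB).resolve_left hzx).resolve_left hzy
    exact hdisj z hA.2 hB.2
  have hcyc : (pA.append pB).IsCycle := by
    rw [Walk.isCycle_def]
    exact ⟨htrail, hne_nil, htail⟩
  obtain ⟨a0, b0, ha0, hb0, hadj0, hne0⟩ := hch x (pA.append pB) hcyc hlen
  rw [Walk.mem_support_append_iff] at ha0 hb0
  have hedgeC : ∀ e, e ∈ pA.edges ∨ e ∈ pB.edges → e ∈ (pA.append pB).edges := by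
    intro e h
    rw [Walk.edges_append, List.mem_append]
    exact h
  have chordB : ∀ {u v : V}, u ∈ pB0.support → v ∈ pB0.support → G.Adj u v →
      s(u, v) ∈ pB0.edges := fun hu hv hadj => min_path_chord hvalB0 hpathB0 hminB0 hu hv hadj
  rcases ha0 with haA | haB <;> rcases hb0 with hbA | hbB
  · exact hne0 (hedgeC _ (Or.inl (min_path_chord hvalA hpathA hminA haA hbA hadj0)))
  · by_cases haB' : a0 ∈ pB0.support
    · exact hne0 (hedgeC _ (Or.inr ((hedgeB _).mpr
        (chordB haB' ((hsuppB b0).mp hbB) hadj0))))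
    · by_cases hbA' : b0 ∈ pA.support
      · exact hne0 (hedgeC _ (Or.inl (min_path_chord hvalA hpathA hminA haA hbA' hadj0)))
      · have hax : a0 ≠ x := fun h => haB' (h ▸ pB0.start_mem_support)
        have hay : a0 ≠ y := fun h => haB' (h ▸ pB0.end_mem_support)
        have hA := ((hvalA a0 haA).resolve_left hax).resolve_left hay
        have hbx : b0 ≠ x := fun h => hbA' (h ▸ pA.start_mem_support)
        have hby : b0 ≠ y := fun h => hbA' (h ▸ pA.end_mem_support)
        have hB := ((hvalB0 b0 ((hsuppB b0).mp hbB)).resolve_left hbx).resolve_left hby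
        exact hdisj b0 (hA.2.tail ⟨hA.1, hB.1, hadj0⟩) hB.2
  · by_cases haA' : a0 ∈ pA.support
    · exact hne0 (hedgeC _ (Or.inl (min_path_chord hvalA hpathA hminA haA' hbA hadj0)))
    · by_cases hbB' : b0 ∈ pB0.support
      · exact hne0 (hedgeC _ (Or.inr ((hedgeB _).mpr
          (chordB ((hsuppB a0).mp haB) hbB' hadj0))))
      · have hax : a0 ≠ x := fun h => haA' (h ▸ pA.start_mem_support)
        have hay : a0 ≠ y := fun h => haA' (h ▸ pA.end_mem_support)
        have hA' := ((hvalB0 a0 ((hsuppB a0).mp haB)).resolve_left hax).resolve_left hay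
        have hbx : b0 ≠ x := fun h => hbB' (h ▸ pB0.start_mem_support)
        have hby : b0 ≠ y := fun h => hbB' (h ▸ pB0.end_mem_support)
        have hB' := ((hvalA b0 hbA).resolve_left hbx).resolve_left hby
        exact hdisj b0 hB'.2 (hA'.2.tail ⟨hA'.1, hB'.1, hadj0⟩)
  · exact hne0 (hedgeC _ (Or.inr ((hedgeB _).mpr
      (chordB ((hsuppB a0).mp haB) ((hsuppB b0).mp hbB) hadj0))))

end Graph2
section Graph3
variable {V : Type*} [Fintype V] [DecidableEq V] {G : SimpleGraph V}

/-- `v` is a simplicial vertex of the subgraph induced on `S`. -/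
def SimplIn (G : SimpleGraph V) (S : Finset V) (v : V) : Prop :=
  v ∈ S ∧ ∀ i ∈ S, ∀ j ∈ S, G.Adj v i → G.Adj v j → i ≠ j → G.Adj i j

theorem dirac_strong
    (hch : ∀ (v : V) (w : G.Walk v v), w.IsCycle → 4 ≤ w.length →
      ∃ a b : V, a ∈ w.support ∧ b ∈ w.support ∧ G.Adj a b ∧ s(a, b) ∉ w.edges)
    (n : ℕ) : ∀ S : Finset V, S.card ≤ n → S.Nonempty →
    (∀ x ∈ S, ∀ y ∈ S, x ≠ y → G.Adj x y) ∨
      ∃ a b : V, SimplIn G S a ∧ SimplIn G S b ∧ a ≠ b ∧ ¬ G.Adj a b := by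
  induction n with
  | zero =>
    intro S hc hne
    obtain ⟨v, hv⟩ := hne
    simp only [Nat.le_zero, Finset.card_eq_zero] at hc
    rw [hc] at hv
    exact absurd hv (Finset.notMem_empty v)
  | succ n ih =>
    intro S hc hne
    classical
    by_cases hcomp : ∀ x ∈ S, ∀ y ∈ S, x ≠ y → G.Adj x y
    · exact Or.inl hcomp
    · right
      push_neg at hcomp
      obtain ⟨a, haS, b, hbS, hab, hnadj⟩ := hcomp
      -- minimal separator
      set seps := (S \ {a, b}).powerset.filter (fun T => ¬ Rch G (S \ T) a b) with hseps
      have hsep0 : S \ {a, b} ∈ seps := by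
        rw [hseps, Finset.mem_filter]
        refine ⟨Finset.mem_powerset_self _, ?_⟩
        have hset : S \ (S \ {a, b}) = {a, b} := by
          ext z
          simp only [Finset.mem_sdiff, not_and, not_not, Finset.mem_insert, Finset.mem_singleton]
          constructor
          · rintro ⟨hzS, h⟩
            exact h hzS
          · rintro (rfl | rfl)
            · exact ⟨haS, fun _ => Or.inl rfl⟩
            · exact ⟨hbS, fun _ => Or.inr rfl⟩
        rw [hset]
        intro h
        rcases rch_cases_head h with h | ⟨c, ⟨_, hcmem, hadj'⟩, _⟩
        · exact hab h
        · rcases Finset.mem_insert.mp hcmem with rfl | hc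
          · exact G.irrefl hadj'
          · exact hnadj ((Finset.mem_singleton.mp hc) ▸ hadj')
      obtain ⟨T, hTmem, hTmin⟩ := Finset.exists_min_image seps Finset.card ⟨_, hsep0⟩
      rw [hseps, Finset.mem_filter, Finset.mem_powerset] at hTmem
      obtain ⟨hTsub, hTsep⟩ := hTmem
      have hTS : T ⊆ S := hTsub.trans (Finset.sdiff_subset)
      have haT : a ∉ T := fun h => by
        have := hTsub h
        rw [Finset.mem_sdiff] at this
        exact this.2 (Finset.mem_insert_self _ _)
      have hbT : b ∉ T := fun h => by
        have := hTsub h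
        rw [Finset.mem_sdiff] at this
        exact this.2 (Finset.mem_insert_of_mem (Finset.mem_singleton_self _))
      have haU : a ∈ S \ T := Finset.mem_sdiff.mpr ⟨haS, haT⟩
      have hbU : b ∈ S \ T := Finset.mem_sdiff.mpr ⟨hbS, hbT⟩
      have hnbr : ∀ c ∈ ({a, b} : Finset V), Rch G (S \ T) c c →
          ∀ t ∈ T, ∃ u, u ∈ S \ T ∧ Rch G (S \ T) c u ∧ G.Adj u t := by
        intro c hcmem _ t ht
        have htS : t ∈ S := hTS ht
        have hcT : c ∉ T := by
          rcases Finset.mem_insert.mp hcmem with rfl | hc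
          · exact haT
          · exact (Finset.mem_singleton.mp hc) ▸ hbT
        have herase : T.erase t ∉ seps := by
          intro hmem
          have := hTmin _ hmem
          have hlt := Finset.card_erase_of_mem ht
          have hpos : 0 < T.card := Finset.card_pos.mpr ⟨t, ht⟩
          omega
        have hrch : Rch G (S \ T.erase t) a b := by
          by_contra hno
          exact herase (by
            rw [hseps, Finset.mem_filter]
            exact ⟨Finset.mem_powerset.mpr ((Finset.erase_subset _ _).trans hTsub), hno⟩)
        have hset : S \ T.erase t = insert t (S \ T) := by
          ext z
          simp only [Finset.mem_sdiff, Finset.mem_erase, Finset.mem_insert]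
          constructor
          · rintro ⟨hzS, hz⟩
            by_cases hzt : z = t
            · exact Or.inl hzt
            · exact Or.inr ⟨hzS, fun hzT => hz ⟨hzt, hzT⟩⟩
          · rintro (rfl | ⟨hzS, hzT⟩)
            · exact ⟨htS, fun h => h.1 rfl⟩
            · exact ⟨hzS, fun h => hzT h.2⟩
        rw [hset] at hrch
        have htU : t ∉ S \ T := fun h => (Finset.mem_sdiff.mp h).2 ht
        -- reach from c side
        obtain ⟨d, hcd, h⟩ : ∃ d, ¬ Rch G (S \ T) c d ∧ Rch G (insert t (S \ T)) c d := by
          rcases Finset.mem_insert.mp hcmem with rfl | hc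
          · exact ⟨b, hTsep, hrch⟩
          · have := Finset.mem_singleton.mp hc
            subst this
            exact ⟨a, fun h => hTsep (rch_symm h), rch_symm hrch⟩
        have hct : c ≠ t := fun h => hcT (h ▸ ht)
        rcases rch_insert htU hct h with h' | ⟨u, hu1, hu2, hu3⟩
        · exact absurd h' hcd
        · exact ⟨u, hu1, hu2, hu3⟩
      have hnbrA := hnbr a (Finset.mem_insert_self _ _) rch_refl
      have hnbrB := hnbr b (Finset.mem_insert_of_mem (Finset.mem_singleton_self _)) rch_refl
      have hclique : ∀ x ∈ T, ∀ y ∈ T, x ≠ y → G.Adj x y :=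
        fun x hx y hy hxy => minsep_clique hch hTsep hnbrA hnbrB hx hy hxy
      -- key: from any c ∈ S\T with a non-reachable witness d, get a simplicial vertex in comp(c)
      have key : ∀ c d : V, c ∈ S \ T → d ∈ S \ T → ¬ Rch G (S \ T) c d →
          ∃ v, Rch G (S \ T) c v ∧ v ∈ S \ T ∧ SimplIn G S v := by
        intro c d hc hd hnd
        set Sc := T ∪ (S \ T).filter (fun z => Rch G (S \ T) c z) with hSc
        have hScS : Sc ⊆ S := by
          intro z hz
          rcases Finset.mem_union.mp hz with hz | hz
          · exact hTS hz
          · exact (Finset.mem_sdiff.mp (Finset.mem_filter.mp hz).1).1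
        have hcSc : c ∈ Sc :=
          Finset.mem_union_right _ (Finset.mem_filter.mpr ⟨hc, rch_refl⟩)
        have hdSc : d ∉ Sc := by
          intro hmem
          rcases Finset.mem_union.mp hmem with hz | hz
          · exact (Finset.mem_sdiff.mp hd).2 hz
          · exact hnd (Finset.mem_filter.mp hz).2
        have hcard : Sc.card ≤ n := by
          have hlt : Sc.card < S.card :=
            Finset.card_lt_card ⟨hScS, fun hsub => hdSc (hsub (Finset.mem_sdiff.mp hd).1)⟩
          omega
        -- membership lemma: neighbors (within S) of any w ∈ comp(c) are in Sc
        have hnbhd : ∀ w z : V, w ∈ S \ T → Rch G (S \ T) c w → z ∈ S → G.Adj w z →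
            z ∈ Sc := by
          intro w z hwU hwR hzS hadj
          by_cases hzT : z ∈ T
          · exact Finset.mem_union_left _ hzT
          · have hzU : z ∈ S \ T := Finset.mem_sdiff.mpr ⟨hzS, hzT⟩
            exact Finset.mem_union_right _
              (Finset.mem_filter.mpr ⟨hzU, hwR.tail ⟨hwU, hzU, hadj⟩⟩)
        rcases ih Sc hcard ⟨c, hcSc⟩ with hfull | ⟨s1, s2, hs1, hs2, hs12, hnadj12⟩
        · refine ⟨c, rch_refl, hc, hScS hcSc, ?_⟩
          intro i hi j hj hci hcj hij
          exact hfull i (hnbhd c i hc rch_refl hi hci) j (hnbhd c j hc rch_refl hj hcj) hij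
        · have pick : ∀ s : V, SimplIn G Sc s → s ∉ T →
              ∃ v, Rch G (S \ T) c v ∧ v ∈ S \ T ∧ SimplIn G S v := by
            intro s hs hsT
            have hsU : s ∈ (S \ T).filter (fun z => Rch G (S \ T) c z) := by
              rcases Finset.mem_union.mp hs.1 with h | h
              · exact absurd h hsT
              · exact h
            obtain ⟨hsU', hsR⟩ := Finset.mem_filter.mp hsU
            refine ⟨s, hsR, hsU', (Finset.mem_sdiff.mp hsU').1, ?_⟩
            intro i hi j hj hsi hsj hij
            exact hs.2 i (hnbhd s i hsU' hsR hi hsi) j (hnbhd s j hsU' hsR hj hsj) hsi hsj hij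
          by_cases h1 : s1 ∈ T
          · have h2 : s2 ∉ T := fun h2 => hnadj12 (hclique s1 h1 s2 h2 hs12)
            exact pick s2 hs2 h2
          · exact pick s1 hs1 h1
      obtain ⟨va, hvaR, hvaU, hva⟩ := key a b haU hbU hTsep
      obtain ⟨vb, hvbR, hvbU, hvb⟩ := key b a hbU haU (fun h => hTsep (rch_symm h))
      have hRa : Rch G (S \ T) a va := hvaR
      have hRb : Rch G (S \ T) b vb := hvbR
      have hvne : va ≠ vb := by
        rintro rfl
        exact hTsep (rch_trans hRa (rch_symm hRb))
      have hvnadj : ¬ G.Adj va vb := by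
        intro h
        exact hTsep (rch_trans (hRa.tail ⟨hvaU, hvbU, h⟩) (rch_symm hRb))
      exact ⟨va, vb, hva, hvb, hvne, hvnadj⟩

theorem exists_simplicial
    (hch : ∀ (v : V) (w : G.Walk v v), w.IsCycle → 4 ≤ w.length →
      ∃ a b : V, a ∈ w.support ∧ b ∈ w.support ∧ G.Adj a b ∧ s(a, b) ∉ w.edges)
    (S : Finset V) (hne : S.Nonempty) : ∃ v, SimplIn G S v := by
  rcases dirac_strong hch S.card S le_rfl hne with hfull | ⟨a, _, ha, _⟩
  · obtain ⟨v, hv⟩ := hne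
    exact ⟨v, hv, fun i hi j hj _ _ hij => hfull i hi j hj hij⟩
  · exact ⟨a, ha⟩

end Graph3
section MatrixAux
open Matrix
variable {N q : ℕ} {dims : Fin N → ℕ} {C : Fin q → Finset (Fin N)}

lemma sigma_mk_eq_iff {v : Fin N} {a a' : Fin (dims v)} :
    (⟨v, a'⟩ : Idx dims) = ⟨v, a⟩ ↔ a' = a := by
  constructor
  · intro h
    exact eq_of_heq (Sigma.mk.inj_iff.mp h).2
  · rintro rfl; rfl

lemma sum_cidx (g : CIdx dims C → ℝ) (x : Idx dims) :
    (∑ c : CIdx dims C, if (⟨c.2.1.1, c.2.2⟩ : Idx dims) = x then g c else 0)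
      = ∑ k : Fin q, if h : x.1 ∈ C k then g ⟨k, ⟨⟨x.1, h⟩, x.2⟩⟩ else 0 := by
  obtain ⟨i, a⟩ := x
  rw [← Finset.univ_sigma_univ, Finset.sum_sigma]
  refine Finset.sum_congr rfl (fun k _ => ?_)
  rw [← Finset.univ_sigma_univ, Finset.sum_sigma]
  by_cases h : i ∈ C k
  · rw [dif_pos h]
    refine (Finset.sum_eq_single_of_mem (⟨i, h⟩ : {v // v ∈ C k}) (Finset.mem_univ _) ?_).trans ?_
    · intro j _ hj
      refine Finset.sum_eq_zero (fun b _ => ?_)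
      split_ifs with hEq
      · exact absurd (Subtype.ext (congrArg Sigma.fst hEq)) hj
      · rfl
    · refine (Finset.sum_eq_single_of_mem a (Finset.mem_univ _) ?_).trans ?_
      · intro b _ hb
        split_ifs with hEq
        · exact absurd (eq_of_heq (Sigma.mk.inj_iff.mp hEq).2) hb
        · rfl
      · exact if_pos rfl
  · rw [dif_neg h]
    refine Finset.sum_eq_zero (fun j _ => Finset.sum_eq_zero (fun b _ => ?_))
    split_ifs with hEq
    · have h1 : (j : Fin N) = i := congrArg Sigma.fst hEq
      exact absurd (h1 ▸ j.2) h
    · rfl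

lemma Emat_mulVec (x : Idx dims → ℝ) (c : CIdx dims C) :
    (Emat dims C *ᵥ x) c = x ⟨c.2.1.1, c.2.2⟩ := by
  simp [Emat, mulVec, dotProduct, ite_mul]

lemma EtME_blkdiag (M : Matrix (CIdx dims C) (CIdx dims C) ℝ) (hbd : CliqueBlkDiag dims C M)
    (x y : Idx dims) :
    ((Emat dims C)ᵀ * M * Emat dims C) x y
      = ∑ k : Fin q, if h : x.1 ∈ C k ∧ y.1 ∈ C k then
          M ⟨k, ⟨⟨x.1, h.1⟩, x.2⟩⟩ ⟨k, ⟨⟨y.1, h.2⟩, y.2⟩⟩ else 0 := by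
  classical
  rw [Matrix.mul_apply]
  have e1 : ∀ c : CIdx dims C, ((Emat dims C)ᵀ * M) x c
      = ∑ k : Fin q, if h : x.1 ∈ C k then M ⟨k, ⟨⟨x.1, h⟩, x.2⟩⟩ c else 0 := by
    intro c
    rw [Matrix.mul_apply]
    have step : ∀ c' : CIdx dims C, (Emat dims C)ᵀ x c' * M c' c
        = if (⟨c'.2.1.1, c'.2.2⟩ : Idx dims) = x then M c' c else 0 := by
      intro c'
      rw [Matrix.transpose_apply]
      show (if (⟨c'.2.1.1, c'.2.2⟩ : Idx dims) = x then (1:ℝ) else 0) * M c' c = _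
      rw [ite_mul, one_mul, zero_mul]
    rw [Finset.sum_congr rfl (fun c' _ => step c')]
    exact sum_cidx (fun c' => M c' c) x
  have e2 : ∀ c : CIdx dims C, ((Emat dims C)ᵀ * M) x c * Emat dims C c y
      = if (⟨c.2.1.1, c.2.2⟩ : Idx dims) = y then ((Emat dims C)ᵀ * M) x c else 0 := by
    intro c
    show _ * (if (⟨c.2.1.1, c.2.2⟩ : Idx dims) = y then (1:ℝ) else 0) = _
    rw [mul_ite, mul_one, mul_zero]
  rw [Finset.sum_congr rfl (fun c _ => e2 c),
    sum_cidx (fun c => ((Emat dims C)ᵀ * M) x c) y]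
  refine Finset.sum_congr rfl (fun k _ => ?_)
  by_cases hy : y.1 ∈ C k
  · rw [dif_pos hy, e1]
    refine (Finset.sum_eq_single_of_mem k (Finset.mem_univ _) ?_).trans ?_
    · intro k' _ hk'
      by_cases hx : x.1 ∈ C k'
      · rw [dif_pos hx]
        exact hbd _ _ hk'
      · exact dif_neg hx
    · by_cases hx : x.1 ∈ C k
      · rw [dif_pos hx, dif_pos ⟨hx, hy⟩]
      · rw [dif_neg hx, dif_neg (fun h : _ ∧ _ => hx h.1)]
  · rw [dif_neg hy, eq_comm]
    exact dif_neg (fun h : _ ∧ _ => hy h.2)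

lemma EtE_offdiag {p r : Idx dims} (h : p ≠ r) : ((Emat dims C)ᵀ * Emat dims C) p r = 0 := by
  rw [Matrix.mul_apply]
  refine Finset.sum_eq_zero (fun c _ => ?_)
  rw [Matrix.transpose_apply]
  show (if (⟨c.2.1.1, c.2.2⟩ : Idx dims) = p then (1:ℝ) else 0)
    * (if (⟨c.2.1.1, c.2.2⟩ : Idx dims) = r then (1:ℝ) else 0) = 0
  by_cases h1 : (⟨c.2.1.1, c.2.2⟩ : Idx dims) = p
  · rw [if_pos h1, if_neg (fun h2 => h (h1.symm.trans h2)), mul_zero]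
  · rw [if_neg h1, zero_mul]

lemma dot_shift {m n' : Type*} [Fintype m] [Fintype n'] (A : Matrix m n' ℝ) (y : m → ℝ)
    (w : n' → ℝ) : y ⬝ᵥ (A *ᵥ w) = (Aᵀ *ᵥ y) ⬝ᵥ w := by
  rw [Matrix.dotProduct_mulVec]
  congr 1
  have := Matrix.vecMul_transpose (A := Aᵀ) (x := y)
  rwa [Matrix.transpose_transpose] at this

lemma EtE_quad (x : Idx dims → ℝ) :
    x ⬝ᵥ (((Emat dims C)ᵀ * Emat dims C) *ᵥ x) ≤ (q : ℝ) * ∑ p, x p ^ 2 := by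
  have h1 : x ⬝ᵥ (((Emat dims C)ᵀ * Emat dims C) *ᵥ x)
      = ∑ c : CIdx dims C, x (⟨c.2.1.1, c.2.2⟩ : Idx dims) ^ 2 := by
    rw [← Matrix.mulVec_mulVec, dot_shift, Matrix.transpose_transpose, dotProduct]
    refine Finset.sum_congr rfl (fun c _ => ?_)
    rw [Emat_mulVec]
    ring
  rw [h1, ← Finset.univ_sigma_univ, Finset.sum_sigma]
  have h2 : ∀ k : Fin q,
      (∑ y : Σ j : {v // v ∈ C k}, Fin (dims j.1), x ⟨y.1.1, y.2⟩ ^ 2)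
        ≤ ∑ p : Idx dims, x p ^ 2 := by
    intro k
    have hinj : ∀ y1 ∈ Finset.univ, ∀ y2 ∈ Finset.univ,
        (fun y : Σ j : {v // v ∈ C k}, Fin (dims j.1) => (⟨y.1.1, y.2⟩ : Idx dims)) y1
          = (fun y => (⟨y.1.1, y.2⟩ : Idx dims)) y2 → y1 = y2 := by
      rintro ⟨⟨j1, hj1⟩, b1⟩ _ ⟨⟨j2, hj2⟩, b2⟩ _ hEq
      have h1 : j1 = j2 := congrArg Sigma.fst hEq
      subst h1
      have h2 := eq_of_heq (Sigma.mk.inj_iff.mp hEq).2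
      subst h2
      rfl
    calc (∑ y : Σ j : {v // v ∈ C k}, Fin (dims j.1), x ⟨y.1.1, y.2⟩ ^ 2)
        = ∑ p ∈ Finset.univ.image
            (fun y : Σ j : {v // v ∈ C k}, Fin (dims j.1) => (⟨y.1.1, y.2⟩ : Idx dims)),
            x p ^ 2 :=
            (Finset.sum_image (f := fun p : Idx dims => x p ^ 2)
              (g := fun y : Σ j : {v // v ∈ C k}, Fin (dims j.1) =>
                (⟨y.1.1, y.2⟩ : Idx dims)) hinj).symm
      _ ≤ ∑ p : Idx dims, x p ^ 2 :=
          Finset.sum_le_sum_of_subset_of_nonneg (Finset.subset_univ _)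
            (fun p _ _ => sq_nonneg _)
  calc (∑ k : Fin q, ∑ y : Σ j : {v // v ∈ C k}, Fin (dims j.1), x ⟨y.1.1, y.2⟩ ^ 2)
      ≤ ∑ _k : Fin q, ∑ p : Idx dims, x p ^ 2 := Finset.sum_le_sum (fun k _ => h2 k)
    _ = (q : ℝ) * ∑ p, x p ^ 2 := by
        rw [Finset.sum_const, Finset.card_univ, Fintype.card_fin, nsmul_eq_mul]

lemma Emat_mulVec_ne_zero (hcov : ∀ i : Fin N, ∃ k, i ∈ C k) {x : Idx dims → ℝ}
    (hx : x ≠ 0) : Emat dims C *ᵥ x ≠ 0 := by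
  obtain ⟨p, hp⟩ : ∃ p, x p ≠ 0 := by
    by_contra h; push_neg at h; exact hx (funext h)
  obtain ⟨k, hk⟩ := hcov p.1
  intro h0
  have h := congrFun h0 ⟨k, ⟨⟨p.1, hk⟩, p.2⟩⟩
  rw [Emat_mulVec, Pi.zero_apply] at h
  rw [Sigma.eta] at h
  exact hp h

/-- compression of a matrix supported on clique `k` into the `k` block. -/
def cliqueLift (C : Fin q → Finset (Fin N)) (k : Fin q) (M : Matrix (Idx dims) (Idx dims) ℝ) :
    Matrix (CIdx dims C) (CIdx dims C) ℝ :=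
  fun c c' => if c.1 = k ∧ c'.1 = k then M ⟨c.2.1.1, c.2.2⟩ ⟨c'.2.1.1, c'.2.2⟩ else 0

lemma cliqueLift_blkdiag (k : Fin q) (M : Matrix (Idx dims) (Idx dims) ℝ) :
    CliqueBlkDiag dims C (cliqueLift C k M) := by
  intro p r h
  exact if_neg (fun hc => h (hc.1.trans hc.2.symm))

lemma EME_t (M : Matrix (Idx dims) (Idx dims) ℝ) (c c' : CIdx dims C) :
    (Emat dims C * M * (Emat dims C)ᵀ) c c'
      = M ⟨c.2.1.1, c.2.2⟩ ⟨c'.2.1.1, c'.2.2⟩ := by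
  rw [Matrix.mul_apply]
  have step : ∀ y, (Emat dims C * M) c y * (Emat dims C)ᵀ y c'
      = if (⟨c'.2.1.1, c'.2.2⟩ : Idx dims) = y then (Emat dims C * M) c y else 0 := by
    intro y
    rw [Matrix.transpose_apply]
    show _ * (if (⟨c'.2.1.1, c'.2.2⟩ : Idx dims) = y then (1:ℝ) else 0) = _
    rw [mul_ite, mul_one, mul_zero]
  rw [Finset.sum_congr rfl (fun y _ => step y), Finset.sum_ite_eq, if_pos (Finset.mem_univ _),
    Matrix.mul_apply]
  have step2 : ∀ p, Emat dims C c p * M p ⟨c'.2.1.1, c'.2.2⟩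
      = if (⟨c.2.1.1, c.2.2⟩ : Idx dims) = p then M p ⟨c'.2.1.1, c'.2.2⟩ else 0 := by
    intro p
    show (if (⟨c.2.1.1, c.2.2⟩ : Idx dims) = p then (1:ℝ) else 0) * _ = _
    rw [ite_mul, one_mul, zero_mul]
  rw [Finset.sum_congr rfl (fun p _ => step2 p), Finset.sum_ite_eq, if_pos (Finset.mem_univ _)]

lemma cliqueLift_posSemidef (k : Fin q) {M : Matrix (Idx dims) (Idx dims) ℝ}
    (hM : M.PosSemidef) : (cliqueLift C k M).PosSemidef := by
  classical
  have hsub : (M.submatrix (fun c : CIdx dims C => (⟨c.2.1.1, c.2.2⟩ : Idx dims))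
      (fun c : CIdx dims C => (⟨c.2.1.1, c.2.2⟩ : Idx dims))).PosSemidef := hM.submatrix _
  set d : CIdx dims C → ℝ := fun c => if c.1 = k then 1 else 0 with hd
  have hDh : (Matrix.diagonal d)ᴴ = Matrix.diagonal d := by
    rw [Matrix.conjTranspose_eq_transpose_of_trivial, Matrix.diagonal_transpose]
  have hps := hsub.conjTranspose_mul_mul_same (B := Matrix.diagonal d)
  rw [hDh] at hps
  have hrepr : cliqueLift C k M
      = Matrix.diagonal d
        * (M.submatrix (fun c : CIdx dims C => (⟨c.2.1.1, c.2.2⟩ : Idx dims))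
            (fun c : CIdx dims C => (⟨c.2.1.1, c.2.2⟩ : Idx dims)))
        * Matrix.diagonal d := by
    ext c c'
    rw [Matrix.mul_diagonal, Matrix.diagonal_mul, Matrix.submatrix_apply]
    by_cases h1 : c.1 = k <;> by_cases h2 : c'.1 = k <;> simp [cliqueLift, hd, h1, h2]
  rwa [hrepr]

end MatrixAux
section MatrixAux2
open Matrix
variable {N q : ℕ} {dims : Fin N → ℕ} {C : Fin q → Finset (Fin N)}

lemma Et_cliqueLift_E {k : Fin q} {M : Matrix (Idx dims) (Idx dims) ℝ}
    (hsupp : ∀ p r : Idx dims, (p.1 ∉ C k ∨ r.1 ∉ C k) → M p r = 0) :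
    (Emat dims C)ᵀ * cliqueLift C k M * Emat dims C = M := by
  ext x y
  rw [EtME_blkdiag _ (cliqueLift_blkdiag k M)]
  refine (Finset.sum_eq_single_of_mem k (Finset.mem_univ _) ?_).trans ?_
  · intro k' _ hk'
    by_cases h : x.1 ∈ C k' ∧ y.1 ∈ C k'
    · rw [dif_pos h]
      exact if_neg (fun hc => hk' hc.1)
    · exact dif_neg h
  · by_cases h : x.1 ∈ C k ∧ y.1 ∈ C k
    · rw [dif_pos h]
      show (if _ ∧ _ then M ⟨x.1, x.2⟩ ⟨y.1, y.2⟩ else 0) = M x y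
      rw [if_pos ⟨rfl, rfl⟩, Sigma.eta, Sigma.eta]
    · rw [dif_neg h]
      rcases not_and_or.mp h with h | h
      · exact (hsupp x y (Or.inl h)).symm
      · exact (hsupp x y (Or.inr h)).symm

/-- Block-row selector for the `v` block. -/
def Evv (dims : Fin N → ℕ) (v : Fin N) : Matrix (Fin (dims v)) (Idx dims) ℝ :=
  fun a p => if (⟨v, a⟩ : Idx dims) = p then 1 else 0

lemma Evv_mul (v : Fin N) (M : Matrix (Idx dims) (Idx dims) ℝ) (a : Fin (dims v))
    (r : Idx dims) : (Evv dims v * M) a r = M ⟨v, a⟩ r := by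
  rw [Matrix.mul_apply]
  have step : ∀ p, Evv dims v a p * M p r
      = if (⟨v, a⟩ : Idx dims) = p then M p r else 0 := by
    intro p
    show (if (⟨v, a⟩ : Idx dims) = p then (1:ℝ) else 0) * M p r = _
    rw [ite_mul, one_mul, zero_mul]
  rw [Finset.sum_congr rfl (fun p _ => step p), Finset.sum_ite_eq, if_pos (Finset.mem_univ _)]

lemma mul_Evvt (v : Fin N) (M : Matrix (Idx dims) (Idx dims) ℝ) (p : Idx dims)
    (a : Fin (dims v)) : (M * (Evv dims v)ᵀ) p a = M p ⟨v, a⟩ := by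
  rw [Matrix.mul_apply]
  have step : ∀ r, M p r * (Evv dims v)ᵀ r a
      = if (⟨v, a⟩ : Idx dims) = r then M p r else 0 := by
    intro r
    rw [Matrix.transpose_apply]
    show M p r * (if (⟨v, a⟩ : Idx dims) = r then (1:ℝ) else 0) = _
    rw [mul_ite, mul_one, mul_zero]
  rw [Finset.sum_congr rfl (fun r _ => step r), Finset.sum_ite_eq, if_pos (Finset.mem_univ _)]

lemma Evvt_mulVec_ne {v : Fin N} (y : Fin (dims v) → ℝ) {p : Idx dims} (hp : p.1 ≠ v) :
    ((Evv dims v)ᵀ *ᵥ y) p = 0 := by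
  rw [Matrix.mulVec, dotProduct]
  refine Finset.sum_eq_zero (fun a _ => ?_)
  rw [Matrix.transpose_apply]
  show (if (⟨v, a⟩ : Idx dims) = p then (1:ℝ) else 0) * y a = 0
  rw [if_neg (fun h => hp (congrArg Sigma.fst h).symm), zero_mul]

lemma Evvt_mulVec_mk {v : Fin N} (y : Fin (dims v) → ℝ) (a : Fin (dims v)) :
    ((Evv dims v)ᵀ *ᵥ y) ⟨v, a⟩ = y a := by
  rw [Matrix.mulVec, dotProduct]
  have step : ∀ a', (Evv dims v)ᵀ (⟨v, a⟩ : Idx dims) a' * y a'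
      = if a' = a then y a' else 0 := by
    intro a'
    rw [Matrix.transpose_apply]
    show (if (⟨v, a'⟩ : Idx dims) = ⟨v, a⟩ then (1:ℝ) else 0) * y a' = _
    by_cases h : a' = a
    · rw [if_pos (sigma_mk_eq_iff.mpr h), if_pos h, one_mul]
    · rw [if_neg (fun hEq => h (sigma_mk_eq_iff.mp hEq)), if_neg h, zero_mul]
  rw [Finset.sum_congr rfl (fun a' _ => step a'), Finset.sum_ite_eq', if_pos (Finset.mem_univ _)]

end MatrixAux2
section KeyLemma
open Matrix
variable {N q : ℕ} {dims : Fin N → ℕ} {C : Fin q → Finset (Fin N)}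

/-- support of the matrix is contained in the blocks indexed by `A`. -/
def SuppOn (A : Finset (Fin N)) (M : Matrix (Idx dims) (Idx dims) ℝ) : Prop :=
  ∀ p r : Idx dims, (p.1 ∉ A ∨ r.1 ∉ A) → M p r = 0

/-- positive definiteness on vectors supported in the blocks indexed by `A`. -/
def PDon (A : Finset (Fin N)) (M : Matrix (Idx dims) (Idx dims) ℝ) : Prop :=
  ∀ x : Idx dims → ℝ, x ≠ 0 → (∀ p : Idx dims, p.1 ∉ A → x p = 0) → 0 < x ⬝ᵥ (M *ᵥ x)

theorem key_decomp (Gr : SimpleGraph (Fin N))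
    (hch : ∀ (v : Fin N) (w : Gr.Walk v v), w.IsCycle → 4 ≤ w.length →
      ∃ a b : Fin N, a ∈ w.support ∧ b ∈ w.support ∧ Gr.Adj a b ∧ s(a, b) ∉ w.edges)
    (hclX : ∀ s : Finset (Fin N), Gr.IsClique (s : Set (Fin N)) → ∃ k, s ⊆ C k)
    (n : ℕ) : ∀ S : Finset (Fin N), S.card ≤ n →
    ∀ P : Matrix (Idx dims) (Idx dims) ℝ, P.IsSymm → Sparse Gr dims P →
      SuppOn S P → PDon S P →
      ∃ Pt : Matrix (CIdx dims C) (CIdx dims C) ℝ,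
        CliqueBlkDiag dims C Pt ∧ Pt.PosSemidef ∧
          P = (Emat dims C)ᵀ * Pt * Emat dims C := by
  induction n with
  | zero =>
    intro S hcard P hsymm hsp hsupp hpd
    have hS : S = ∅ := Finset.card_eq_zero.mp (Nat.le_zero.mp hcard)
    subst hS
    have hP : P = 0 := by
      ext p r
      exact hsupp p r (Or.inl (Finset.notMem_empty _))
    exact ⟨0, fun p r _ => rfl, Matrix.PosSemidef.zero,
      by rw [hP, Matrix.mul_zero, Matrix.zero_mul]⟩
  | succ n ih =>
    intro S hcard P hsymm hsp hsupp hpd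
    classical
    rcases Finset.eq_empty_or_nonempty S with rfl | hne
    · have hP : P = 0 := by
        ext p r
        exact hsupp p r (Or.inl (Finset.notMem_empty _))
      exact ⟨0, fun p r _ => rfl, Matrix.PosSemidef.zero,
        by rw [hP, Matrix.mul_zero, Matrix.zero_mul]⟩
    have hcard0 : 0 < S.card := Finset.card_pos.mpr hne
    by_cases hz : ∃ v ∈ S, dims v = 0
    · obtain ⟨v, hvS, hv0⟩ := hz
      have hcard' : (S.erase v).card ≤ n := by
        rw [Finset.card_erase_of_mem hvS]; omega
      refine ih (S.erase v) hcard' P hsymm hsp ?_ ?_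
      · intro p r hor
        rcases hor with h | h
        · by_cases hps : p.1 ∈ S
          · have hpv : p.1 = v := by
              by_contra h'
              exact h (Finset.mem_erase.mpr ⟨h', hps⟩)
            have hd0 : dims p.1 = 0 := by rw [hpv]; exact hv0
            exact absurd p.2.isLt (by omega)
          · exact hsupp p r (Or.inl hps)
        · by_cases hrs : r.1 ∈ S
          · have hrv : r.1 = v := by
              by_contra h'
              exact h (Finset.mem_erase.mpr ⟨h', hrs⟩)
            have hd0 : dims r.1 = 0 := by rw [hrv]; exact hv0
            exact absurd r.2.isLt (by omega)
          · exact hsupp p r (Or.inr hrs)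
      · intro x hx hxs
        exact hpd x hx (fun p hp => hxs p (fun hmem => hp (Finset.mem_of_mem_erase hmem)))
    · push_neg at hz
      obtain ⟨v, hv⟩ := exists_simplicial (G := Gr) hch S hne
      obtain ⟨hvS, hvsimp⟩ := hv
      -- the v-block of P
      set Ev := Evv dims v with hEv
      obtain ⟨Av, hAvdef⟩ : ∃ A, A = Ev * P * Evᵀ := ⟨_, rfl⟩
      have hAvsymm : Avᵀ = Av := by
        rw [hAvdef, Matrix.transpose_mul, Matrix.transpose_mul, Matrix.transpose_transpose,
          hsymm, ← Matrix.mul_assoc]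
      have hAvpd : Av.PosDef := by
        refine Matrix.posDef_iff_dotProduct_mulVec.mpr ⟨?_, ?_⟩
        · show Avᴴ = Av
          rw [Matrix.conjTranspose_eq_transpose_of_trivial, hAvsymm]
        · intro y hy
          have hsy : star y = y := by funext a; simp
          rw [hsy]
          have h1 : Av *ᵥ y = Ev *ᵥ (P *ᵥ (Evᵀ *ᵥ y)) := by
            rw [hAvdef, ← Matrix.mulVec_mulVec, ← Matrix.mulVec_mulVec]
          rw [h1, dot_shift]
          set x0 := Evᵀ *ᵥ y with hx0
          have hx0ne : x0 ≠ 0 := by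
            obtain ⟨a0, ha0⟩ : ∃ a, y a ≠ 0 := by
              by_contra h; push_neg at h; exact hy (funext h)
            intro h0
            have hb := congrFun h0 ⟨v, a0⟩
            rw [hx0, hEv, Evvt_mulVec_mk, Pi.zero_apply] at hb
            exact ha0 hb
          have hx0supp : ∀ p : Idx dims, p.1 ∉ S → x0 p = 0 := by
            intro p hp
            rw [hx0, hEv]
            exact Evvt_mulVec_ne y (fun h => hp (h ▸ hvS))
          exact hpd x0 hx0ne hx0supp
      have hAvunit : IsUnit Av.det := (Matrix.isUnit_iff_isUnit_det Av).mp hAvpd.isUnit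
      have hAvinv : Av * Av⁻¹ = 1 := Matrix.mul_nonsing_inv _ hAvunit
      have hAvinv' : Av⁻¹ * Av = 1 := Matrix.nonsing_inv_mul _ hAvunit
      obtain ⟨A1, hA1⟩ : ∃ A, A = P * Evᵀ := ⟨_, rfl⟩
      obtain ⟨A2, hA2⟩ : ∃ A, A = Ev * P := ⟨_, rfl⟩
      have hA1t : A1ᵀ = A2 := by
        rw [hA1, hA2, Matrix.transpose_mul, Matrix.transpose_transpose, hsymm]
      have hA2t : A2ᵀ = A1 := by rw [← hA1t, Matrix.transpose_transpose]
      obtain ⟨T, hT⟩ : ∃ T, T = A1 * Av⁻¹ * A2 := ⟨_, rfl⟩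
      have hTpsd : T.PosSemidef := by
        have h1 : Av⁻¹.PosSemidef := hAvpd.inv.posSemidef
        have h2 := h1.conjTranspose_mul_mul_same (B := A2)
        rwa [Matrix.conjTranspose_eq_transpose_of_trivial, hA2t, ← hT] at h2
      have hTsymm : Tᵀ = T := by
        have h1 := hTpsd.isHermitian
        rwa [Matrix.IsHermitian, Matrix.conjTranspose_eq_transpose_of_trivial] at h1
      have hEA1 : Ev * A1 = Av := by rw [hA1, ← Matrix.mul_assoc, ← hAvdef]
      have hA2E : A2 * Evᵀ = Av := by rw [hA2, ← hAvdef]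
      have hA1e : ∀ (p : Idx dims) a, A1 p a = P p ⟨v, a⟩ := by
        intro p a
        rw [hA1, hEv]
        exact mul_Evvt v P p a
      have hA2e : ∀ b (r : Idx dims), A2 b r = P ⟨v, b⟩ r := by
        intro b r
        rw [hA2, hEv]
        exact Evv_mul v P b r
      have hTrow0 : ∀ p : Idx dims, (∀ a, P p ⟨v, a⟩ = 0) → ∀ r, T p r = 0 := by
        intro p hp r
        rw [hT, Matrix.mul_apply]
        refine Finset.sum_eq_zero fun b _ => ?_
        rw [Matrix.mul_apply]
        rw [Finset.sum_eq_zero (fun a _ => by rw [hA1e p a, hp a, zero_mul]), zero_mul]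
      have hTcol0 : ∀ r : Idx dims, (∀ b, P ⟨v, b⟩ r = 0) → ∀ p, T p r = 0 := by
        intro r hr p
        rw [hT, Matrix.mul_apply]
        refine Finset.sum_eq_zero fun b _ => ?_
        rw [hA2e b r, hr b, mul_zero]
      have hEvT : Ev * T = A2 := by
        rw [hT, ← Matrix.mul_assoc, ← Matrix.mul_assoc, hEA1, hAvinv, Matrix.one_mul]
      have hTEv : T * Evᵀ = A1 := by
        rw [hT, Matrix.mul_assoc, hA2E, Matrix.mul_assoc, hAvinv', Matrix.mul_one]
      have hTrowv : ∀ a (r : Idx dims), T ⟨v, a⟩ r = P ⟨v, a⟩ r := by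
        intro a r
        have h1 := Evv_mul v T a r
        rw [← hEv, hEvT, hA2e] at h1
        exact h1.symm
      have hTcolv : ∀ (p : Idx dims) b, T p ⟨v, b⟩ = P p ⟨v, b⟩ := by
        intro p b
        have h1 := mul_Evvt v T p b
        rw [← hEv, hTEv, hA1e] at h1
        exact h1.symm
      -- vanishing of P rows/columns outside closed neighborhood
      have hProw : ∀ p : Idx dims, p.1 ∉ S ∨ (p.1 ≠ v ∧ ¬ Gr.Adj p.1 v) →
          ∀ a, P p ⟨v, a⟩ = 0 := by
        intro p hp a
        rcases hp with h | ⟨h1, h2⟩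
        · exact hsupp p _ (Or.inl h)
        · obtain ⟨i, c⟩ := p
          exact hsp i v h1 h2 c a
      have hPcol : ∀ r : Idx dims, r.1 ∉ S ∨ (r.1 ≠ v ∧ ¬ Gr.Adj v r.1) →
          ∀ b, P ⟨v, b⟩ r = 0 := by
        intro r hr b
        rcases hr with h | ⟨h1, h2⟩
        · exact hsupp _ r (Or.inr h)
        · obtain ⟨j, c⟩ := r
          exact hsp v j (fun h => h1 h.symm) h2 b c
      -- the closed neighborhood clique
      set Nv : Finset (Fin N) := insert v (S.filter (fun z => Gr.Adj v z)) with hNvdef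
      have hNvS : Nv ⊆ S := by
        intro z hz
        rcases Finset.mem_insert.mp hz with rfl | hz
        · exact hvS
        · exact (Finset.mem_filter.mp hz).1
      have hNvcl : Gr.IsClique (Nv : Set (Fin N)) := by
        intro z1 hz1 z2 hz2 h12
        rw [Finset.mem_coe] at hz1 hz2
        rcases Finset.mem_insert.mp hz1 with rfl | hz1'
        · rcases Finset.mem_insert.mp hz2 with rfl | hz2'
          · exact absurd rfl h12
          · exact (Finset.mem_filter.mp hz2').2
        · rcases Finset.mem_insert.mp hz2 with rfl | hz2'
          · exact ((Finset.mem_filter.mp hz1').2).symm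
          · obtain ⟨hz1S, hadj1⟩ := Finset.mem_filter.mp hz1'
            obtain ⟨hz2S, hadj2⟩ := Finset.mem_filter.mp hz2'
            exact hvsimp z1 hz1S z2 hz2S hadj1 hadj2 h12
      have hmemNv : ∀ i : Fin N, i ∉ Nv → i ∉ S ∨ (i ≠ v ∧ ¬ Gr.Adj i v) := by
        intro i hiNv
        by_cases his : i ∈ S
        · refine Or.inr ⟨?_, ?_⟩
          · rintro rfl
            exact hiNv (Finset.mem_insert_self _ _)
          · intro hadj
            exact hiNv (Finset.mem_insert_of_mem (Finset.mem_filter.mpr ⟨his, hadj.symm⟩))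
        · exact Or.inl his
      have hTrowNv : ∀ p : Idx dims, p.1 ∉ Nv → ∀ r, T p r = 0 := by
        intro p hp r
        refine hTrow0 p (hProw p ?_) r
        exact hmemNv p.1 hp
      have hTcolNv : ∀ r : Idx dims, r.1 ∉ Nv → ∀ p, T p r = 0 := by
        intro r hr p
        refine hTcol0 r (hPcol r ?_) p
        rcases hmemNv r.1 hr with h | ⟨h1, h2⟩
        · exact Or.inl h
        · exact Or.inr ⟨h1, fun h => h2 h.symm⟩
      obtain ⟨k, hk⟩ := hclX Nv hNvcl
      have hTsuppCk : ∀ p r : Idx dims, (p.1 ∉ C k ∨ r.1 ∉ C k) → T p r = 0 := by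
        intro p r hor
        rcases hor with h | h
        · exact hTrowNv p (fun hmem => h (hk hmem)) r
        · exact hTcolNv r (fun hmem => h (hk hmem)) p
      -- the Schur complement Q
      obtain ⟨Q, hQdef⟩ : ∃ Q, Q = P - T := ⟨_, rfl⟩
      have hQsymm : Q.IsSymm := by
        show Qᵀ = Q
        rw [hQdef, Matrix.transpose_sub, hsymm, hTsymm]
      have hQsp : Sparse Gr dims Q := by
        intro i j hij hnadj a b
        have hP0 : P ⟨i, a⟩ ⟨j, b⟩ = 0 := hsp i j hij hnadj a b
        have hT0 : T ⟨i, a⟩ ⟨j, b⟩ = 0 := by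
          by_cases hiv : i = v
          · subst hiv
            rw [hTrowv]
            exact hP0
          · by_cases hjv : j = v
            · subst hjv
              rw [hTcolv]
              exact hP0
            · by_cases hiN : i ∈ Nv
              · by_cases hjN : j ∈ Nv
                · exact absurd (hNvcl (Finset.mem_coe.mpr hiN) (Finset.mem_coe.mpr hjN) hij)
                    hnadj
                · exact hTcolNv ⟨j, b⟩ hjN ⟨i, a⟩
              · exact hTrowNv ⟨i, a⟩ hiN ⟨j, b⟩
        rw [hQdef, Matrix.sub_apply, hP0, hT0, sub_zero]
      have hQrow : ∀ p r : Idx dims, p.1 ∉ S.erase v → Q p r = 0 := by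
        intro p r hp
        by_cases hps : p.1 ∈ S
        · have hpv : p.1 = v := by
            by_contra h
            exact hp (Finset.mem_erase.mpr ⟨h, hps⟩)
          obtain ⟨i, a⟩ := p
          have hiv : i = v := hpv
          subst hiv
          rw [hQdef, Matrix.sub_apply, hTrowv, sub_self]
        · rw [hQdef, Matrix.sub_apply, hsupp p r (Or.inl hps),
            hTrowNv p (fun hmem => hps (hNvS hmem)) r, sub_self]
      have hQsupp : SuppOn (S.erase v) Q := by
        intro p r hor
        rcases hor with h | h
        · exact hQrow p r h
        · have hsymQ : Q p r = Q r p :=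
            (congrFun (congrFun hQsymm p) r).symm.trans (Matrix.transpose_apply Q p r)
          rw [hsymQ]
          exact hQrow r p h
      have hQpd : PDon (S.erase v) Q := by
        intro x hx hxsupp
        obtain ⟨w0, hw0⟩ : ∃ w, w = Ev *ᵥ (P *ᵥ x) := ⟨_, rfl⟩
        obtain ⟨z, hz⟩ : ∃ z, z = Av⁻¹ *ᵥ w0 := ⟨_, rfl⟩
        obtain ⟨y, hydef⟩ : ∃ y, y = x - (Evᵀ *ᵥ z) := ⟨_, rfl⟩
        have hyS : ∀ p : Idx dims, p.1 ∉ S → y p = 0 := by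
          intro p hp
          have h1 : x p = 0 := hxsupp p (fun hmem => hp (Finset.mem_of_mem_erase hmem))
          have h2 : (Evᵀ *ᵥ z) p = 0 := by
            rw [hEv]
            exact Evvt_mulVec_ne z (fun h => hp (h ▸ hvS))
          rw [hydef, Pi.sub_apply, h1, h2, sub_zero]
        have hyne : y ≠ 0 := by
          obtain ⟨p, hp⟩ : ∃ p, x p ≠ 0 := by
            by_contra h; push_neg at h; exact hx (funext h)
          have hpv : p.1 ≠ v := by
            intro h
            exact hp (hxsupp p (fun hmem => (Finset.mem_erase.mp hmem).1 h))
          intro h0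
          have hcf := congrFun h0 p
          rw [hydef, Pi.sub_apply, hEv, Evvt_mulVec_ne z hpv, sub_zero, Pi.zero_apply] at hcf
          exact hp hcf
        have hA2x : A2 *ᵥ x = w0 := by
          rw [hA2, hw0, ← Matrix.mulVec_mulVec]
        have hTx : T *ᵥ x = A1 *ᵥ (Av⁻¹ *ᵥ w0) := by
          rw [hT, ← Matrix.mulVec_mulVec, hA2x, ← Matrix.mulVec_mulVec]
        have hxTx : x ⬝ᵥ (T *ᵥ x) = w0 ⬝ᵥ (Av⁻¹ *ᵥ w0) := by
          rw [hTx, dot_shift, hA1t, hA2x]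
        have hPe : P *ᵥ (Evᵀ *ᵥ z) = T *ᵥ x := by
          rw [hTx, hz, Matrix.mulVec_mulVec, ← hA1]
        have hxPe : x ⬝ᵥ (P *ᵥ (Evᵀ *ᵥ z)) = x ⬝ᵥ (T *ᵥ x) := by rw [hPe]
        have hePx : (Evᵀ *ᵥ z) ⬝ᵥ (P *ᵥ x) = x ⬝ᵥ (T *ᵥ x) := by
          have ha : (Evᵀ *ᵥ z) ⬝ᵥ (P *ᵥ x) = z ⬝ᵥ w0 := by
            rw [← dot_shift, ← hw0]
          rw [ha, hz, dotProduct_comm, ← hxTx]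
        have hePe : (Evᵀ *ᵥ z) ⬝ᵥ (P *ᵥ (Evᵀ *ᵥ z)) = x ⬝ᵥ (T *ᵥ x) := by
          rw [hPe]
          have h1 : (Evᵀ *ᵥ z) ⬝ᵥ (T *ᵥ x) = z ⬝ᵥ (Ev *ᵥ (T *ᵥ x)) := (dot_shift Ev z _).symm
          have h2 : Ev *ᵥ (T *ᵥ x) = w0 := by
            rw [Matrix.mulVec_mulVec, hEvT, hA2x]
          rw [h1, h2, hz, dotProduct_comm, ← hxTx]
        have hquad : y ⬝ᵥ (P *ᵥ y) = x ⬝ᵥ (Q *ᵥ x) := by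
          rw [hydef, Matrix.mulVec_sub, sub_dotProduct, dotProduct_sub,
            dotProduct_sub, hxPe, hePx, hePe, hQdef, Matrix.sub_mulVec,
            dotProduct_sub]
          ring
        rw [← hquad]
        exact hpd y hyne hyS
      have hcard' : (S.erase v).card ≤ n := by
        rw [Finset.card_erase_of_mem hvS]; omega
      obtain ⟨Pt2, hbd2, hpsd2, heq2⟩ := ih (S.erase v) hcard' Q hQsymm hQsp hQsupp hQpd
      refine ⟨cliqueLift C k T + Pt2, ?_, (cliqueLift_posSemidef k hTpsd).add hpsd2, ?_⟩
      · intro p r h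
        rw [Matrix.add_apply, cliqueLift_blkdiag k T p r h, hbd2 p r h, add_zero]
      · rw [Matrix.mul_add, Matrix.add_mul, Et_cliqueLift_E hTsuppCk, ← heq2, hQdef]
        abel
end KeyLemma
section Final
open Matrix
variable {N q : ℕ} {dims : Fin N → ℕ} {C : Fin q → Finset (Fin N)}

lemma exists_max_clique_superset {Gr : SimpleGraph (Fin N)}
    (hmax : ListsMaximalCliques Gr C) :
    ∀ s : Finset (Fin N), Gr.IsClique (s : Set (Fin N)) → ∃ k, s ⊆ C k := by
  classical
  intro s hs
  set cands := Finset.univ.filter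
    (fun t : Finset (Fin N) => Gr.IsClique (t : Set (Fin N)) ∧ s ⊆ t) with hcands
  have hne : cands.Nonempty := by
    refine ⟨s, ?_⟩
    rw [hcands, Finset.mem_filter]
    exact ⟨Finset.mem_univ _, hs, Finset.Subset.refl s⟩
  obtain ⟨t, htmem, htmax⟩ := Finset.exists_max_image cands Finset.card hne
  rw [hcands, Finset.mem_filter] at htmem
  obtain ⟨-, htcl, hst⟩ := htmem
  have hmaximal : ∀ t' : Finset (Fin N), Gr.IsClique (t' : Set (Fin N)) → t ⊆ t' → t' = t := by
    intro t' hcl' hsub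
    have ht'mem : t' ∈ cands := by
      rw [hcands, Finset.mem_filter]
      exact ⟨Finset.mem_univ _, hcl', hst.trans hsub⟩
    exact (Finset.eq_of_subset_of_card_le hsub (htmax t' ht'mem)).symm
  obtain ⟨k, hk⟩ := hmax.2 t htcl hmaximal
  exact ⟨k, by rw [hk]; exact hst⟩

lemma cover_of_max {Gr : SimpleGraph (Fin N)} (hmax : ListsMaximalCliques Gr C) :
    ∀ i : Fin N, ∃ k, i ∈ C k := by
  intro i
  obtain ⟨k, hk⟩ := exists_max_clique_superset hmax {i} (by
    rw [Finset.coe_singleton]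
    exact Set.pairwise_singleton _ _)
  exact ⟨k, hk (Finset.mem_singleton_self i)⟩

lemma posdef_quad_lower {m : Type*} [Fintype m] [DecidableEq m] {P : Matrix m m ℝ}
    (hP : P.PosDef) :
    ∃ c > 0, ∀ x : m → ℝ, c * (∑ p, x p ^ 2) ≤ x ⬝ᵥ (P *ᵥ x) := by
  classical
  rcases isEmpty_or_nonempty m with hm | hm
  · refine ⟨1, one_pos, fun x => ?_⟩
    simp [dotProduct]
  · set f : (m → ℝ) → ℝ := fun x => x ⬝ᵥ (P *ᵥ x) with hf
    have hfsum : f = fun x => ∑ p, ∑ r, P p r * (x p * x r) := by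
      funext x
      rw [hf]
      simp only [dotProduct, Matrix.mulVec, Finset.mul_sum]
      exact Finset.sum_congr rfl fun p _ => Finset.sum_congr rfl fun r _ => by ring
    have hcont : Continuous f := by
      rw [hfsum]
      exact continuous_finset_sum _ fun p _ => continuous_finset_sum _ fun r _ =>
        continuous_const.mul ((continuous_apply p).mul (continuous_apply r))
    set K : Set (m → ℝ) := {x | ∑ p, x p ^ 2 = 1} with hK
    have hgcont : Continuous (fun x : m → ℝ => ∑ p, x p ^ 2) :=
      continuous_finset_sum _ fun p _ => (continuous_apply p).pow 2
    have hKc : IsClosed K := isClosed_eq hgcont continuous_const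
    have hKb : Bornology.IsBounded K := by
      refine Bornology.IsBounded.subset (Metric.isBounded_closedBall (x := 0) (r := 1)) ?_
      intro x hx
      have hx' : (∑ p, x p ^ 2) = 1 := hx
      rw [Metric.mem_closedBall, dist_zero_right]
      rw [pi_norm_le_iff_of_nonneg zero_le_one]
      intro p
      have h1 : x p ^ 2 ≤ 1 := by
        have h2 := Finset.single_le_sum (f := fun p => x p ^ 2)
          (fun i _ => sq_nonneg (x i)) (Finset.mem_univ p)
        rw [hx'] at h2
        exact h2
      rw [Real.norm_eq_abs]
      nlinarith [abs_nonneg (x p), sq_abs (x p)]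
    have hKcompact : IsCompact K := Metric.isCompact_of_isClosed_isBounded hKc hKb
    have hKne : K.Nonempty := by
      obtain ⟨p0⟩ := hm
      refine ⟨fun p => if p = p0 then 1 else 0, ?_⟩
      show (∑ p, (if p = p0 then (1:ℝ) else 0) ^ 2) = 1
      have hterm : ∀ p, ((if p = p0 then (1:ℝ) else 0)) ^ 2 = if p = p0 then 1 else 0 :=
        fun p => by split_ifs <;> norm_num
      rw [Finset.sum_congr rfl fun p _ => hterm p, Finset.sum_ite_eq' Finset.univ p0
        (fun _ => (1:ℝ)), if_pos (Finset.mem_univ _)]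
    obtain ⟨x0, hx0K, hx0min⟩ := hKcompact.exists_isMinOn hKne hcont.continuousOn
    have hx0' : (∑ p, x0 p ^ 2) = 1 := hx0K
    have hx0ne : x0 ≠ 0 := by
      intro h
      rw [h] at hx0'
      simp at hx0'
    have hc : 0 < f x0 := by
      have h2 := hP.dotProduct_mulVec_pos hx0ne
      have hsx : star x0 = x0 := by funext a; simp
      rwa [hsx] at h2
    refine ⟨f x0, hc, fun x => ?_⟩
    by_cases hx : x = 0
    · subst hx
      simp [hf]
    · have hs : 0 < ∑ p, x p ^ 2 := by
        obtain ⟨p, hp⟩ : ∃ p, x p ≠ 0 := by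
          by_contra h; push_neg at h; exact hx (funext h)
        refine Finset.sum_pos' (fun i _ => sq_nonneg _) ⟨p, Finset.mem_univ p, ?_⟩
        rw [pow_two]
        exact mul_self_pos.mpr hp
      set s := Real.sqrt (∑ p, x p ^ 2) with hsdef
      have hspos : 0 < s := Real.sqrt_pos.mpr hs
      have hs2 : s ^ 2 = ∑ p, x p ^ 2 := Real.sq_sqrt hs.le
      set u : m → ℝ := s⁻¹ • x with hu
      have huK : u ∈ K := by
        show (∑ p, u p ^ 2) = 1
        rw [hu]
        simp only [Pi.smul_apply, smul_eq_mul, mul_pow]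
        rw [← Finset.mul_sum, ← hs2]
        field_simp
      have hmin : f x0 ≤ f u := hx0min huK
      have hfu : f u = s⁻¹ ^ 2 * f x := by
        simp only [hf, hu]
        rw [Matrix.mulVec_smul, smul_dotProduct, dotProduct_smul]
        simp only [smul_eq_mul]
        ring
      have hmin2 : f x0 ≤ s⁻¹ ^ 2 * f x := hfu ▸ hmin
      have hfin : f x0 * s ^ 2 ≤ (s⁻¹ ^ 2 * f x) * s ^ 2 :=
        mul_le_mul_of_nonneg_right hmin2 (sq_nonneg s)
      calc f x0 * ∑ p, x p ^ 2 = f x0 * s ^ 2 := by rw [hs2]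
        _ ≤ (s⁻¹ ^ 2 * f x) * s ^ 2 := hfin
        _ = f x := by field_simp
lemma smul_one_posDef {m : Type*} [Fintype m] [DecidableEq m] {ε : ℝ} (hε : 0 < ε) :
    (ε • (1 : Matrix m m ℝ)).PosDef := by
  refine Matrix.posDef_iff_dotProduct_mulVec.mpr ⟨?_, ?_⟩
  · show (ε • (1 : Matrix m m ℝ))ᴴ = _
    rw [Matrix.conjTranspose_smul, Matrix.conjTranspose_one]
    simp
  · intro x hx
    have hsx : star x = x := by funext a; simp
    rw [hsx, Matrix.smul_mulVec, Matrix.one_mulVec, dotProduct_smul]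
    have hxx : 0 < x ⬝ᵥ x := by
      obtain ⟨p, hp⟩ : ∃ p, x p ≠ 0 := by
        by_contra h; push_neg at h; exact hx (funext h)
      exact Finset.sum_pos' (fun i _ => mul_self_nonneg _)
        ⟨p, Finset.mem_univ p, mul_self_pos.mpr hp⟩
    rw [smul_eq_mul]
    exact mul_pos hε hxx

end Final

/-- Lemma 2, chordal converse (Agler decomposition). -/
theorem stmt3 {N q : ℕ} (Gr : SimpleGraph (Fin N)) (dims : Fin N → ℕ)
    (C : Fin q → Finset (Fin N)) (hch : IsChordal Gr) (hmax : ListsMaximalCliques Gr C)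
    (P : Matrix (Idx dims) (Idx dims) ℝ) (hsymm : P.IsSymm) :
    (Sparse Gr dims P ∧ P.PosDef) ↔
      ∃ Pt : Matrix (CIdx dims C) (CIdx dims C) ℝ,
        CliqueBlkDiag dims C Pt ∧ Pt.PosDef ∧
        P = (Emat dims C)ᵀ * Pt * Emat dims C := by
  classical
  have hcliques : ∀ k : Fin q, Gr.IsClique (C k : Set (Fin N)) := fun k => (hmax.1 k).1
  have hclX := exists_max_clique_superset hmax
  have hcov := cover_of_max hmax
  constructor
  · rintro ⟨hsp, hpd⟩
    obtain ⟨c, hc, hquad⟩ := posdef_quad_lower hpd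
    set ε := c / (2 * ((q : ℝ) + 1)) with hεdef
    have hεpos : 0 < ε := by
      rw [hεdef]; positivity
    obtain ⟨P', hP'⟩ : ∃ X, X = P - ε • ((Emat dims C)ᵀ * Emat dims C) := ⟨_, rfl⟩
    have hP'symm : P'.IsSymm := by
      show P'ᵀ = P'
      rw [hP', Matrix.transpose_sub, hsymm, Matrix.transpose_smul, Matrix.transpose_mul,
        Matrix.transpose_transpose]
    have hP'sp : Sparse Gr dims P' := by
      intro i j hij hnadj a b
      have h0 : ((Emat dims C)ᵀ * Emat dims C) ⟨i, a⟩ ⟨j, b⟩ = 0 :=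
        EtE_offdiag (fun hEq => hij (congrArg Sigma.fst hEq))
      rw [hP', Matrix.sub_apply, hsp i j hij hnadj a b, Matrix.smul_apply, h0, smul_zero,
        sub_zero]
    have hP'supp : SuppOn Finset.univ P' := fun p r hor => by
      rcases hor with h | h <;> exact absurd (Finset.mem_univ _) h
    have hP'pd : PDon Finset.univ P' := by
      intro x hx _
      have h1 : x ⬝ᵥ (P' *ᵥ x)
          = x ⬝ᵥ (P *ᵥ x) - ε * (x ⬝ᵥ (((Emat dims C)ᵀ * Emat dims C) *ᵥ x)) := by
        rw [hP', Matrix.sub_mulVec, dotProduct_sub, Matrix.smul_mulVec,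
          dotProduct_smul, smul_eq_mul]
      have h2 := EtE_quad (C := C) x
      have h3 := hquad x
      have hs : 0 < ∑ p, x p ^ 2 := by
        obtain ⟨p, hp⟩ : ∃ p, x p ≠ 0 := by
          by_contra h; push_neg at h; exact hx (funext h)
        refine Finset.sum_pos' (fun i _ => sq_nonneg _) ⟨p, Finset.mem_univ p, ?_⟩
        rw [pow_two]
        exact mul_self_pos.mpr hp
      have h4 : ε * (x ⬝ᵥ (((Emat dims C)ᵀ * Emat dims C) *ᵥ x))
          ≤ ε * ((q : ℝ) * ∑ p, x p ^ 2) := mul_le_mul_of_nonneg_left h2 hεpos.le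
      have hεq : ε * (q : ℝ) ≤ c / 2 := by
        rw [hεdef, div_mul_eq_mul_div, div_le_div_iff₀ (by positivity) (by norm_num)]
        nlinarith [hc.le, (Nat.cast_nonneg q : (0:ℝ) ≤ q)]
      have h5 : ε * ((q : ℝ) * ∑ p, x p ^ 2) ≤ c / 2 * ∑ p, x p ^ 2 := by
        rw [← mul_assoc]
        exact mul_le_mul_of_nonneg_right hεq hs.le
      rw [h1]
      nlinarith [h3, h4, h5, hs, hc]
    obtain ⟨Pt0, hbd0, hpsd0, heq0⟩ := key_decomp Gr hch hclX Finset.univ.card Finset.univ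
      le_rfl P' hP'symm hP'sp hP'supp hP'pd
    refine ⟨Pt0 + ε • 1, ?_, ?_, ?_⟩
    · intro p r h
      rw [Matrix.add_apply, hbd0 p r h, Matrix.smul_apply,
        Matrix.one_apply_ne (fun hEq => h (congrArg Sigma.fst hEq)), smul_zero, add_zero]
    · exact (smul_one_posDef hεpos).posSemidef_add hpsd0
    · rw [Matrix.mul_add, Matrix.add_mul, ← heq0, hP']
      have hone : (Emat dims C)ᵀ * (ε • (1 : Matrix (CIdx dims C) (CIdx dims C) ℝ))
          * Emat dims C = ε • ((Emat dims C)ᵀ * Emat dims C) := by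
        rw [Matrix.mul_smul, Matrix.mul_one, Matrix.smul_mul]
      rw [hone]
      abel
  · rintro ⟨Pt, hbd, hpdt, hPeq⟩
    refine ⟨?_, Matrix.posDef_iff_dotProduct_mulVec.mpr ⟨?_, ?_⟩⟩
    · intro i j hij hnadj a b
      rw [hPeq, EtME_blkdiag Pt hbd]
      refine Finset.sum_eq_zero (fun k _ => dif_neg ?_)
      rintro ⟨h1, h2⟩
      exact hnadj (hcliques k (Finset.mem_coe.mpr h1) (Finset.mem_coe.mpr h2) hij)
    · show Pᴴ = P
      rw [Matrix.conjTranspose_eq_transpose_of_trivial, hsymm]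
    · intro x hx
      have hsx : star x = x := by funext a; simp
      rw [hsx, hPeq]
      have h1 : x ⬝ᵥ (((Emat dims C)ᵀ * Pt * Emat dims C) *ᵥ x)
          = (Emat dims C *ᵥ x) ⬝ᵥ (Pt *ᵥ (Emat dims C *ᵥ x)) := by
        rw [← Matrix.mulVec_mulVec, ← Matrix.mulVec_mulVec, dot_shift,
          Matrix.transpose_transpose]
      rw [h1]
      have h2 := hpdt.dotProduct_mulVec_pos (Emat_mulVec_ne_zero hcov hx)
      have hse : star (Emat dims C *ᵥ x) = Emat dims C *ᵥ x := by funext a; simp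
      rwa [hse] at h2
end

section
/- (Lemma 3) Under Assumption 1, a matrix K ∈ ℝ^{n×n} belongs to 𝒮 if and only if there exists a clique-block-diagonal matrix G̃ = blkdiag(G̃_1,…,G̃_q) with G̃_k ∈ ℝ^{n_{C_k}×n_{C_k}} such that K = EᵀG̃E. -/
open Matrix

/-- Pick a clique containing both `i` and `j`, if one exists. -/
noncomputable def pick {N q : ℕ} (C : Fin q → Finset (Fin N)) (i j : Fin N) : Option (Fin q) :=
  if h : ∃ k, i ∈ C k ∧ j ∈ C k then some h.choose else none

lemma sum_left_aux {N q : ℕ} (dims : Fin N → ℕ) (C : Fin q → Finset (Fin N))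
    (i : Fin N) (a : Fin (dims i)) (f : CIdx dims C → ℝ) :
    ∑ p : CIdx dims C, (if (⟨p.2.1.1, p.2.2⟩ : Idx dims) = ⟨i, a⟩ then (1:ℝ) else 0) * f p
      = ∑ k : Fin q, if h : i ∈ C k then f ⟨k, ⟨i, h⟩, a⟩ else 0 := by
  rw [← Finset.univ_sigma_univ, Finset.sum_sigma]
  refine Finset.sum_congr rfl fun k _ => ?_
  by_cases h : i ∈ C k
  · rw [dif_pos h,
      Fintype.sum_eq_single (⟨⟨i, h⟩, a⟩ : Σ j : {x : Fin N // x ∈ C k}, Fin (dims j.1))]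
    · simp
    · rintro ⟨⟨j, hj⟩, c⟩ hne
      dsimp only
      have hcond : (⟨j, c⟩ : Idx dims) ≠ ⟨i, a⟩ := by
        intro hc
        rw [Sigma.mk.inj_iff] at hc
        obtain ⟨rfl, h2⟩ := hc
        have hca : c = a := eq_of_heq h2
        subst hca
        exact hne rfl
      rw [if_neg hcond, zero_mul]
  · rw [dif_neg h]
    apply Finset.sum_eq_zero
    rintro ⟨⟨j, hj⟩, c⟩ -
    dsimp only
    have hcond : (⟨j, c⟩ : Idx dims) ≠ ⟨i, a⟩ := by
      intro hc
      rw [Sigma.mk.inj_iff] at hc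
      obtain ⟨rfl, -⟩ := hc
      exact h hj
    rw [if_neg hcond, zero_mul]

lemma sum_right_aux {N q : ℕ} (dims : Fin N → ℕ) (C : Fin q → Finset (Fin N))
    (j : Fin N) (b : Fin (dims j)) (f : CIdx dims C → ℝ) :
    ∑ r : CIdx dims C, f r * (if (⟨r.2.1.1, r.2.2⟩ : Idx dims) = ⟨j, b⟩ then (1:ℝ) else 0)
      = ∑ k : Fin q, if h : j ∈ C k then f ⟨k, ⟨j, h⟩, b⟩ else 0 := by
  have := sum_left_aux dims C j b f
  simpa [mul_comm] using this

lemma entry_aux {N q : ℕ} (dims : Fin N → ℕ) (C : Fin q → Finset (Fin N))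
    (Gt : Matrix (CIdx dims C) (CIdx dims C) ℝ) (i j : Fin N) (a : Fin (dims i))
    (b : Fin (dims j)) :
    ((Emat dims C)ᵀ * Gt * Emat dims C) ⟨i, a⟩ ⟨j, b⟩
      = ∑ k' : Fin q, if hj : j ∈ C k' then
          (∑ k : Fin q, if hi : i ∈ C k then Gt ⟨k, ⟨i, hi⟩, a⟩ ⟨k', ⟨j, hj⟩, b⟩ else 0)
        else 0 := by
  simp only [Matrix.mul_apply, Matrix.transpose_apply, Emat]
  rw [sum_right_aux dims C j b (fun r => ∑ p : CIdx dims C,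
    (if (⟨p.2.1.1, p.2.2⟩ : Idx dims) = ⟨i, a⟩ then (1:ℝ) else 0) * Gt p r)]
  refine Finset.sum_congr rfl fun k' _ => ?_
  by_cases hj : j ∈ C k'
  · rw [dif_pos hj, dif_pos hj, sum_left_aux]
  · rw [dif_neg hj, dif_neg hj]

/-- Lemma 3: block-diagonal factorization of sparse matrices. -/
theorem stmt4 {N q : ℕ} (Gr : SimpleGraph (Fin N)) (dims : Fin N → ℕ)
    (C : Fin q → Finset (Fin N)) (hclq : IsCliques Gr C) (hass : Assumption1 Gr C)
    (K : Matrix (Idx dims) (Idx dims) ℝ) :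
    Sparse Gr dims K ↔
      ∃ Gt : Matrix (CIdx dims C) (CIdx dims C) ℝ,
        CliqueBlkDiag dims C Gt ∧ K = (Emat dims C)ᵀ * Gt * Emat dims C := by
  constructor
  · intro hK
    refine ⟨fun p r => if some p.1 = pick C p.2.1.1 r.2.1.1 ∧ p.1 = r.1
        then K ⟨p.2.1.1, p.2.2⟩ ⟨r.2.1.1, r.2.2⟩ else 0, ?_, ?_⟩
    · intro p r hpr
      dsimp only
      rw [if_neg]
      rintro ⟨-, h⟩
      exact hpr h
    · ext ⟨i, a⟩ ⟨j, b⟩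
      erw [entry_aux]
      by_cases h : ∃ k, i ∈ C k ∧ j ∈ C k
      · have hp : pick C i j = some h.choose := dif_pos h
        obtain ⟨hi0, hj0⟩ := h.choose_spec
        rw [Fintype.sum_eq_single h.choose]
        · rw [dif_pos hj0, Fintype.sum_eq_single h.choose]
          · rw [dif_pos hi0, if_pos ⟨hp.symm, rfl⟩]
          · intro k hk
            split
            · rw [if_neg]
              rintro ⟨h1, -⟩
              rw [hp] at h1
              exact hk (Option.some.inj h1)
            · rfl
        · intro k' hk'
          split
          · apply Finset.sum_eq_zero
            intro k _
            split
            · rw [if_neg]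
              rintro ⟨h1, h2⟩
              rw [hp] at h1
              have h2' : k = k' := h2
              exact hk' (h2' ▸ Option.some.inj h1)
            · rfl
          · rfl
      · have hij : i ≠ j := by
          rintro rfl
          obtain ⟨k, hk⟩ := hass.1 i
          exact h ⟨k, hk, hk⟩
        have hadj : ¬ Gr.Adj i j := fun hadj => h ((hass.2 i j hij).mpr hadj)
        rw [hK i j hij hadj a b]
        symm
        apply Finset.sum_eq_zero
        intro k' _
        split
        · apply Finset.sum_eq_zero
          intro k _
          split
          · rw [if_neg]
            rintro ⟨h1, -⟩
            rw [pick, dif_neg h] at h1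
            exact Option.some_ne_none _ h1
          · rfl
        · rfl
  · rintro ⟨Gt, hGt, rfl⟩
    intro i j hij hadj a b
    rw [entry_aux]
    apply Finset.sum_eq_zero
    intro k' _
    split
    · apply Finset.sum_eq_zero
      intro k _
      split
      · apply hGt
        intro hkk'
        have h2' : k = k' := hkk'
        subst h2'
        exact hadj ((hass.2 i j hij).mp ⟨k, ‹i ∈ C k›, ‹j ∈ C k›⟩)
      · rfl
    · rfl
end

section
/- (Finsler's lemma) Let Q = Qᵀ ∈ ℝ^{n×n} and M ∈ ℝ^{m×n} with rank(M) < n, and let M^⊥ be a matrix whose columns form a basis of the kernel of M. Then the following four statements are equivalent: (1) xᵀQx < 0 for all x ∈ ℝ^n with Mx = 0 and x ≠ 0; (2) (M^⊥)ᵀ Q M^⊥ ≺ 0; (3) there exists ρ ∈ ℝ such that Q + ρMᵀM ≺ 0; (4) there exists X ∈ ℝ^{n×m} such that Q + MᵀXᵀ + XM ≺ 0. -/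
open Matrix

section helpers

lemma negdef_iff {k : ℕ} (A : Matrix (Fin k) (Fin k) ℝ) (hA : Aᵀ = A) :
    NegDef A ↔ ∀ x : Fin k → ℝ, x ≠ 0 → x ⬝ᵥ A *ᵥ x < 0 := by
  have herm : (-A).IsHermitian := by
    show (-A)ᴴ = -A
    ext i j
    have : A j i = A i j := by
      have h2 := congrFun (congrFun hA i) j
      rw [transpose_apply] at h2
      exact h2
    simp [conjTranspose_apply, this]
  constructor
  · intro h x hx
    have := h.dotProduct_mulVec_pos hx
    simp only [star_trivial, neg_mulVec, dotProduct_neg] at this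
    linarith
  · intro h
    refine PosDef.of_dotProduct_mulVec_pos herm fun x hx => ?_
    have := h x hx
    simp only [star_trivial, neg_mulVec, dotProduct_neg]
    linarith

lemma qf_cont {k k' : ℕ} (A : Matrix (Fin k') (Fin k) ℝ) (B : Matrix (Fin k') (Fin k) ℝ) :
    Continuous (fun x : Fin k → ℝ => (A *ᵥ x) ⬝ᵥ (B *ᵥ x)) := by
  simp only [dotProduct, mulVec]
  refine continuous_finset_sum _ fun i _ => Continuous.mul ?_ ?_ <;>
    exact continuous_finset_sum _ fun j _ => continuous_const.mul (continuous_apply j)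

lemma qf_cont' {k : ℕ} (A : Matrix (Fin k) (Fin k) ℝ) :
    Continuous (fun x : Fin k → ℝ => x ⬝ᵥ A *ᵥ x) := by
  have := qf_cont (1 : Matrix (Fin k) (Fin k) ℝ) A
  simpa using this

/-- The key compactness step: (1) implies existence of ρ. -/
lemma key {n m : ℕ} (Q : Matrix (Fin n) (Fin n) ℝ) (M : Matrix (Fin m) (Fin n) ℝ)
    (h1 : ∀ x : Fin n → ℝ, M *ᵥ x = 0 → x ≠ 0 → x ⬝ᵥ Q *ᵥ x < 0) :
    ∃ ρ : ℝ, ∀ x : Fin n → ℝ, x ≠ 0 →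
      x ⬝ᵥ Q *ᵥ x + ρ * ((M *ᵥ x) ⬝ᵥ (M *ᵥ x)) < 0 := by
  set f : (Fin n → ℝ) → ℝ := fun x => x ⬝ᵥ Q *ᵥ x with hf
  set g : (Fin n → ℝ) → ℝ := fun x => (M *ᵥ x) ⬝ᵥ (M *ᵥ x) with hg
  have hfc : Continuous f := qf_cont' Q
  have hgc : Continuous g := qf_cont M M
  have hg0 : ∀ x, 0 ≤ g x := by
    intro x
    simp only [hg, dotProduct]
    exact Finset.sum_nonneg fun i _ => mul_self_nonneg _
  set S := Metric.sphere (0 : Fin n → ℝ) 1 with hS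
  set K := S ∩ {x | 0 ≤ f x} with hK
  have hKc : IsCompact K :=
    (isCompact_sphere 0 1).inter_right (isClosed_le continuous_const hfc)
  -- on S, get a uniform ρ
  have main : ∃ ρ : ℝ, ∀ x ∈ S, f x + ρ * g x < 0 := by
    by_cases hne : K.Nonempty
    · obtain ⟨x₀, hx₀K, hx₀⟩ := hKc.exists_isMinOn hne hgc.continuousOn
      obtain ⟨x₁, hx₁K, hx₁⟩ := hKc.exists_isMaxOn hne hfc.continuousOn
      set δ := g x₀ with hδ
      set C := f x₁ with hC
      have hxS : ∀ x ∈ K, x ≠ 0 := by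
        intro x hx hx0
        have : x ∈ S := hx.1
        rw [hS, Metric.mem_sphere, hx0] at this
        simp at this
      have hδpos : 0 < δ := by
        rcases lt_or_eq_of_le (hg0 x₀) with h | h
        · exact h
        · exfalso
          have hM0 : M *ᵥ x₀ = 0 := by
            have := h.symm
            rwa [hg, dotProduct_self_eq_zero] at this
          have := h1 x₀ hM0 (hxS x₀ hx₀K)
          have h2 : 0 ≤ f x₀ := hx₀K.2
          rw [hf] at h2
          linarith
      have hC0 : 0 ≤ C := le_trans hx₁K.2 (le_refl _)
      refine ⟨-(C + 1) / δ, fun x hxS' => ?_⟩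
      by_cases hxK : x ∈ K
      · have h1' : f x ≤ C := hx₁ hxK
        have h2' : δ ≤ g x := hx₀ hxK
        have : (C + 1) / δ * δ ≤ (C + 1) / δ * g x := by
          apply mul_le_mul_of_nonneg_left h2'
          positivity
        rw [div_mul_cancel₀ _ (ne_of_gt hδpos)] at this
        have : -(C + 1) / δ * g x ≤ -(C + 1) := by
          rw [neg_div, neg_mul]
          linarith
        linarith
      · have : ¬ (0 ≤ f x) := fun h => hxK ⟨hxS', h⟩
        have hfx : f x < 0 := lt_of_not_ge this
        have : -(C + 1) / δ * g x ≤ 0 := by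
          apply mul_nonpos_of_nonpos_of_nonneg _ (hg0 x)
          rw [neg_div, neg_nonpos]
          positivity
        linarith
    · refine ⟨0, fun x hx => ?_⟩
      have : ¬ (0 ≤ f x) := fun h => hne ⟨x, hx, h⟩
      have := lt_of_not_ge this
      linarith
  obtain ⟨ρ, hρ⟩ := main
  refine ⟨ρ, fun x hx => ?_⟩
  have hnx : ‖x‖ ≠ 0 := by simpa using hx
  set c := ‖x‖⁻¹ with hc
  have hcpos : 0 < c := by positivity
  have hy : c • x ∈ S := by
    rw [hS, Metric.mem_sphere, dist_zero_right, norm_smul, hc]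
    simp [abs_of_nonneg (le_of_lt hcpos), inv_mul_cancel₀ hnx]
  have hquad := hρ (c • x) hy
  have hfy : f (c • x) = c ^ 2 * f x := by
    simp [hf, mulVec_smul, dotProduct_smul, smul_dotProduct, smul_eq_mul]
    ring
  have hgy : g (c • x) = c ^ 2 * g x := by
    simp [hg, mulVec_smul, dotProduct_smul, smul_dotProduct, smul_eq_mul]
    ring
  rw [hfy, hgy] at hquad
  have hc2 : 0 < c ^ 2 := by positivity
  nlinarith [hquad]

end helpers

/-- Finsler's lemma. -/
theorem stmt5 {n m r : ℕ} (Q : Matrix (Fin n) (Fin n) ℝ) (hQ : Q.IsSymm)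
    (M : Matrix (Fin m) (Fin n) ℝ) (hrank : M.rank < n)
    (Mp : Matrix (Fin n) (Fin r) ℝ)
    (hspan : ∀ x : Fin n → ℝ, M.mulVec x = 0 ↔ ∃ c : Fin r → ℝ, Mp.mulVec c = x)
    (hindep : LinearIndependent ℝ (fun j : Fin r => Mpᵀ j)) :
    List.TFAE
      [∀ x : Fin n → ℝ, M.mulVec x = 0 → x ≠ 0 → x ⬝ᵥ Q.mulVec x < 0,
       NegDef (Mpᵀ * Q * Mp),
       ∃ ρ : ℝ, NegDef (Q + ρ • (Mᵀ * M)),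
       ∃ X : Matrix (Fin n) (Fin m) ℝ, NegDef (Q + Mᵀ * Xᵀ + X * M)] := by
  have hQsymm : Qᵀ = Q := hQ
  -- quadratic form identity for the projected matrix
  have hproj : ∀ c : Fin r → ℝ, c ⬝ᵥ (Mpᵀ * Q * Mp) *ᵥ c = (Mp *ᵥ c) ⬝ᵥ Q *ᵥ (Mp *ᵥ c) := by
    intro c
    rw [← mulVec_mulVec, ← mulVec_mulVec, dotProduct_mulVec, vecMul_transpose]
  have hMtM : ∀ x : Fin n → ℝ, x ⬝ᵥ (Mᵀ * M) *ᵥ x = (M *ᵥ x) ⬝ᵥ (M *ᵥ x) := by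
    intro x
    rw [← mulVec_mulVec, dotProduct_mulVec, vecMul_transpose]
  tfae_have 1 → 2
  · intro h1
    rw [negdef_iff]
    · intro c hc
      have hx : Mp *ᵥ c ≠ 0 := by
        intro h0
        apply hc
        have hrep : Mp *ᵥ c = ∑ j, c j • Mpᵀ j := by
          ext i
          simp [mulVec, dotProduct, Finset.sum_apply, mul_comm]
        rw [hrep] at h0
        have := Fintype.linearIndependent_iff.mp hindep c h0
        funext j; exact this j
      have hMx : M *ᵥ (Mp *ᵥ c) = 0 := (hspan _).mpr ⟨c, rfl⟩
      rw [hproj]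
      exact h1 _ hMx hx
    · rw [transpose_mul, transpose_mul, transpose_transpose, hQsymm, Matrix.mul_assoc]
  tfae_have 2 → 1
  · intro h2 x hMx hx
    obtain ⟨c, hc⟩ := (hspan x).mp hMx
    have hc0 : c ≠ 0 := by
      intro h0; apply hx; rw [← hc, h0, mulVec_zero]
    have hsym : (Mpᵀ * Q * Mp)ᵀ = Mpᵀ * Q * Mp := by
      rw [transpose_mul, transpose_mul, transpose_transpose, hQsymm, Matrix.mul_assoc]
    have := (negdef_iff _ hsym).mp h2 c hc0
    rwa [hproj, hc] at this
  tfae_have 1 → 3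
  · intro h1
    obtain ⟨ρ, hρ⟩ := key Q M h1
    refine ⟨ρ, ?_⟩
    rw [negdef_iff]
    · intro x hx
      rw [add_mulVec, dotProduct_add, smul_mulVec, dotProduct_smul, smul_eq_mul, hMtM]
      exact hρ x hx
    · rw [transpose_add, hQsymm, transpose_smul, transpose_mul, transpose_transpose]
  tfae_have 3 → 4
  · rintro ⟨ρ, hρ⟩
    refine ⟨(ρ / 2) • Mᵀ, ?_⟩
    have : Q + Mᵀ * ((ρ / 2) • Mᵀ)ᵀ + (ρ / 2) • Mᵀ * M = Q + ρ • (Mᵀ * M) := by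
      rw [transpose_smul, transpose_transpose, Matrix.mul_smul, Matrix.smul_mul]
      rw [add_assoc, ← add_smul]
      ring_nf
    rwa [this]
  tfae_have 4 → 1
  · rintro ⟨X, hX⟩ x hMx hx
    have hsym : (Q + Mᵀ * Xᵀ + X * M)ᵀ = Q + Mᵀ * Xᵀ + X * M := by
      rw [transpose_add, transpose_add, hQsymm, transpose_mul, transpose_mul,
        transpose_transpose, transpose_transpose]
      abel
    have h := (negdef_iff _ hsym).mp hX x hx
    rw [add_mulVec, add_mulVec, dotProduct_add, dotProduct_add, ← mulVec_mulVec,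
      ← mulVec_mulVec, dotProduct_mulVec x Mᵀ, vecMul_transpose, hMx, zero_dotProduct,
      mulVec_zero, dotProduct_zero] at h
    linarith
  tfae_finish
end

section
/- (Lemma 4, first inclusion) Under Assumption 1, every element of 𝒦_diag belongs to 𝒦_𝒮: if Z ∈ 𝒮 and Q = blkdiag(Q_1,…,Q_N) ≻ 0 satisfy [[Q, (AQ+BZ)ᵀ], [AQ+BZ, Q]] ≻ 0, then the gain ZQ⁻¹ belongs to 𝒦_𝒮. -/
open Matrix

/-- `Φ(Q̃, Z̃) = [[Q̃, (ÃQ̃+B̃Z̃)ᵀ], [ÃQ̃+B̃Z̃, Q̃]]`. -/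
noncomputable def Phi {N q : ℕ} (dims : Fin N → ℕ) (C : Fin q → Finset (Fin N))
    (A B : Matrix (Idx dims) (Idx dims) ℝ)
    (Qt Zt : Matrix (CIdx dims C) (CIdx dims C) ℝ) :
    Matrix (CIdx dims C ⊕ CIdx dims C) (CIdx dims C ⊕ CIdx dims C) ℝ :=
  fromBlocks Qt (tilde dims C A * Qt + tilde dims C B * Zt)ᵀ
    (tilde dims C A * Qt + tilde dims C B * Zt) Qt

section Stmt6Aux

open Finset

variable {N q : ℕ} {dims : Fin N → ℕ} {C : Fin q → Finset (Fin N)}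

/-- number of cliques containing node `i` -/
def ccnt (C : Fin q → Finset (Fin N)) (i : Fin N) : ℕ :=
  (Finset.univ.filter fun k => i ∈ C k).card

/-- number of cliques containing both `i` and `j` -/
def dcnt (C : Fin q → Finset (Fin N)) (i j : Fin N) : ℕ :=
  (Finset.univ.filter fun k => i ∈ C k ∧ j ∈ C k).card

/-- the node of a clique-index -/
def nd (p : CIdx dims C) : Idx dims := ⟨p.2.1.1, p.2.2⟩

lemma Emat_apply (p : CIdx dims C) (t : Idx dims) :
    Emat dims C p t = if nd p = t then 1 else 0 := rfl

lemma E_mul {m : Type*} [Fintype m] (X : Matrix (Idx dims) m ℝ) (p : CIdx dims C) (r : m) :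
    (Emat dims C * X) p r = X (nd p) r := by
  simp only [Matrix.mul_apply, Emat_apply, ite_mul, one_mul, zero_mul]
  rw [Finset.sum_ite_eq]
  simp

lemma mul_Et {m : Type*} [Fintype m] (X : Matrix m (Idx dims) ℝ) (r : m) (p : CIdx dims C) :
    (X * (Emat dims C)ᵀ) r p = X r (nd p) := by
  simp only [Matrix.mul_apply, Matrix.transpose_apply, Emat_apply, mul_ite, mul_one, mul_zero]
  rw [Finset.sum_ite_eq]
  simp

lemma sum_CIdx (t : Idx dims) (F : CIdx dims C → ℝ) :
    ∑ s : CIdx dims C, (if nd s = t then F s else 0)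
      = ∑ k : Fin q, if h : t.1 ∈ C k then F ⟨k, ⟨t.1, h⟩, t.2⟩ else 0 := by
  obtain ⟨t1, t2⟩ := t
  rw [← Finset.univ_sigma_univ, Finset.sum_sigma]
  refine Finset.sum_congr rfl fun k _ => ?_
  by_cases h : t1 ∈ C k
  · rw [dif_pos h]
    refine (Finset.sum_eq_single
      (⟨⟨t1, h⟩, t2⟩ : Σ j : {x : Fin N // x ∈ C k}, Fin (dims j.1)) ?_ ?_).trans ?_
    · rintro ⟨⟨b1, hb⟩, b2⟩ - hne
      refine if_neg fun hc => hne ?_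
      obtain ⟨rfl, hb2⟩ := Sigma.mk.inj_iff.mp hc
      obtain rfl := eq_of_heq hb2
      rfl
    · intro hmem; exact absurd (Finset.mem_univ _) hmem
    · exact if_pos rfl
  · rw [dif_neg h]
    refine Finset.sum_eq_zero fun s _ => if_neg fun hc => h ?_
    have h2 := congrArg Sigma.fst hc
    simp only [nd] at h2
    exact h2 ▸ s.1.2

lemma Et_mul {m : Type*} [Fintype m] (Y : Matrix (CIdx dims C) m ℝ) (t : Idx dims) (r : m) :
    ((Emat dims C)ᵀ * Y) t r
      = ∑ k : Fin q, if h : t.1 ∈ C k then Y ⟨k, ⟨t.1, h⟩, t.2⟩ r else 0 := by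
  simp only [Matrix.mul_apply, Matrix.transpose_apply, Emat_apply, ite_mul, one_mul, zero_mul]
  exact sum_CIdx t _

lemma mul_E {m : Type*} [Fintype m] (Y : Matrix m (CIdx dims C) ℝ) (r : m) (u : Idx dims) :
    (Y * Emat dims C) r u
      = ∑ k : Fin q, if h : u.1 ∈ C k then Y r ⟨k, ⟨u.1, h⟩, u.2⟩ else 0 := by
  simp only [Matrix.mul_apply, Emat_apply, mul_ite, mul_one, mul_zero]
  exact sum_CIdx u _

/-- diagonal scaling matrix `D = EᵀE` -/
noncomputable def Dcm (dims : Fin N → ℕ) (C : Fin q → Finset (Fin N)) :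
    Matrix (Idx dims) (Idx dims) ℝ :=
  Matrix.diagonal fun p => (ccnt C p.1 : ℝ)

/-- the clique-block-diagonal dilation of `Qm` -/
noncomputable def Qtm (dims : Fin N → ℕ) (C : Fin q → Finset (Fin N))
    (Qm : Matrix (Idx dims) (Idx dims) ℝ) : Matrix (CIdx dims C) (CIdx dims C) ℝ :=
  fun p r => if p.1 = r.1 then (ccnt C p.2.1.1 : ℝ) * Qm (nd p) (nd r) else 0

/-- the clique-block-diagonal dilation of `Z` -/
noncomputable def Ztm (dims : Fin N → ℕ) (C : Fin q → Finset (Fin N))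
    (Z : Matrix (Idx dims) (Idx dims) ℝ) : Matrix (CIdx dims C) (CIdx dims C) ℝ :=
  fun p r => if p.1 = r.1 then
    ((ccnt C p.2.1.1 : ℝ) * (ccnt C r.2.1.1) / (dcnt C p.2.1.1 r.2.1.1)) * Z (nd p) (nd r)
  else 0

lemma EtE : (Emat dims C)ᵀ * Emat dims C = Dcm dims C := by
  ext t u
  rw [Et_mul]
  by_cases h : t = u
  · subst h
    rw [Dcm, Matrix.diagonal_apply_eq]
    have h1 : ∀ k : Fin q,
        (if h : t.1 ∈ C k then Emat dims C ⟨k, ⟨t.1, h⟩, t.2⟩ t else 0)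
          = if t.1 ∈ C k then (1:ℝ) else 0 := by
      intro k
      by_cases hk : t.1 ∈ C k
      · rw [dif_pos hk, if_pos hk, Emat_apply]
        exact if_pos rfl
      · rw [dif_neg hk, if_neg hk]
    rw [Finset.sum_congr rfl fun k _ => h1 k, Finset.sum_boole]
    rfl
  · rw [Dcm, Matrix.diagonal_apply_ne _ h]
    refine Finset.sum_eq_zero fun k _ => ?_
    by_cases hk : t.1 ∈ C k
    · rw [dif_pos hk, Emat_apply, if_neg]
      exact fun hc => h hc
    · rw [dif_neg hk]

variable {Gr : SimpleGraph (Fin N)}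

lemma ccnt_pos (hass : Assumption1 Gr C) (i : Fin N) : 0 < ccnt C i := by
  obtain ⟨k, hk⟩ := hass.1 i
  exact Finset.card_pos.mpr ⟨k, by simp [hk]⟩

lemma Qtm_mul_E {Qm : Matrix (Idx dims) (Idx dims) ℝ} (hQbd : BlkDiag dims Qm) :
    Qtm dims C Qm * Emat dims C = Emat dims C * (Dcm dims C * Qm) := by
  ext p u
  rw [mul_E, E_mul]
  have hrhs : (Dcm dims C * Qm) (nd p) u = (ccnt C p.2.1.1 : ℝ) * Qm (nd p) u := by
    rw [Dcm, Matrix.diagonal_mul]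
    exact rfl
  rw [hrhs]
  refine (Finset.sum_eq_single p.1 ?_ ?_).trans ?_
  · intro k _ hk
    by_cases hu : u.1 ∈ C k
    · rw [dif_pos hu, Qtm, if_neg (fun hh => hk hh.symm)]
    · rw [dif_neg hu]
  · simp
  · by_cases hu : u.1 ∈ C p.1
    · rw [dif_pos hu, Qtm, if_pos rfl]
      exact rfl
    · rw [dif_neg hu]
      have : Qm (nd p) u = 0 := by
        refine hQbd _ _ fun hc => hu ?_
        have := p.2.1.2
        rw [show (nd p).1 = p.2.1.1 from rfl] at hc
        exact hc ▸ this
      rw [this, mul_zero]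

lemma Et_Ztm_E {Z : Matrix (Idx dims) (Idx dims) ℝ}
    (hass : Assumption1 Gr C) (hZ : Sparse Gr dims Z) :
    (Emat dims C)ᵀ * Ztm dims C Z * Emat dims C = Dcm dims C * Z * Dcm dims C := by
  ext t u
  rw [Matrix.mul_assoc, Et_mul]
  have hZE : ∀ s : CIdx dims C, (Ztm dims C Z * Emat dims C) s u
      = if h : u.1 ∈ C s.1 then Ztm dims C Z s ⟨s.1, ⟨u.1, h⟩, u.2⟩ else 0 := by
    intro s
    rw [mul_E]
    refine (Finset.sum_eq_single s.1 ?_ ?_).trans rfl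
    · intro k _ hk
      by_cases hu : u.1 ∈ C k
      · rw [dif_pos hu, Ztm, if_neg (fun hh => hk hh.symm)]
      · rw [dif_neg hu]
    · simp
  have hw : ∀ k : Fin q,
      (if h : t.1 ∈ C k then (Ztm dims C Z * Emat dims C) ⟨k, ⟨t.1, h⟩, t.2⟩ u else 0)
        = (if t.1 ∈ C k ∧ u.1 ∈ C k then (1:ℝ) else 0) *
          (((ccnt C t.1 : ℝ) * (ccnt C u.1) / (dcnt C t.1 u.1)) * Z t u) := by
    intro k
    by_cases ht : t.1 ∈ C k
    · rw [dif_pos ht, hZE]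
      by_cases hu : u.1 ∈ C k
      · rw [dif_pos hu, if_pos ⟨ht, hu⟩, one_mul, Ztm, if_pos rfl]
        exact rfl
      · rw [dif_neg hu, if_neg (fun hc => hu hc.2), zero_mul]
    · rw [dif_neg ht, if_neg (fun hc => ht hc.1), zero_mul]
  rw [Finset.sum_congr rfl fun k _ => hw k, ← Finset.sum_mul, Finset.sum_boole]
  have hrhs : (Dcm dims C * Z * Dcm dims C) t u
      = (ccnt C t.1 : ℝ) * Z t u * (ccnt C u.1 : ℝ) := by
    rw [Dcm, Matrix.mul_diagonal, Matrix.diagonal_mul]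
  rw [hrhs]
  have hcard : (Finset.univ.filter fun k => t.1 ∈ C k ∧ u.1 ∈ C k).card = dcnt C t.1 u.1 := rfl
  rw [hcard]
  by_cases hd : dcnt C t.1 u.1 = 0
  · have hne : t.1 ≠ u.1 := by
      intro hc
      have h1 : 0 < dcnt C t.1 u.1 := by
        obtain ⟨k, hk⟩ := hass.1 t.1
        exact Finset.card_pos.mpr ⟨k, by simp [hk, ← hc]⟩
      omega
    have hnadj : ¬ Gr.Adj t.1 u.1 := by
      intro hadj
      obtain ⟨k, hk1, hk2⟩ := ((hass.2 t.1 u.1 hne).mpr hadj)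
      have : 0 < dcnt C t.1 u.1 := Finset.card_pos.mpr ⟨k, by simp [hk1, hk2]⟩
      omega
    have hz0 : Z t u = 0 := by
      have := hZ t.1 u.1 hne hnadj t.2 u.2
      exact this
    rw [hz0, hd]
    simp
  · have hdr : (dcnt C t.1 u.1 : ℝ) ≠ 0 := Nat.cast_ne_zero.mpr hd
    field_simp

/-- selector of the rows of `E` belonging to clique `k` -/
def Sel (dims : Fin N → ℕ) (C : Fin q → Finset (Fin N)) (k : Fin q) :
    Matrix (CIdx dims C) (Idx dims) ℝ :=
  fun p t => if p.1 = k ∧ nd p = t then 1 else 0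

lemma Sel_mul {m : Type*} [Fintype m] (k : Fin q) (W : Matrix (Idx dims) m ℝ)
    (p : CIdx dims C) (u : m) :
    (Sel dims C k * W) p u = if p.1 = k then W (nd p) u else 0 := by
  simp only [Matrix.mul_apply, Sel, ite_mul, one_mul, zero_mul]
  by_cases h : p.1 = k
  · simp only [h, true_and]
    rw [Finset.sum_ite_eq]
    simp
  · simp [h]

lemma mul_Selt {m : Type*} [Fintype m] (k : Fin q) (Y : Matrix m (Idx dims) ℝ)
    (r : m) (p : CIdx dims C) :
    (Y * (Sel dims C k)ᵀ) r p = if p.1 = k then Y r (nd p) else 0 := by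
  simp only [Matrix.mul_apply, Matrix.transpose_apply, Sel, mul_ite, mul_one, mul_zero]
  by_cases h : p.1 = k
  · simp only [h, true_and]
    rw [Finset.sum_ite_eq]
    simp
  · simp [h]

lemma Selt_mulVec (k : Fin q) (x : CIdx dims C → ℝ) (t : Idx dims) :
    ((Sel dims C k)ᵀ *ᵥ x) t = if h : t.1 ∈ C k then x ⟨k, ⟨t.1, h⟩, t.2⟩ else 0 := by
  simp only [Matrix.mulVec, dotProduct, Matrix.transpose_apply, Sel]
  have h1 : ∀ s : CIdx dims C, (if s.1 = k ∧ nd s = t then (1:ℝ) else 0) * x s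
      = if nd s = t then (if s.1 = k then x s else 0) else 0 := by
    intro s
    by_cases h2 : nd s = t <;> by_cases h3 : s.1 = k <;> simp [h2, h3]
  rw [Finset.sum_congr rfl fun s _ => h1 s, sum_CIdx]
  by_cases h : t.1 ∈ C k
  · rw [dif_pos h]
    refine (Finset.sum_eq_single k ?_ ?_).trans ?_
    · intro b _ hb
      by_cases hbt : t.1 ∈ C b
      · rw [dif_pos hbt, if_neg hb]
      · rw [dif_neg hbt]
    · simp
    · rw [dif_pos h, if_pos rfl]
  · rw [dif_neg h]
    refine Finset.sum_eq_zero fun b _ => ?_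
    by_cases hbt : t.1 ∈ C b
    · rw [dif_pos hbt, if_neg]
      intro hc
      exact h (hc ▸ hbt)
    · rw [dif_neg hbt]

lemma quad_congr {ι κ : Type*} [Fintype ι] [Fintype κ]
    (M : Matrix κ κ ℝ) (B : Matrix ι κ ℝ) (x : ι → ℝ) :
    x ⬝ᵥ (B * M * Bᵀ) *ᵥ x = (Bᵀ *ᵥ x) ⬝ᵥ M *ᵥ (Bᵀ *ᵥ x) := by
  rw [← Matrix.mulVec_mulVec, ← Matrix.mulVec_mulVec, Matrix.dotProduct_mulVec x,
    ← Matrix.mulVec_transpose]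

lemma sum_mulVec' {ι κ : Type*} [Fintype ι] [Fintype κ] (M : κ → Matrix ι ι ℝ) (x : ι → ℝ) :
    (∑ k, M k) *ᵥ x = ∑ k, (M k) *ᵥ x := by
  funext i
  simp only [Matrix.mulVec, dotProduct, Matrix.sum_apply, Finset.sum_apply, Finset.sum_mul]
  exact Finset.sum_comm

lemma dotProduct_sum' {ι κ : Type*} [Fintype ι] [Fintype κ] (x : ι → ℝ) (v : κ → ι → ℝ) :
    x ⬝ᵥ (∑ k, v k) = ∑ k, x ⬝ᵥ v k := by
  simp only [dotProduct, Finset.sum_apply, Finset.mul_sum]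
  exact Finset.sum_comm

lemma posSemidef_sum {ι κ : Type*} [Fintype ι] [DecidableEq ι] [Fintype κ]
    (M : κ → Matrix ι ι ℝ) (h : ∀ k, (M k).PosSemidef) :
    (∑ k, M k).PosSemidef := by
  refine Matrix.PosSemidef.of_dotProduct_mulVec_nonneg ?_ ?_
  · unfold Matrix.IsHermitian
    rw [Matrix.conjTranspose_sum]
    exact Finset.sum_congr rfl fun k _ => (h k).1
  · intro x
    rw [sum_mulVec', dotProduct_sum']
    exact Finset.sum_nonneg fun k _ => (h k).dotProduct_mulVec_nonneg x

/-- square-root diagonal -/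
noncomputable def Dhm (dims : Fin N → ℕ) (C : Fin q → Finset (Fin N)) :
    Matrix (Idx dims) (Idx dims) ℝ :=
  Matrix.diagonal fun p => Real.sqrt (ccnt C p.1 : ℝ)

lemma blkdiag_comm {X : Matrix (Idx dims) (Idx dims) ℝ} (hX : BlkDiag dims X)
    (f : Fin N → ℝ) :
    (Matrix.diagonal fun p : Idx dims => f p.1) * X = X * Matrix.diagonal fun p : Idx dims => f p.1 := by
  ext t u
  rw [Matrix.diagonal_mul, Matrix.mul_diagonal]
  by_cases h : t.1 = u.1
  · rw [h, mul_comm]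
  · rw [hX t u h, mul_zero, zero_mul]

lemma Dhm_mul_Dhm : Dhm dims C * Dhm dims C = Dcm dims C := by
  rw [Dhm, Dcm, Matrix.diagonal_mul_diagonal]
  refine congrArg Matrix.diagonal (funext fun p => ?_)
  exact Real.mul_self_sqrt (Nat.cast_nonneg _)

lemma Qtm_eq_sum (Qm : Matrix (Idx dims) (Idx dims) ℝ) :
    Qtm dims C Qm = ∑ k : Fin q, Sel dims C k * (Dcm dims C * Qm) * (Sel dims C k)ᵀ := by
  ext p r
  rw [Matrix.sum_apply]
  have h1 : ∀ k, (Sel dims C k * (Dcm dims C * Qm) * (Sel dims C k)ᵀ) p r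
      = if r.1 = k then (if p.1 = k then (Dcm dims C * Qm) (nd p) (nd r) else 0) else 0 := by
    intro k
    rw [mul_Selt]
    by_cases h : r.1 = k
    · simp [h, Sel_mul]
    · simp [h]
  rw [Finset.sum_congr rfl fun k _ => h1 k]
  refine Eq.symm ((Finset.sum_eq_single r.1 ?_ ?_).trans ?_)
  · intro k _ hk
    exact if_neg fun hc => hk hc.symm
  · simp
  · rw [if_pos rfl]
    by_cases h : p.1 = r.1
    · rw [if_pos h, Qtm, if_pos h, Dcm, Matrix.diagonal_mul]
      exact rfl
    · rw [if_neg h, Qtm, if_neg h]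

lemma DcmQm_eq (Qm : Matrix (Idx dims) (Idx dims) ℝ) (hQbd : BlkDiag dims Qm) :
    Dcm dims C * Qm = Dhm dims C * Qm * (Dhm dims C)ᵀ := by
  have ht : (Dhm dims C)ᵀ = Dhm dims C := Matrix.diagonal_transpose _
  have hcomm : Dhm dims C * Qm = Qm * Dhm dims C :=
    blkdiag_comm hQbd (fun i => Real.sqrt ((ccnt C i : ℝ)))
  rw [ht, Matrix.mul_assoc, ← hcomm, ← Matrix.mul_assoc, Dhm_mul_Dhm]

lemma conjT_eq_transpose {ι κ : Type*} (B : Matrix ι κ ℝ) : Bᴴ = Bᵀ := by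
  ext i j
  simp [Matrix.conjTranspose_apply]

lemma posSemidef_congr {ι κ : Type*} [Fintype ι] [Fintype κ]
    {M : Matrix κ κ ℝ} (hM : M.PosSemidef) (B : Matrix ι κ ℝ) :
    (B * M * Bᵀ).PosSemidef := by
  have h := hM.mul_mul_conjTranspose_same B
  rwa [conjT_eq_transpose] at h

lemma Qtm_posSemidef {Qm : Matrix (Idx dims) (Idx dims) ℝ}
    (hQbd : BlkDiag dims Qm) (hQpsd : Qm.PosSemidef) :
    (Qtm dims C Qm).PosSemidef := by
  rw [Qtm_eq_sum]
  refine _root_.posSemidef_sum _ fun k => ?_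
  have hW : (Dcm dims C * Qm).PosSemidef := by
    rw [DcmQm_eq Qm hQbd]
    exact posSemidef_congr hQpsd _
  exact posSemidef_congr hW (Sel dims C k)

lemma Qtm_posDef {Qm : Matrix (Idx dims) (Idx dims) ℝ}
    (hQbd : BlkDiag dims Qm) (hQpd : Qm.PosDef) :
    (Qtm dims C Qm).PosDef := by
  have hpsd := Qtm_posSemidef (C := C) hQbd hQpd.posSemidef
  have hW : (Dcm dims C * Qm).PosSemidef := by
    rw [DcmQm_eq Qm hQbd]
    exact posSemidef_congr hQpd.posSemidef _
  refine Matrix.PosDef.of_dotProduct_mulVec_pos hpsd.1 fun x hx => ?_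
  obtain ⟨p0, hp0⟩ := Function.ne_iff.mp hx
  have hsum : (star x) ⬝ᵥ (Qtm dims C Qm) *ᵥ x
      = ∑ k : Fin q, ((Sel dims C k)ᵀ *ᵥ x) ⬝ᵥ (Dcm dims C * Qm) *ᵥ ((Sel dims C k)ᵀ *ᵥ x) := by
    rw [show (star x) = x from funext fun i => star_trivial _, Qtm_eq_sum,
      sum_mulVec', dotProduct_sum']
    exact Finset.sum_congr rfl fun k _ => quad_congr _ _ x
  rw [hsum]
  have hterm : ∀ k, 0 ≤ ((Sel dims C k)ᵀ *ᵥ x) ⬝ᵥ (Dcm dims C * Qm) *ᵥ ((Sel dims C k)ᵀ *ᵥ x) := by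
    intro k
    have h := hW.dotProduct_mulVec_nonneg ((Sel dims C k)ᵀ *ᵥ x)
    rwa [show star ((Sel dims C k)ᵀ *ᵥ x) = ((Sel dims C k)ᵀ *ᵥ x) from
      funext fun i => star_trivial _] at h
  have hpos : 0 < ((Sel dims C p0.1)ᵀ *ᵥ x) ⬝ᵥ (Dcm dims C * Qm) *ᵥ ((Sel dims C p0.1)ᵀ *ᵥ x) := by
    set w := (Sel dims C p0.1)ᵀ *ᵥ x with hw
    have hwne : w ≠ 0 := by
      intro hc
      have h := congrFun hc (nd p0)
      rw [hw, Selt_mulVec] at h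
      obtain ⟨k0, ⟨j0, hj0⟩, a0⟩ := p0
      simp only [nd] at h
      replace h := (dif_pos hj0).symm.trans h
      exact hp0 h
    have hDw : Dhm dims C *ᵥ w ≠ 0 := by
      intro hc
      obtain ⟨t0, ht0⟩ := Function.ne_iff.mp hwne
      have h := congrFun hc t0
      rw [Dhm, Matrix.mulVec_diagonal] at h
      have hs : Real.sqrt (ccnt C t0.1 : ℝ) ≠ 0 := by
        intro hcc
        have h0 : ((ccnt C t0.1 : ℝ)) = 0 := Real.sqrt_eq_zero (Nat.cast_nonneg _) |>.mp hcc
        rw [hw, Selt_mulVec] at ht0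
        by_cases hmem : t0.1 ∈ C p0.1
        · have hpos2 : 0 < ccnt C t0.1 := Finset.card_pos.mpr ⟨p0.1, by simp [hmem]⟩
          rw [Nat.cast_eq_zero] at h0
          omega
        · rw [dif_neg hmem] at ht0
          exact ht0 rfl
      refine ht0 ?_
      rcases mul_eq_zero.mp h with h | h
      · exact absurd h hs
      · exact h
    have hq := hQpd.dotProduct_mulVec_pos hDw
    rw [show star (Dhm dims C *ᵥ w) = (Dhm dims C *ᵥ w) from funext fun i => star_trivial _] at hq
    have hDhT : (Dhm dims C)ᵀ = Dhm dims C := Matrix.diagonal_transpose _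
    have heq : w ⬝ᵥ (Dcm dims C * Qm) *ᵥ w
        = (Dhm dims C *ᵥ w) ⬝ᵥ Qm *ᵥ (Dhm dims C *ᵥ w) := by
      rw [DcmQm_eq Qm hQbd, quad_congr Qm (Dhm dims C) w, hDhT]
    rw [heq]
    exact hq
  exact Finset.sum_pos' (fun k _ => hterm k) ⟨p0.1, Finset.mem_univ _, hpos⟩

lemma star_vec_eq {ι : Type*} (x : ι → ℝ) : star x = x := funext fun _ => star_trivial _

lemma posDef_sub_smul_one {ι : Type*} [Fintype ι] [DecidableEq ι] {M : Matrix ι ι ℝ}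
    (hM : M.PosDef) : ∃ η : ℝ, 0 < η ∧ (M - η • 1).PosSemidef := by
  cases isEmpty_or_nonempty ι with
  | inl h =>
    refine ⟨1, one_pos, Matrix.PosSemidef.of_dotProduct_mulVec_nonneg ?_ fun x => ?_⟩
    · ext i j
      exact isEmptyElim i
    · simp [dotProduct]
  | inr h =>
    set η := Finset.univ.inf' Finset.univ_nonempty hM.1.eigenvalues with hη
    refine ⟨η, ?_, ?_⟩
    · exact (Finset.lt_inf'_iff Finset.univ_nonempty).mpr fun i _ => hM.eigenvalues_pos i
    · have hst := hM.1.spectral_theorem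
      set U : Matrix ι ι ℝ := (Matrix.IsHermitian.eigenvectorUnitary hM.1 : Matrix ι ι ℝ) with hUdef
      have hU : U * star U = 1 :=
        Matrix.mem_unitaryGroup_iff.mp (Matrix.IsHermitian.eigenvectorUnitary hM.1).2
      have h1 : M = U * Matrix.diagonal (fun i => hM.1.eigenvalues i) * star U := by
        rw [Unitary.conjStarAlgAut_apply] at hst
        convert hst using 3 <;> rfl
      have hsm : (η • (1 : Matrix ι ι ℝ)) = Matrix.diagonal (fun _ => η) := by
        ext i j
        by_cases hij : i = j <;> simp [hij, Matrix.one_apply, Matrix.diagonal_apply]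
      have key : M - η • 1 = U * (Matrix.diagonal (fun i => hM.1.eigenvalues i - η)) * star U := by
        have h3 : Matrix.diagonal (fun i => hM.1.eigenvalues i - η)
            = Matrix.diagonal (fun i => hM.1.eigenvalues i) - Matrix.diagonal (fun _ : ι => η) := by
          rw [Matrix.diagonal_sub]
        rw [h3, Matrix.mul_sub, Matrix.sub_mul, ← h1]
        congr 1
        rw [← hsm, Matrix.mul_smul, Matrix.mul_one, Matrix.smul_mul, hU]
      rw [key]
      have hd : (Matrix.diagonal (fun i => hM.1.eigenvalues i - η)).PosSemidef := by
        refine Matrix.posSemidef_diagonal_iff.mpr fun i => ?_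
        have h5 : η ≤ hM.1.eigenvalues i := Finset.inf'_le _ (Finset.mem_univ i)
        linarith
      have h4 := hd.mul_mul_conjTranspose_same U
      rwa [← Matrix.star_eq_conjTranspose] at h4

lemma exists_rho {ι : Type*} [Fintype ι] [DecidableEq ι] {S W : Matrix ι ι ℝ}
    (hS : S.IsHermitian) (hW : W.PosSemidef)
    (hker : ∀ x : ι → ℝ, x ≠ 0 → W *ᵥ x = 0 → 0 < x ⬝ᵥ S *ᵥ x) :
    ∃ ρ : ℝ, (S + ρ • W).PosDef := by
  classical
  have hgnn : ∀ v : ι → ℝ, 0 ≤ v ⬝ᵥ W *ᵥ v := fun v => by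
    have h := hW.dotProduct_mulVec_nonneg v
    rwa [star_vec_eq] at h
  have hherm : ∀ ρ : ℝ, (S + ρ • W).IsHermitian := by
    intro ρ
    have h1 : (ρ • W)ᴴ = ρ • W := by
      rw [Matrix.conjTranspose_smul, hW.1]
      congr 1
    exact Matrix.IsHermitian.add hS h1
  cases isEmpty_or_nonempty ι with
  | inl h =>
    exact ⟨0, Matrix.PosDef.of_dotProduct_mulVec_pos (hherm 0) fun x hx => absurd (funext fun i => isEmptyElim i) hx⟩
  | inr h =>
    set E := EuclideanSpace ℝ ι with hE
    let f : E → ℝ := fun x => x ⬝ᵥ S *ᵥ x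
    let g : E → ℝ := fun x => x ⬝ᵥ W *ᵥ x
    have hcont : ∀ (T : Matrix ι ι ℝ), Continuous fun x : E => x ⬝ᵥ T *ᵥ x := by
      intro T
      have h1 : Continuous fun x : ι → ℝ => x ⬝ᵥ T *ᵥ x := by
        simp only [dotProduct, Matrix.mulVec]
        refine continuous_finset_sum _ fun i _ => ?_
        exact (continuous_apply i).mul
          (continuous_finset_sum _ fun j _ => continuous_const.mul (continuous_apply j))
      exact h1.comp (PiLp.continuousLinearEquiv 2 ℝ (fun _ : ι => ℝ)).continuous
    have hfc : Continuous f := hcont S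
    have hgc : Continuous g := hcont W
    set K := Metric.sphere (0:E) 1 ∩ {x : E | f x ≤ 0} with hK
    have hKc : IsCompact K := (isCompact_sphere 0 1).inter_right
      (isClosed_le hfc continuous_const)
    obtain ⟨ρ, hρnn, hkey⟩ : ∃ ρ : ℝ, 0 ≤ ρ ∧ ∀ y : E, ‖y‖ = 1 → 0 < f y + ρ * g y := by
      by_cases hKe : K.Nonempty
      · obtain ⟨x0, hx0K, hx0min⟩ := hKc.exists_isMinOn hKe hgc.continuousOn
        obtain ⟨x1, hx1K, hx1min⟩ := hKc.exists_isMinOn hKe hfc.continuousOn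
        rw [isMinOn_iff] at hx0min hx1min
        set m := g x0 with hm
        set μ := f x1 with hμdef
        have hμ : μ ≤ 0 := hx1K.2
        have hx0ne : (x0 : ι → ℝ) ≠ 0 := by
          intro hc
          have h1 : ‖x0‖ = 1 := mem_sphere_zero_iff_norm.mp hx0K.1
          have h2 : x0 = (0 : E) := WithLp.ofLp_injective 2 hc
          rw [h2] at h1
          simp at h1
        have hmpos : 0 < m := by
          rcases lt_or_eq_of_le (hgnn x0) with h1 | h1
          · exact h1
          · exfalso
            have hWx0 : W *ᵥ (x0 : ι → ℝ) = 0 := by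
              have := (hW.dotProduct_mulVec_zero_iff (x0 : ι → ℝ))
              rw [star_vec_eq] at this
              exact this.mp h1.symm
            have := hker x0 hx0ne hWx0
            have hf0 : f x0 ≤ 0 := hx0K.2
            exact absurd this (not_lt.mpr hf0)
        refine ⟨(1 - μ)/m, div_nonneg (by linarith) hmpos.le, fun y hy => ?_⟩
        by_cases hfy : f y ≤ 0
        · have hyK : y ∈ K := ⟨mem_sphere_zero_iff_norm.mpr hy, hfy⟩
          have h1 : m ≤ g y := hx0min y hyK
          have h2 : μ ≤ f y := hx1min y hyK
          have h3 : (1 - μ)/m * m ≤ (1 - μ)/m * g y :=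
            mul_le_mul_of_nonneg_left h1 (div_nonneg (by linarith) hmpos.le)
          rw [div_mul_cancel₀ _ hmpos.ne'] at h3
          linarith
        · push_neg at hfy
          have h1 : 0 ≤ g y := hgnn y
          nlinarith [mul_nonneg (div_nonneg (sub_nonneg.mpr (by linarith : μ ≤ (1:ℝ))) hmpos.le) h1]
      · refine ⟨0, le_refl _, fun y hy => ?_⟩
        have : y ∉ K := fun hc => hKe ⟨y, hc⟩
        rw [hK] at this
        simp only [Set.mem_inter_iff, not_and, Set.mem_setOf_eq] at this
        have := this (mem_sphere_zero_iff_norm.mpr hy)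
        push_neg at this
        linarith [this]
    refine ⟨ρ, Matrix.PosDef.of_dotProduct_mulVec_pos (hherm ρ) fun x hx => ?_⟩
    rw [star_vec_eq]
    have hq : x ⬝ᵥ (S + ρ • W) *ᵥ x = x ⬝ᵥ S *ᵥ x + ρ * (x ⬝ᵥ W *ᵥ x) := by
      rw [Matrix.add_mulVec, dotProduct_add, Matrix.smul_mulVec,
        dotProduct_smul, smul_eq_mul]
    rw [hq]
    let xE : E := (WithLp.equiv 2 (ι → ℝ)).symm x
    have hxE : xE ≠ 0 := fun hc => hx (congrArg WithLp.ofLp hc)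
    have hn : ‖xE‖ ≠ 0 := norm_ne_zero_iff.mpr hxE
    set u : E := ‖xE‖⁻¹ • xE with hu
    have hu1 : ‖u‖ = 1 := norm_smul_inv_norm hxE
    have hval := hkey u hu1
    have hsc : ∀ (T : Matrix ι ι ℝ) (a : ℝ) (v : ι → ℝ),
        (a • v) ⬝ᵥ T *ᵥ (a • v) = a * a * (v ⬝ᵥ T *ᵥ v) := by
      intro T a v
      rw [Matrix.mulVec_smul, smul_dotProduct, dotProduct_smul]
      simp [smul_eq_mul]
      ring
    have hfu : f u = ‖xE‖⁻¹ * ‖xE‖⁻¹ * (x ⬝ᵥ S *ᵥ x) := hsc S _ x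
    have hgu : g u = ‖xE‖⁻¹ * ‖xE‖⁻¹ * (x ⬝ᵥ W *ᵥ x) := hsc W _ x
    rw [hfu, hgu] at hval
    have ha : 0 < ‖xE‖⁻¹ * ‖xE‖⁻¹ :=
      mul_pos (inv_pos.mpr (lt_of_le_of_ne (norm_nonneg _) (Ne.symm hn)))
        (inv_pos.mpr (lt_of_le_of_ne (norm_nonneg _) (Ne.symm hn)))
    nlinarith [hval, ha]

/-- inverse diagonal -/
noncomputable def Dinvm (dims : Fin N → ℕ) (C : Fin q → Finset (Fin N)) :
    Matrix (Idx dims) (Idx dims) ℝ :=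
  Matrix.diagonal fun p => ((ccnt C p.1 : ℝ))⁻¹

lemma ccnt_ne {i : Fin N} (hass : Assumption1 Gr C) : ((ccnt C i : ℝ)) ≠ 0 :=
  Nat.cast_ne_zero.mpr (ccnt_pos hass i).ne'

lemma D_mul_Di (hass : Assumption1 Gr C) : Dcm dims C * Dinvm dims C = 1 := by
  rw [Dcm, Dinvm, Matrix.diagonal_mul_diagonal, ← Matrix.diagonal_one]
  refine congrArg Matrix.diagonal (funext fun p => ?_)
  exact mul_inv_cancel₀ (ccnt_ne hass)

lemma Di_mul_D (hass : Assumption1 Gr C) : Dinvm dims C * Dcm dims C = 1 := by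
  rw [Dcm, Dinvm, Matrix.diagonal_mul_diagonal, ← Matrix.diagonal_one]
  refine congrArg Matrix.diagonal (funext fun p => ?_)
  exact inv_mul_cancel₀ (ccnt_ne hass)

lemma EtE_inv (hass : Assumption1 Gr C) :
    ((Emat dims C)ᵀ * Emat dims C)⁻¹ = Dinvm dims C := by
  rw [EtE]
  exact Matrix.inv_eq_right_inv (D_mul_Di hass)

lemma N0_eq (hass : Assumption1 Gr C) :
    N0 dims C = 1 - Emat dims C * Dinvm dims C * (Emat dims C)ᵀ := by
  unfold N0
  rw [EtE_inv hass]

/- chain (right-associated) rewriting lemmas -/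

lemma c_EtE {m : Type*} [Fintype m] (X : Matrix (Idx dims) m ℝ) :
    (Emat dims C)ᵀ * (Emat dims C * X) = Dcm dims C * X := by
  rw [← Matrix.mul_assoc, EtE]

lemma c_DDi {m : Type*} [Fintype m] (hass : Assumption1 Gr C) (X : Matrix (Idx dims) m ℝ) :
    Dcm dims C * (Dinvm dims C * X) = X := by
  rw [← Matrix.mul_assoc, D_mul_Di hass, Matrix.one_mul]

lemma c_DiD {m : Type*} [Fintype m] (hass : Assumption1 Gr C) (X : Matrix (Idx dims) m ℝ) :
    Dinvm dims C * (Dcm dims C * X) = X := by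
  rw [← Matrix.mul_assoc, Di_mul_D hass, Matrix.one_mul]

lemma c_QtE {m : Type*} [Fintype m] {Qm : Matrix (Idx dims) (Idx dims) ℝ}
    (hQbd : BlkDiag dims Qm) (X : Matrix (Idx dims) m ℝ) :
    Qtm dims C Qm * (Emat dims C * X) = Emat dims C * (Dcm dims C * (Qm * X)) := by
  rw [← Matrix.mul_assoc, Qtm_mul_E hQbd, Matrix.mul_assoc, Matrix.mul_assoc]

lemma c_DQm {m : Type*} [Fintype m] {Qm : Matrix (Idx dims) (Idx dims) ℝ}
    (hQbd : BlkDiag dims Qm) (X : Matrix (Idx dims) m ℝ) :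
    Dcm dims C * (Qm * X) = Qm * (Dcm dims C * X) := by
  have h : Dcm dims C * Qm = Qm * Dcm dims C := by
    rw [Dcm]
    exact blkdiag_comm hQbd (fun i => (ccnt C i : ℝ))
  rw [← Matrix.mul_assoc, h, Matrix.mul_assoc]

lemma c_EtZtE {m : Type*} [Fintype m] {Z : Matrix (Idx dims) (Idx dims) ℝ}
    (hass : Assumption1 Gr C) (hZ : Sparse Gr dims Z) (X : Matrix (Idx dims) m ℝ) :
    (Emat dims C)ᵀ * (Ztm dims C Z * (Emat dims C * X))
      = Dcm dims C * (Z * (Dcm dims C * X)) := by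
  rw [← Matrix.mul_assoc, ← Matrix.mul_assoc, Et_Ztm_E hass hZ,
    Matrix.mul_assoc, Matrix.mul_assoc]

lemma Qtm_transpose {Qm : Matrix (Idx dims) (Idx dims) ℝ}
    (hQbd : BlkDiag dims Qm) (hQmT : Qmᵀ = Qm) :
    (Qtm dims C Qm)ᵀ = Qtm dims C Qm := by
  ext p r
  rw [Matrix.transpose_apply]
  show Qtm dims C Qm r p = Qtm dims C Qm p r
  unfold Qtm
  by_cases h : p.1 = r.1
  · rw [if_pos h.symm, if_pos h]
    have hsym : Qm (nd r) (nd p) = Qm (nd p) (nd r) := by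
      conv_lhs => rw [← hQmT]
      rfl
    by_cases hnode : p.2.1.1 = r.2.1.1
    · rw [hsym, hnode]
    · rw [hQbd (nd r) (nd p) (fun hc => hnode hc.symm), hQbd (nd p) (nd r) hnode,
        mul_zero, mul_zero]
  · rw [if_neg (fun hc => h hc.symm), if_neg h]

lemma c_EtQt {Qm : Matrix (Idx dims) (Idx dims) ℝ}
    (hQbd : BlkDiag dims Qm) (hQmT : Qmᵀ = Qm) :
    (Emat dims C)ᵀ * Qtm dims C Qm = Dcm dims C * (Qm * (Emat dims C)ᵀ) := by
  have h := congrArg Matrix.transpose (Qtm_mul_E (C := C) hQbd)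
  rw [Matrix.transpose_mul, Matrix.transpose_mul, Qtm_transpose hQbd hQmT] at h
  rw [h, Matrix.transpose_mul, hQmT, Dcm, Matrix.diagonal_transpose, ← Dcm]
  have hc : Qm * Dcm dims C = Dcm dims C * Qm := by
    rw [Dcm]
    exact (blkdiag_comm hQbd (fun i => (ccnt C i : ℝ))).symm
  rw [hc, Matrix.mul_assoc]

/-- the projection onto the range of `E` -/
noncomputable def Pm (dims : Fin N → ℕ) (C : Fin q → Finset (Fin N)) :
    Matrix (CIdx dims C) (CIdx dims C) ℝ :=
  Emat dims C * Dinvm dims C * (Emat dims C)ᵀ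

/-- `E X Eᵀ` -/
noncomputable def Gm (dims : Fin N → ℕ) (C : Fin q → Finset (Fin N))
    (X : Matrix (Idx dims) (Idx dims) ℝ) : Matrix (CIdx dims C) (CIdx dims C) ℝ :=
  Emat dims C * X * (Emat dims C)ᵀ

variable {Qm Z : Matrix (Idx dims) (Idx dims) ℝ}

lemma Pm_Qt (hass : Assumption1 Gr C) (hQbd : BlkDiag dims Qm) (hQmT : Qmᵀ = Qm) :
    Pm dims C * Qtm dims C Qm = Gm dims C Qm := by
  unfold Pm Gm
  simp only [Matrix.mul_assoc]
  rw [c_EtQt hQbd hQmT, c_DiD hass]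

lemma Qt_Pm (hass : Assumption1 Gr C) (hQbd : BlkDiag dims Qm) :
    Qtm dims C Qm * Pm dims C = Gm dims C Qm := by
  unfold Pm Gm
  simp only [Matrix.mul_assoc]
  rw [c_QtE hQbd, c_DQm hQbd, c_DDi hass]

lemma Pm_Pm (hass : Assumption1 Gr C) : Pm dims C * Pm dims C = Pm dims C := by
  unfold Pm
  simp only [Matrix.mul_assoc]
  rw [c_EtE, c_DiD hass]

lemma Gm_Pm (hass : Assumption1 Gr C) (X : Matrix (Idx dims) (Idx dims) ℝ) :
    Gm dims C X * Pm dims C = Gm dims C X := by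
  unfold Gm Pm
  simp only [Matrix.mul_assoc]
  rw [c_EtE, c_DDi hass]

lemma Pm_transpose : (Pm dims C)ᵀ = Pm dims C := by
  unfold Pm
  rw [Matrix.transpose_mul, Matrix.transpose_mul, Matrix.transpose_transpose,
    Dinvm, Matrix.diagonal_transpose, ← Matrix.mul_assoc]

lemma N0_eq' (hass : Assumption1 Gr C) : N0 dims C = 1 - Pm dims C := by
  rw [N0_eq hass]
  rfl

lemma N0_transpose (hass : Assumption1 Gr C) : (N0 dims C)ᵀ = N0 dims C := by
  rw [N0_eq' hass, Matrix.transpose_sub, Matrix.transpose_one, Pm_transpose]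

lemma eta_cond (hass : Assumption1 Gr C) (hQbd : BlkDiag dims Qm) (hQpd : Qm.PosDef) :
    ∃ η : ℝ, 0 < η ∧
      (N0 dims C * Qtm dims C Qm + Qtm dims C Qm * N0 dims C - η • N0 dims C).PosSemidef := by
  obtain ⟨η, hη, hpsd⟩ := posDef_sub_smul_one (Qtm_posDef (C := C) hQbd hQpd)
  refine ⟨η, hη, ?_⟩
  have hQmT : Qmᵀ = Qm := by
    rw [← conjT_eq_transpose]
    exact hQpd.1
  have hN0 : N0 dims C = 1 - Pm dims C := N0_eq' hass
  have hN0Qt : N0 dims C * Qtm dims C Qm = Qtm dims C Qm - Gm dims C Qm := by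
    rw [hN0, Matrix.sub_mul, Matrix.one_mul, Pm_Qt hass hQbd hQmT]
  have hQtN0 : Qtm dims C Qm * N0 dims C = Qtm dims C Qm - Gm dims C Qm := by
    rw [hN0, Matrix.mul_sub, Matrix.mul_one, Qt_Pm hass hQbd]
  have hGN0 : Gm dims C Qm * N0 dims C = 0 := by
    rw [hN0, Matrix.mul_sub, Matrix.mul_one, Gm_Pm hass, sub_self]
  have hN0N0 : N0 dims C * N0 dims C = N0 dims C := by
    rw [hN0, Matrix.sub_mul, Matrix.one_mul, Matrix.mul_sub, Matrix.mul_one, Pm_Pm hass,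
      sub_self, sub_zero]
  have key : N0 dims C * (Qtm dims C Qm + Qtm dims C Qm - η • 1) * N0 dims C
      = N0 dims C * Qtm dims C Qm + Qtm dims C Qm * N0 dims C - η • N0 dims C := by
    rw [Matrix.mul_sub, Matrix.mul_add, Matrix.mul_smul, Matrix.mul_one,
      Matrix.sub_mul, Matrix.add_mul, Matrix.smul_mul, hN0N0, hN0Qt,
      Matrix.sub_mul, hQtN0, hGN0, sub_zero]
  have hX : (Qtm dims C Qm + Qtm dims C Qm - η • 1).PosSemidef := by
    have h2 : Qtm dims C Qm + Qtm dims C Qm - η • 1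
        = (Qtm dims C Qm - η • 1) + Qtm dims C Qm := by abel
    rw [h2]
    exact Matrix.PosSemidef.add hpsd (Qtm_posSemidef hQbd hQpd.posSemidef)
  have h3 := posSemidef_congr hX (N0 dims C)
  rw [N0_transpose hass] at h3
  rwa [key] at h3

lemma gain_eq (hass : Assumption1 Gr C) (hZ : Sparse Gr dims Z)
    (hQbd : BlkDiag dims Qm) (hQpd : Qm.PosDef) :
    Z * Qm⁻¹ = gainCl dims C (Ztm dims C Z) (Qtm dims C Qm) := by
  have hdet : IsUnit Qm.det := isUnit_iff_ne_zero.mpr (ne_of_gt hQpd.det_pos)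
  have hqq : Qm * Qm⁻¹ = 1 := Matrix.mul_nonsing_inv _ hdet
  have hqq' : Qm⁻¹ * Qm = 1 := Matrix.nonsing_inv_mul _ hdet
  have hQtdet : IsUnit (Qtm dims C Qm).det :=
    isUnit_iff_ne_zero.mpr (ne_of_gt (Qtm_posDef (C := C) hQbd hQpd).det_pos)
  have hDQ : Dcm dims C * Qm = Qm * Dcm dims C := by
    rw [Dcm]
    exact blkdiag_comm hQbd (fun i => (ccnt C i : ℝ))
  have hDQinv : Dcm dims C * Qm⁻¹ = Qm⁻¹ * Dcm dims C := by
    have e1 : Qm⁻¹ * (Qm * (Dcm dims C * Qm⁻¹)) = Dcm dims C * Qm⁻¹ := by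
      rw [← Matrix.mul_assoc, hqq', Matrix.one_mul]
    have e2 : Qm⁻¹ * (Qm * (Dcm dims C * Qm⁻¹)) = Qm⁻¹ * Dcm dims C := by
      rw [show Qm * (Dcm dims C * Qm⁻¹) = Dcm dims C from by
        rw [← Matrix.mul_assoc, ← hDQ, Matrix.mul_assoc, hqq, Matrix.mul_one]]
    exact e1.symm.trans e2
  have h1 : Qtm dims C Qm * (Emat dims C * (Qm⁻¹ * Dinvm dims C)) = Emat dims C := by
    rw [c_QtE hQbd,
      show Qm * (Qm⁻¹ * Dinvm dims C) = Dinvm dims C from by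
        rw [← Matrix.mul_assoc, hqq, Matrix.one_mul],
      D_mul_Di hass, Matrix.mul_one]
  have h2 : (Qtm dims C Qm)⁻¹ * Emat dims C = Emat dims C * (Qm⁻¹ * Dinvm dims C) := by
    conv_lhs => rw [← h1]
    rw [← Matrix.mul_assoc, Matrix.nonsing_inv_mul _ hQtdet, Matrix.one_mul]
  unfold gainCl
  rw [EtE_inv hass,
    Matrix.mul_assoc (Dinvm dims C * (Emat dims C)ᵀ * Ztm dims C Z) _ _, h2]
  simp only [Matrix.mul_assoc]
  rw [c_EtZtE hass hZ, c_DiD hass,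
    show Dcm dims C * (Qm⁻¹ * Dinvm dims C) = Qm⁻¹ from by
      rw [← Matrix.mul_assoc, hDQinv, Matrix.mul_assoc, D_mul_Di hass, Matrix.mul_one]]

lemma bilin_congr {ι κ : Type*} [Fintype ι] [Fintype κ]
    (M : Matrix κ κ ℝ) (B : Matrix ι κ ℝ) (u v : ι → ℝ) :
    u ⬝ᵥ (B * M * Bᵀ) *ᵥ v = (Bᵀ *ᵥ u) ⬝ᵥ M *ᵥ (Bᵀ *ᵥ v) := by
  rw [← Matrix.mulVec_mulVec, ← Matrix.mulVec_mulVec, Matrix.dotProduct_mulVec u,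
    ← Matrix.mulVec_transpose]

lemma posSemidef_fromBlocks_diag {ι : Type*} [Fintype ι] [DecidableEq ι]
    {X Y : Matrix ι ι ℝ} (hX : X.PosSemidef) (hY : Y.PosSemidef) :
    (Matrix.fromBlocks X 0 0 Y).PosSemidef := by
  refine Matrix.PosSemidef.of_dotProduct_mulVec_nonneg ?_ ?_
  · unfold Matrix.IsHermitian
    rw [Matrix.fromBlocks_conjTranspose, hX.1, hY.1, Matrix.conjTranspose_zero]
  · intro x
    have h1 := hX.dotProduct_mulVec_nonneg (x ∘ Sum.inl)
    have h2 := hY.dotProduct_mulVec_nonneg (x ∘ Sum.inr)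
    rw [star_vec_eq] at h1 h2
    have hx : star x ⬝ᵥ (Matrix.fromBlocks X 0 0 Y) *ᵥ x
        = (x ∘ Sum.inl) ⬝ᵥ X *ᵥ (x ∘ Sum.inl) + (x ∘ Sum.inr) ⬝ᵥ Y *ᵥ (x ∘ Sum.inr) := by
      rw [star_vec_eq]
      conv_lhs => rw [← Sum.elim_comp_inl_inr x]
      rw [Matrix.fromBlocks_mulVec]
      simp only [Matrix.zero_mulVec, add_zero, zero_add, Sum.elim_comp_inl, Sum.elim_comp_inr]
      rw [sumElim_dotProduct_sumElim]
    rw [hx]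
    exact add_nonneg h1 h2

lemma N0_posSemidef (hass : Assumption1 Gr C) : (N0 dims C).PosSemidef := by
  have hN0N0 : N0 dims C * N0 dims C = N0 dims C := by
    rw [N0_eq' hass, Matrix.sub_mul, Matrix.one_mul, Matrix.mul_sub, Matrix.mul_one,
      Pm_Pm hass, sub_self, sub_zero]
  have h : N0 dims C * 1 * (N0 dims C)ᵀ = N0 dims C := by
    rw [Matrix.mul_one, N0_transpose hass, hN0N0]
  have := posSemidef_congr (Matrix.PosSemidef.one) (N0 dims C)
  rwa [h] at this

lemma Mmat_posSemidef (hass : Assumption1 Gr C) : (Mmat dims C).PosSemidef := by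
  unfold Mmat
  exact posSemidef_fromBlocks_diag (N0_posSemidef hass) (N0_posSemidef hass)

variable {A B : Matrix (Idx dims) (Idx dims) ℝ}

lemma T_Pm (hass : Assumption1 Gr C) (hZ : Sparse Gr dims Z)
    (hQbd : BlkDiag dims Qm) (hQmT : Qmᵀ = Qm) :
    (tilde dims C A * Qtm dims C Qm + tilde dims C B * Ztm dims C Z) * Pm dims C
      = Gm dims C (A * Qm + B * Z) := by
  unfold tilde Pm Gm
  rw [EtE_inv hass]
  simp only [Matrix.add_mul, Matrix.mul_add, Matrix.mul_assoc]
  rw [c_QtE hQbd, c_DQm hQbd, c_DDi hass, c_EtE, c_DiD hass]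
  rw [c_EtZtE hass hZ, c_DDi hass, c_DiD hass]

lemma phi_ker (hass : Assumption1 Gr C) (hZ : Sparse Gr dims Z)
    (hQbd : BlkDiag dims Qm) (hQpd : Qm.PosDef)
    (hLMI : (Matrix.fromBlocks Qm (A * Qm + B * Z)ᵀ (A * Qm + B * Z) Qm).PosDef) :
    ∀ x : (CIdx dims C ⊕ CIdx dims C) → ℝ, x ≠ 0 → Mmat dims C *ᵥ x = 0 →
      0 < x ⬝ᵥ (Phi dims C A B (Qtm dims C Qm) (Ztm dims C Z)) *ᵥ x := by
  intro x hx hMx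
  have hQmT : Qmᵀ = Qm := by
    rw [← conjT_eq_transpose]
    exact hQpd.1
  have hcomp : ∀ v : CIdx dims C ⊕ CIdx dims C,
      (Mmat dims C *ᵥ x) v = 0 := fun v => congrFun hMx v
  have h1 : N0 dims C *ᵥ (x ∘ Sum.inl) = 0 := by
    funext i
    have h := hcomp (Sum.inl i)
    simpa [Mmat, Matrix.mulVec, dotProduct, Fintype.sum_sum_type,
      Matrix.fromBlocks_apply₁₁, Matrix.fromBlocks_apply₁₂, Function.comp] using h
  have h2 : N0 dims C *ᵥ (x ∘ Sum.inr) = 0 := by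
    funext i
    have h := hcomp (Sum.inr i)
    simpa [Mmat, Matrix.mulVec, dotProduct, Fintype.sum_sum_type,
      Matrix.fromBlocks_apply₂₁, Matrix.fromBlocks_apply₂₂, Function.comp] using h
  have hx1P : (x ∘ Sum.inl) = Pm dims C *ᵥ (x ∘ Sum.inl) := by
    have h := h1
    rw [N0_eq' hass, Matrix.sub_mulVec, Matrix.one_mulVec, sub_eq_zero] at h
    exact h
  have hx2P : (x ∘ Sum.inr) = Pm dims C *ᵥ (x ∘ Sum.inr) := by
    have h := h2
    rw [N0_eq' hass, Matrix.sub_mulVec, Matrix.one_mulVec, sub_eq_zero] at h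
    exact h
  set S0 := A * Qm + B * Z with hS0
  set z1 := (Emat dims C)ᵀ *ᵥ (x ∘ Sum.inl) with hz1
  set z2 := (Emat dims C)ᵀ *ᵥ (x ∘ Sum.inr) with hz2
  have hQtv : ∀ v : CIdx dims C → ℝ, v = Pm dims C *ᵥ v →
      Qtm dims C Qm *ᵥ v = Gm dims C Qm *ᵥ v := by
    intro v hv
    conv_lhs => rw [hv]
    rw [Matrix.mulVec_mulVec, Qt_Pm hass hQbd]
  have hTv : ∀ v : CIdx dims C → ℝ, v = Pm dims C *ᵥ v →
      (tilde dims C A * Qtm dims C Qm + tilde dims C B * Ztm dims C Z) *ᵥ v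
        = Gm dims C S0 *ᵥ v := by
    intro v hv
    conv_lhs => rw [hv]
    rw [Matrix.mulVec_mulVec, T_Pm hass hZ hQbd hQmT]
  have hval : x ⬝ᵥ (Phi dims C A B (Qtm dims C Qm) (Ztm dims C Z)) *ᵥ x
      = (Sum.elim z1 z2) ⬝ᵥ (Matrix.fromBlocks Qm S0ᵀ S0 Qm) *ᵥ (Sum.elim z1 z2) := by
    unfold Phi
    conv_lhs => rw [← Sum.elim_comp_inl_inr x]
    rw [Matrix.fromBlocks_mulVec, Matrix.fromBlocks_mulVec]
    simp only [Sum.elim_comp_inl, Sum.elim_comp_inr]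
    rw [sumElim_dotProduct_sumElim, sumElim_dotProduct_sumElim]
    rw [dotProduct_add, dotProduct_add, dotProduct_add,
      dotProduct_add]
    have e1 : (x ∘ Sum.inl) ⬝ᵥ Qtm dims C Qm *ᵥ (x ∘ Sum.inl) = z1 ⬝ᵥ Qm *ᵥ z1 := by
      rw [hQtv _ hx1P]
      unfold Gm
      rw [bilin_congr]
    have e4 : (x ∘ Sum.inr) ⬝ᵥ Qtm dims C Qm *ᵥ (x ∘ Sum.inr) = z2 ⬝ᵥ Qm *ᵥ z2 := by
      rw [hQtv _ hx2P]
      unfold Gm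
      rw [bilin_congr]
    have e3 : (x ∘ Sum.inr) ⬝ᵥ (tilde dims C A * Qtm dims C Qm
        + tilde dims C B * Ztm dims C Z) *ᵥ (x ∘ Sum.inl) = z2 ⬝ᵥ S0 *ᵥ z1 := by
      rw [hTv _ hx1P]
      unfold Gm
      rw [bilin_congr]
    have e2 : (x ∘ Sum.inl) ⬝ᵥ (tilde dims C A * Qtm dims C Qm
        + tilde dims C B * Ztm dims C Z)ᵀ *ᵥ (x ∘ Sum.inr) = z1 ⬝ᵥ S0ᵀ *ᵥ z2 := by
      rw [Matrix.dotProduct_mulVec, Matrix.vecMul_transpose, hTv _ hx1P]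
      rw [Matrix.dotProduct_mulVec, Matrix.vecMul_transpose]
      rw [dotProduct_comm, dotProduct_comm (S0 *ᵥ z1)]
      unfold Gm
      rw [bilin_congr]
    rw [e1, e2, e3, e4]
  rw [hval]
  have hzz : (Sum.elim z1 z2 : (Idx dims ⊕ Idx dims) → ℝ) ≠ 0 := by
    intro hc
    have hz1z : z1 = 0 := funext fun i => congrFun hc (Sum.inl i)
    have hz2z : z2 = 0 := funext fun i => congrFun hc (Sum.inr i)
    have hx1z : (x ∘ Sum.inl) = 0 := by
      rw [hx1P]
      unfold Pm
      rw [← Matrix.mulVec_mulVec, ← hz1, hz1z, Matrix.mulVec_zero]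
    have hx2z : (x ∘ Sum.inr) = 0 := by
      rw [hx2P]
      unfold Pm
      rw [← Matrix.mulVec_mulVec, ← hz2, hz2z, Matrix.mulVec_zero]
    refine hx (funext fun v => ?_)
    cases v with
    | inl a => exact congrFun hx1z a
    | inr b => exact congrFun hx2z b
  have := hLMI.dotProduct_mulVec_pos hzz
  rwa [star_vec_eq] at this

lemma phi_cond (hass : Assumption1 Gr C) (hZ : Sparse Gr dims Z)
    (hQbd : BlkDiag dims Qm) (hQpd : Qm.PosDef)
    (hLMI : (Matrix.fromBlocks Qm (A * Qm + B * Z)ᵀ (A * Qm + B * Z) Qm).PosDef) :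
    ∃ ρ : ℝ, (Phi dims C A B (Qtm dims C Qm) (Ztm dims C Z) + ρ • Mmat dims C).PosDef := by
  have hQmT : Qmᵀ = Qm := by
    rw [← conjT_eq_transpose]
    exact hQpd.1
  have hSH : (Phi dims C A B (Qtm dims C Qm) (Ztm dims C Z)).IsHermitian := by
    unfold Matrix.IsHermitian Phi
    rw [conjT_eq_transpose, Matrix.fromBlocks_transpose, Matrix.transpose_transpose,
      Qtm_transpose hQbd hQmT]
  exact exists_rho hSH (Mmat_posSemidef hass) (phi_ker hass hZ hQbd hQpd hLMI)

end Stmt6Aux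


/-- Lemma 4, first inclusion: `𝒦_diag ⊆ 𝒦_𝒮`. -/
theorem stmt6 {N q : ℕ} (Gr : SimpleGraph (Fin N)) (dims : Fin N → ℕ)
    (C : Fin q → Finset (Fin N)) (hclq : IsCliques Gr C) (hass : Assumption1 Gr C)
    (A B : Matrix (Idx dims) (Idx dims) ℝ)
    (Z Qm : Matrix (Idx dims) (Idx dims) ℝ)
    (hZ : Sparse Gr dims Z) (hQbd : BlkDiag dims Qm) (hQpd : Qm.PosDef)
    (hLMI : (fromBlocks Qm (A * Qm + B * Z)ᵀ (A * Qm + B * Z) Qm).PosDef) :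
    ∃ (Zt Qt : Matrix (CIdx dims C) (CIdx dims C) ℝ) (ρ η : ℝ),
      CliqueBlkDiag dims C Zt ∧ CliqueBlkDiag dims C Qt ∧ Qt.PosDef ∧ 0 < η ∧
      (Phi dims C A B Qt Zt + ρ • Mmat dims C).PosDef ∧
      (N0 dims C * Qt + Qt * N0 dims C - η • N0 dims C).PosSemidef ∧
      Z * Qm⁻¹ = gainCl dims C Zt Qt := by
  obtain ⟨η, hη, hetapsd⟩ := eta_cond hass hQbd hQpd
  obtain ⟨ρ, hρ⟩ := phi_cond hass hZ hQbd hQpd hLMI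
  exact ⟨Ztm dims C Z, Qtm dims C Qm, ρ, η,
    fun p r h => by unfold Ztm; exact if_neg h,
    fun p r h => by unfold Qtm; exact if_neg h,
    Qtm_posDef hQbd hQpd, hη, hρ, hetapsd, gain_eq hass hZ hQbd hQpd⟩
end

section
/- (Lemma 4, second inclusion) Under Assumption 1, 𝒦_𝒮 ⊆ 𝒦̂_𝒮: if Z̃ and Q̃ are clique-block-diagonal with Q̃ ≻ 0 and there exist ρ ∈ ℝ and η > 0 with Φ(Q̃,Z̃) + ρM ≻ 0 and N₀Q̃ + Q̃N₀ ⪰ ηN₀, then there exists β ∈ ℝ such that blkdiag(Q̃,Q̃)⁻¹ Φ(Q̃,Z̃) blkdiag(Q̃,Q̃)⁻¹ + βM ≻ 0; in particular the gain (EᵀE)⁻¹Eᵀ Z̃ Q̃⁻¹ E belongs to 𝒦̂_𝒮. -/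
open Matrix

/-! ### Auxiliary lemmas -/

section AuxHelpers
variable {m : Type*} [Fintype m]

lemma real_posDef_iff (X : Matrix m m ℝ) :
    X.PosDef ↔ Xᵀ = X ∧ ∀ x : m → ℝ, x ≠ 0 → 0 < x ⬝ᵥ (X *ᵥ x) := by
  rw [Matrix.posDef_iff_dotProduct_mulVec]
  constructor
  · rintro ⟨h1, h2⟩
    refine ⟨by simpa [Matrix.conjTranspose_eq_transpose_of_trivial] using h1.eq, fun x hx => ?_⟩
    simpa using h2 hx
  · rintro ⟨h1, h2⟩
    refine ⟨by simpa [Matrix.IsHermitian, Matrix.conjTranspose_eq_transpose_of_trivial] using h1,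
      fun x hx => by simpa using h2 x hx⟩

lemma dot_sym_mulVec {A : Matrix m m ℝ} (hA : Aᵀ = A) (x y : m → ℝ) :
    x ⬝ᵥ (A *ᵥ y) = (A *ᵥ x) ⬝ᵥ y := by
  rw [Matrix.dotProduct_mulVec, ← Matrix.mulVec_transpose, hA]

lemma posDef_conj [DecidableEq m] {X S : Matrix m m ℝ} (hX : X.PosDef) (hSsym : Sᵀ = S)
    (hS : IsUnit S.det) : (S * X * S).PosDef := by
  rw [real_posDef_iff] at hX ⊢
  obtain ⟨hXh, hXp⟩ := hX
  constructor
  · rw [Matrix.transpose_mul, Matrix.transpose_mul, hSsym, hXh, Matrix.mul_assoc]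
  · intro x hx
    have hSx : S *ᵥ x ≠ 0 := by
      intro h
      apply hx
      have := congrArg (fun v => S⁻¹ *ᵥ v) h
      simpa [Matrix.mulVec_mulVec, Matrix.nonsing_inv_mul _ hS] using this
    have h := hXp (S *ᵥ x) hSx
    calc (0:ℝ) < (S *ᵥ x) ⬝ᵥ (X *ᵥ (S *ᵥ x)) := h
      _ = x ⬝ᵥ ((S * X * S) *ᵥ x) := by
          rw [← Matrix.mulVec_mulVec, ← Matrix.mulVec_mulVec, dot_sym_mulVec hSsym]

lemma quad_n0 {A : Matrix m m ℝ} (hAsym : Aᵀ = A) (hAidem : A * A = A) (x : m → ℝ) :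
    x ⬝ᵥ (A *ᵥ x) = (A *ᵥ x) ⬝ᵥ (A *ᵥ x) := by
  conv_lhs => rw [← hAidem, ← Matrix.mulVec_mulVec, dot_sym_mulVec hAsym]

lemma key_ineq {n0 Q : Matrix m m ℝ} (hn0sym : n0ᵀ = n0) (hn0idem : n0 * n0 = n0)
    (hQsym : Qᵀ = Q) {η : ℝ} (hη : 0 < η)
    (h2 : (n0 * Q + Q * n0 - η • n0).PosSemidef) (x : m → ℝ) :
    η ^ 2 / 4 * (x ⬝ᵥ (n0 *ᵥ x)) ≤ x ⬝ᵥ ((Q * n0 * Q) *ᵥ x) := by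
  set u := n0 *ᵥ x with hu
  set v := n0 *ᵥ (Q *ᵥ x) with hv
  have e1 : x ⬝ᵥ (n0 *ᵥ x) = u ⬝ᵥ u := quad_n0 hn0sym hn0idem x
  have e2 : x ⬝ᵥ ((Q * n0 * Q) *ᵥ x) = v ⬝ᵥ v := by
    rw [← Matrix.mulVec_mulVec, ← Matrix.mulVec_mulVec, dot_sym_mulVec hQsym,
      quad_n0 hn0sym hn0idem]
  have e3 : u ⬝ᵥ (Q *ᵥ x) = u ⬝ᵥ v := by
    conv_lhs => rw [show u = n0 *ᵥ u from by rw [hu, Matrix.mulVec_mulVec, hn0idem]]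
    rw [← dot_sym_mulVec hn0sym, ← hv]
  have hquad : η * (u ⬝ᵥ u) ≤ 2 * (u ⬝ᵥ v) := by
    have h := (Matrix.posSemidef_iff_dotProduct_mulVec.mp h2).2 x
    simp only [star_trivial, Matrix.add_mulVec, Matrix.sub_mulVec, Matrix.smul_mulVec,
      dotProduct_add, dotProduct_sub, dotProduct_smul, smul_eq_mul] at h
    have ha : x ⬝ᵥ ((n0 * Q) *ᵥ x) = u ⬝ᵥ v := by
      rw [← Matrix.mulVec_mulVec, dot_sym_mulVec hn0sym, ← hu, e3]
    have hb : x ⬝ᵥ ((Q * n0) *ᵥ x) = u ⬝ᵥ v := by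
      rw [← Matrix.mulVec_mulVec, dot_sym_mulVec hQsym, dotProduct_comm (Q *ᵥ x), ← hu, e3]
    rw [ha, hb, e1] at h
    linarith
  have cs : (u ⬝ᵥ v) ^ 2 ≤ (u ⬝ᵥ u) * (v ⬝ᵥ v) := by
    simpa [dotProduct, pow_two] using Finset.sum_mul_sq_le_sq_mul_sq Finset.univ u v
  have huu : 0 ≤ u ⬝ᵥ u := Finset.sum_nonneg fun i _ => mul_self_nonneg _
  have hvv : 0 ≤ v ⬝ᵥ v := Finset.sum_nonneg fun i _ => mul_self_nonneg _
  rw [e1, e2]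
  rcases eq_or_lt_of_le huu with h0 | h0
  · rw [← h0]; simpa using hvv
  · nlinarith [hquad, cs, h0, hvv, hη, mul_pos hη h0]

lemma dot_fromBlocks (A B : Matrix m m ℝ) (x : m ⊕ m → ℝ) :
    x ⬝ᵥ (Matrix.fromBlocks A 0 0 B *ᵥ x) =
      (fun i => x (Sum.inl i)) ⬝ᵥ (A *ᵥ fun i => x (Sum.inl i)) +
      (fun i => x (Sum.inr i)) ⬝ᵥ (B *ᵥ fun i => x (Sum.inr i)) := by
  simp [dotProduct, Matrix.mulVec, Fintype.sum_sum_type, Matrix.fromBlocks,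
    Finset.mul_sum, Finset.sum_add_distrib]

end AuxHelpers

lemma Emat_mulVec_s7 {N q : ℕ} (dims : Fin N → ℕ) (C : Fin q → Finset (Fin N))
    (x : Idx dims → ℝ) (p : CIdx dims C) :
    (Emat dims C *ᵥ x) p = x ⟨p.2.1.1, p.2.2⟩ := by
  simp [Emat, mulVec, dotProduct, ite_mul]

lemma EtE_posDef {N q : ℕ} (dims : Fin N → ℕ) (C : Fin q → Finset (Fin N))
    (hass : ∀ i : Fin N, ∃ k, i ∈ C k) :
    ((Emat dims C)ᵀ * Emat dims C).PosDef := by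
  rw [real_posDef_iff]
  constructor
  · rw [Matrix.transpose_mul, Matrix.transpose_transpose]
  · intro x hx
    have key : x ⬝ᵥ (((Emat dims C)ᵀ * Emat dims C) *ᵥ x)
        = (Emat dims C *ᵥ x) ⬝ᵥ (Emat dims C *ᵥ x) := by
      rw [← Matrix.mulVec_mulVec, Matrix.dotProduct_mulVec, Matrix.vecMul_transpose]
    rw [key]
    have hne : Emat dims C *ᵥ x ≠ 0 := by
      intro h
      apply hx
      funext i
      obtain ⟨k, hk⟩ := hass i.1
      have := congrFun h ⟨k, ⟨i.1, hk⟩, i.2⟩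
      simpa [Emat_mulVec_s7] using this
    have h0 : (Emat dims C *ᵥ x) ⬝ᵥ (Emat dims C *ᵥ x) ≠ 0 :=
      fun h => hne (dotProduct_self_eq_zero.mp h)
    have hnn : 0 ≤ (Emat dims C *ᵥ x) ⬝ᵥ (Emat dims C *ᵥ x) :=
      Finset.sum_nonneg fun i _ => mul_self_nonneg _
    exact lt_of_le_of_ne hnn (Ne.symm h0)

/-- Lemma 4, second inclusion: `𝒦_𝒮 ⊆ 𝒦̂_𝒮`. -/
theorem stmt7 {N q : ℕ} (Gr : SimpleGraph (Fin N)) (dims : Fin N → ℕ)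
    (C : Fin q → Finset (Fin N)) (hclq : IsCliques Gr C) (hass : Assumption1 Gr C)
    (A B : Matrix (Idx dims) (Idx dims) ℝ)
    (Zt Qt : Matrix (CIdx dims C) (CIdx dims C) ℝ)
    (hZt : CliqueBlkDiag dims C Zt) (hQt : CliqueBlkDiag dims C Qt) (hQpd : Qt.PosDef)
    (ρ η : ℝ) (hη : 0 < η)
    (h1 : (Phi dims C A B Qt Zt + ρ • Mmat dims C).PosDef)
    (h2 : (N0 dims C * Qt + Qt * N0 dims C - η • N0 dims C).PosSemidef) :
    (∃ β : ℝ,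
      ((fromBlocks Qt 0 0 Qt)⁻¹ * Phi dims C A B Qt Zt * (fromBlocks Qt 0 0 Qt)⁻¹
        + β • Mmat dims C).PosDef) ∧
    ∃ (Zt' Qt' : Matrix (CIdx dims C) (CIdx dims C) ℝ) (ρ' : ℝ),
      CliqueBlkDiag dims C Zt' ∧ CliqueBlkDiag dims C Qt' ∧ Qt'.PosDef ∧
      (Phi dims C A B Qt' Zt' +
        ρ' • ((fromBlocks Qt' 0 0 Qt') * Mmat dims C * (fromBlocks Qt' 0 0 Qt'))).PosDef ∧
      gainCl dims C Zt Qt = gainCl dims C Zt' Qt' := by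
    classical
  set E := Emat dims C with hE
  set D := Eᵀ * E with hDdef
  have hDpd : D.PosDef := EtE_posDef dims C hass.1
  have hDu : IsUnit D.det := isUnit_iff_ne_zero.mpr hDpd.det_pos.ne'
  have hDsym : Dᵀ = D := by rw [hDdef, Matrix.transpose_mul, Matrix.transpose_transpose]
  set n0 := N0 dims C with hn0
  have hn0def : n0 = 1 - E * D⁻¹ * Eᵀ := rfl
  have hn0sym : n0ᵀ = n0 := by
    rw [hn0def, Matrix.transpose_sub, Matrix.transpose_one, Matrix.transpose_mul,
      Matrix.transpose_mul, Matrix.transpose_transpose, Matrix.transpose_nonsing_inv,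
      hDsym, Matrix.mul_assoc]
  have hPP : (E * D⁻¹ * Eᵀ) * (E * D⁻¹ * Eᵀ) = E * D⁻¹ * Eᵀ := by
    have h1 : D⁻¹ * D = 1 := Matrix.nonsing_inv_mul _ hDu
    calc (E * D⁻¹ * Eᵀ) * (E * D⁻¹ * Eᵀ)
        = E * ((D⁻¹ * (Eᵀ * E)) * (D⁻¹ * Eᵀ)) := by simp only [Matrix.mul_assoc]
      _ = E * (D⁻¹ * Eᵀ) := by rw [← hDdef, h1, Matrix.one_mul]
      _ = E * D⁻¹ * Eᵀ := by rw [Matrix.mul_assoc]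
  have hn0idem : n0 * n0 = n0 := by
    rw [hn0def]
    simp only [Matrix.sub_mul, Matrix.mul_sub, Matrix.one_mul, Matrix.mul_one, hPP]
    abel
  have hQtsym : Qtᵀ = Qt := ((real_posDef_iff Qt).mp hQpd).1
  have hQu : IsUnit Qt.det := isUnit_iff_ne_zero.mpr hQpd.det_pos.ne'
  set R := fromBlocks Qt 0 0 Qt with hR
  have hRsym : Rᵀ = R := by
    rw [hR]
    simp [Matrix.fromBlocks_transpose, hQtsym]
  have hRu : IsUnit R.det := by
    rw [hR, Matrix.det_fromBlocks_zero₂₁]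
    exact hQu.mul hQu
  have hRRinv : R⁻¹ * R = 1 := Matrix.nonsing_inv_mul _ hRu
  have hRinvR : R * R⁻¹ = 1 := Matrix.mul_nonsing_inv _ hRu
  have hRinvSym : (R⁻¹)ᵀ = R⁻¹ := by rw [Matrix.transpose_nonsing_inv, hRsym]
  have hRiu : IsUnit (R⁻¹).det := Matrix.isUnit_nonsing_inv_det _ hRu
  have hM : Mmat dims C = fromBlocks n0 0 0 n0 := rfl
  have hMsym : (Mmat dims C)ᵀ = Mmat dims C := by
    rw [hM]
    simp [Matrix.fromBlocks_transpose, hn0sym]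
  have hRMR : R * Mmat dims C * R = fromBlocks (Qt * n0 * Qt) 0 0 (Qt * n0 * Qt) := by
    rw [hM, hR, Matrix.fromBlocks_multiply, Matrix.fromBlocks_multiply]
    simp
  have hRMRsym : (R * Mmat dims C * R)ᵀ = R * Mmat dims C * R := by
    rw [Matrix.transpose_mul, Matrix.transpose_mul, hRsym, hMsym, Matrix.mul_assoc]
  have key := key_ineq hn0sym hn0idem hQtsym hη h2
  have hMnn : ∀ y : CIdx dims C ⊕ CIdx dims C → ℝ, 0 ≤ y ⬝ᵥ (Mmat dims C *ᵥ y) := by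
    intro y
    rw [hM, dot_fromBlocks, quad_n0 hn0sym hn0idem, quad_n0 hn0sym hn0idem]
    exact add_nonneg (Finset.sum_nonneg fun i _ => mul_self_nonneg _)
      (Finset.sum_nonneg fun i _ => mul_self_nonneg _)
  have hcmp : ∀ y : CIdx dims C ⊕ CIdx dims C → ℝ,
      η ^ 2 / 4 * (y ⬝ᵥ (Mmat dims C *ᵥ y)) ≤ y ⬝ᵥ ((R * Mmat dims C * R) *ᵥ y) := by
    intro y
    rw [hRMR, hM, dot_fromBlocks, dot_fromBlocks, mul_add]
    exact add_le_add (key _) (key _)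
  set β := max ρ 0 * (4 / η ^ 2) with hβ
  have hβρ : ∀ y : CIdx dims C ⊕ CIdx dims C → ℝ,
      ρ * (y ⬝ᵥ (Mmat dims C *ᵥ y)) ≤ β * (y ⬝ᵥ ((R * Mmat dims C * R) *ᵥ y)) := by
    intro y
    rcases le_or_gt ρ 0 with hρ | hρ
    · have hb0 : β = 0 := by rw [hβ, max_eq_right hρ, zero_mul]
      rw [hb0, zero_mul]
      exact mul_nonpos_of_nonpos_of_nonneg hρ (hMnn y)
    · have hb : β = ρ * (4 / η ^ 2) := by rw [hβ, max_eq_left hρ.le]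
      have e : ρ * (y ⬝ᵥ (Mmat dims C *ᵥ y))
          = ρ * (4 / η ^ 2) * (η ^ 2 / 4 * (y ⬝ᵥ (Mmat dims C *ᵥ y))) := by
        field_simp
      rw [hb, e]
      exact mul_le_mul_of_nonneg_left (hcmp y) (by positivity)
  have hPhiHerm : (Phi dims C A B Qt Zt)ᵀ = Phi dims C A B Qt Zt := by
    show (fromBlocks Qt (tilde dims C A * Qt + tilde dims C B * Zt)ᵀ
      (tilde dims C A * Qt + tilde dims C B * Zt) Qt)ᵀ = _
    rw [Matrix.fromBlocks_transpose, Matrix.transpose_transpose, hQtsym]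
    rfl
  have hmain : (Phi dims C A B Qt Zt + β • (R * Mmat dims C * R)).PosDef := by
    rw [real_posDef_iff]
    constructor
    · rw [Matrix.transpose_add, hPhiHerm, Matrix.transpose_smul, hRMRsym]
    · intro x hx
      have h1x := ((real_posDef_iff _).mp h1).2 x hx
      simp only [Matrix.add_mulVec, dotProduct_add, Matrix.smul_mulVec,
        dotProduct_smul, smul_eq_mul] at h1x ⊢
      linarith [hβρ x]
  have hconj := posDef_conj hmain hRinvSym hRiu
  have hcancel : R⁻¹ * (R * Mmat dims C * R) * R⁻¹ = Mmat dims C := by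
    rw [← Matrix.mul_assoc R⁻¹ (R * Mmat dims C) R, ← Matrix.mul_assoc R⁻¹ R (Mmat dims C),
      hRRinv, Matrix.one_mul, Matrix.mul_assoc (Mmat dims C) R R⁻¹, hRinvR, Matrix.mul_one]
  have hEq : R⁻¹ * (Phi dims C A B Qt Zt + β • (R * Mmat dims C * R)) * R⁻¹
      = R⁻¹ * Phi dims C A B Qt Zt * R⁻¹ + β • Mmat dims C := by
    rw [Matrix.mul_add, Matrix.add_mul, Matrix.mul_smul, Matrix.smul_mul, hcancel]
  rw [hEq] at hconj
  exact ⟨⟨β, hconj⟩, Zt, Qt, β, hZt, hQt, hQpd, hmain, rfl⟩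
end
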